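/- arXiv:2303.03296 — 7 statements merged into one kernel-verified Lean document; each statement's English description precedes it below -/
import Mathlib

section
/- A graph G = (V, E) with |E| edges and b(G) bridges admits a strongly connected partial orientation in which exactly k edges are oriented (leaving the rest undirected) if and only if G is connected and k ≤ |E| − b(G). -/
open scoped Classical

/-- Number of arcs leaving a vertex set `X` in a multiset of arcs. -/
noncomputable def arcsOut {V : Type*} (A : Multiset (V × V)) (X : Finset V) : ℕ :=
  (A.filter fun a => a.1 ∈ X ∧ a.2 ∉ X).card

/-- Number of undirected edges with exactly one endpoint in `X`. -/
noncomputable def edgesCross {V : Type*} (E : Multiset (V × V)) (X : Finset V) : ℕ :=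
  (E.filter fun e => (e.1 ∈ X ∧ e.2 ∉ X) ∨ (e.2 ∈ X ∧ e.1 ∉ X)).card

/-- A mixed graph `(V, E, A)` is `k`-arc-strong (for `k = 1`: strongly connected). -/
def ArcStrong {V : Type*} [Fintype V] (k : ℕ) (E A : Multiset (V × V)) : Prop :=
  ∀ X : Finset V, X.Nonempty → X ≠ Finset.univ → k ≤ arcsOut A X + edgesCross E X

/-- A multigraph (on a nonempty finite vertex set) is connected iff every nonempty
proper vertex subset has an edge crossing it. -/
def MConnected {V : Type*} [Fintype V] (E : Multiset (V × V)) : Prop :=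
  ∀ X : Finset V, X.Nonempty → X ≠ Finset.univ → 1 ≤ edgesCross E X

/-- The number of bridges of the multigraph `E`: edges whose removal disconnects it. -/
noncomputable def bridgeCount {V : Type*} [Fintype V] (E : Multiset (V × V)) : ℕ :=
  (E.filter fun e => ¬ MConnected (E.erase e)).card

namespace RobbinsAux

variable {V : Type*}

/-- Master pointwise lemma for pairs of filtered-card inequalities. -/
lemma filter_card_pair_le {α : Type*} (S : Multiset α) (p q r s : α → Prop)
    [DecidablePred p] [DecidablePred q] [DecidablePred r] [DecidablePred s] :
    (∀ a ∈ S, ((if p a then 1 else 0) + (if q a then 1 else 0) : ℕ) ≤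
      (if r a then 1 else 0) + (if s a then 1 else 0)) →
    (S.filter p).card + (S.filter q).card ≤ (S.filter r).card + (S.filter s).card := by
  rw [← Multiset.countP_eq_card_filter, ← Multiset.countP_eq_card_filter,
    ← Multiset.countP_eq_card_filter, ← Multiset.countP_eq_card_filter]
  induction S using Multiset.induction_on with
  | empty => simp
  | cons a S ih =>
    intro h
    simp only [Multiset.countP_cons]
    have h1 := h a (Multiset.mem_cons_self a S)
    have h2 := ih (fun b hb => h b (Multiset.mem_cons_of_mem hb))
    omega

lemma card_filter_false {α : Type*} (S : Multiset α) :
    (S.filter (fun _ => False)).card = 0 := by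
  rw [Multiset.filter_eq_nil.2 (fun _ _ h => h)]
  rfl

lemma arcsOut_cons (a : V × V) (A : Multiset (V × V)) (X : Finset V) :
    arcsOut (a ::ₘ A) X = arcsOut A X + if a.1 ∈ X ∧ a.2 ∉ X then 1 else 0 := by
  simp only [arcsOut, ← Multiset.countP_eq_card_filter, Multiset.countP_cons]

lemma edgesCross_cons (e : V × V) (E : Multiset (V × V)) (X : Finset V) :
    edgesCross (e ::ₘ E) X = edgesCross E X +
      if (e.1 ∈ X ∧ e.2 ∉ X) ∨ (e.2 ∈ X ∧ e.1 ∉ X) then 1 else 0 := by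
  simp only [edgesCross, ← Multiset.countP_eq_card_filter, Multiset.countP_cons]

lemma edgesCross_add (S T : Multiset (V × V)) (X : Finset V) :
    edgesCross (S + T) X = edgesCross S X + edgesCross T X := by
  simp [edgesCross, Multiset.filter_add]

lemma arcsOut_add (S T : Multiset (V × V)) (X : Finset V) :
    arcsOut (S + T) X = arcsOut S X + arcsOut T X := by
  simp [arcsOut, Multiset.filter_add]

lemma edgesCross_erase (E : Multiset (V × V)) (e : V × V) (he : e ∈ E) (X : Finset V) :
    edgesCross E X = edgesCross (E.erase e) X +
      if (e.1 ∈ X ∧ e.2 ∉ X) ∨ (e.2 ∈ X ∧ e.1 ∉ X) then 1 else 0 := by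
  conv_lhs => rw [← Multiset.cons_erase he]
  rw [edgesCross_cons]

lemma edgesCross_map_swap (S : Multiset (V × V)) (X : Finset V) :
    edgesCross (S.map Prod.swap) X = edgesCross S X := by
  rw [edgesCross, edgesCross, Multiset.filter_map, Multiset.card_map]
  refine congrArg Multiset.card (Multiset.filter_congr ?_)
  intro x _
  simp only [Function.comp, Prod.fst_swap, Prod.snd_swap, Prod.swap]
  tauto

lemma edgesCross_compl [Fintype V] (S : Multiset (V × V)) (X : Finset V) :
    edgesCross S Xᶜ = edgesCross S X := by
  refine congrArg Multiset.card (Multiset.filter_congr ?_)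
  intro x _
  simp only [Finset.mem_compl, not_not]
  tauto

lemma arcsOut_pair_le [Fintype V] (A : Multiset (V × V)) (X : Finset V) :
    arcsOut A X + arcsOut A Xᶜ ≤ edgesCross A X := by
  have h := filter_card_pair_le A (fun a => a.1 ∈ X ∧ a.2 ∉ X) (fun a => a.1 ∈ Xᶜ ∧ a.2 ∉ Xᶜ)
    (fun e => (e.1 ∈ X ∧ e.2 ∉ X) ∨ (e.2 ∈ X ∧ e.1 ∉ X)) (fun _ => False)
    (fun a _ => by
      by_cases h1 : a.1 ∈ X <;> by_cases h2 : a.2 ∈ X <;>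
        simp [h1, h2, Finset.mem_compl])
  rw [card_filter_false] at h
  simpa [arcsOut, edgesCross] using h

lemma edgesCross_le [Fintype V] (A : Multiset (V × V)) (X : Finset V) :
    edgesCross A X ≤ arcsOut A X + arcsOut A Xᶜ := by
  have h := filter_card_pair_le A
    (fun e => (e.1 ∈ X ∧ e.2 ∉ X) ∨ (e.2 ∈ X ∧ e.1 ∉ X)) (fun _ => False)
    (fun a => a.1 ∈ X ∧ a.2 ∉ X) (fun a => a.1 ∈ Xᶜ ∧ a.2 ∉ Xᶜ)
    (fun a _ => by
      by_cases h1 : a.1 ∈ X <;> by_cases h2 : a.2 ∈ X <;>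
        simp [h1, h2, Finset.mem_compl])
  rw [card_filter_false] at h
  simpa [arcsOut, edgesCross] using h

lemma arcsOut_submod (A : Multiset (V × V)) (X Y : Finset V) :
    arcsOut A (X ∩ Y) + arcsOut A (X ∪ Y) ≤ arcsOut A X + arcsOut A Y := by
  have h := filter_card_pair_le A (fun a => a.1 ∈ X ∩ Y ∧ a.2 ∉ X ∩ Y)
    (fun a => a.1 ∈ X ∪ Y ∧ a.2 ∉ X ∪ Y)
    (fun a => a.1 ∈ X ∧ a.2 ∉ X) (fun a => a.1 ∈ Y ∧ a.2 ∉ Y)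
    (fun a _ => by
      by_cases h1 : a.1 ∈ X <;> by_cases h2 : a.1 ∈ Y <;> by_cases h3 : a.2 ∈ X <;>
        by_cases h4 : a.2 ∈ Y <;>
        simp [h1, h2, h3, h4, Finset.mem_inter, Finset.mem_union])
  simpa [arcsOut] using h

lemma edgesCross_submod (A : Multiset (V × V)) (X Y : Finset V) :
    edgesCross A (X ∩ Y) + edgesCross A (X ∪ Y) ≤ edgesCross A X + edgesCross A Y := by
  have h := filter_card_pair_le A
    (fun e => (e.1 ∈ X ∩ Y ∧ e.2 ∉ X ∩ Y) ∨ (e.2 ∈ X ∩ Y ∧ e.1 ∉ X ∩ Y))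
    (fun e => (e.1 ∈ X ∪ Y ∧ e.2 ∉ X ∪ Y) ∨ (e.2 ∈ X ∪ Y ∧ e.1 ∉ X ∪ Y))
    (fun e => (e.1 ∈ X ∧ e.2 ∉ X) ∨ (e.2 ∈ X ∧ e.1 ∉ X))
    (fun e => (e.1 ∈ Y ∧ e.2 ∉ Y) ∨ (e.2 ∈ Y ∧ e.1 ∉ Y))
    (fun a _ => by
      by_cases h1 : a.1 ∈ X <;> by_cases h2 : a.1 ∈ Y <;> by_cases h3 : a.2 ∈ X <;>
        by_cases h4 : a.2 ∈ Y <;>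
        simp [h1, h2, h3, h4, Finset.mem_inter, Finset.mem_union])
  simpa [edgesCross] using h

lemma count_le_edgesCross {S : Multiset (V × V)} {x : V × V} {X : Finset V}
    (hc : (x.1 ∈ X ∧ x.2 ∉ X) ∨ (x.2 ∈ X ∧ x.1 ∉ X)) :
    S.count x ≤ edgesCross S X := by
  rw [edgesCross, ← Multiset.count_filter_of_pos (p := fun e : V × V =>
    (e.1 ∈ X ∧ e.2 ∉ X) ∨ (e.2 ∈ X ∧ e.1 ∉ X)) (s := S) hc]
  exact Multiset.count_le_card _ _

/-- One-step orientation lemma (Boesch–Tindell): an undirected non-bridge edge of a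
strongly connected mixed graph can be oriented keeping strong connectivity. -/
lemma orient_step [Fintype V] (E' A : Multiset (V × V)) (e : V × V) (he : e ∈ E')
    (hstrong : ArcStrong 1 E' A)
    (hnb : ∀ X : Finset V, X.Nonempty → X ≠ Finset.univ →
      1 ≤ edgesCross (E'.erase e) X + edgesCross A X) :
    ArcStrong 1 (E'.erase e) (e ::ₘ A) ∨ ArcStrong 1 (E'.erase e) (Prod.swap e ::ₘ A) := by
  by_contra hcon
  push_neg at hcon
  obtain ⟨h1, h2⟩ := hcon
  unfold ArcStrong at h1 h2
  push_neg at h1 h2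
  obtain ⟨X, hXne, hXuniv, hX⟩ := h1
  obtain ⟨Y, hYne, hYuniv, hY⟩ := h2
  rw [arcsOut_cons] at hX hY
  have hsX := hstrong X hXne hXuniv
  have hsY := hstrong Y hYne hYuniv
  rw [edgesCross_erase E' e he X] at hsX
  rw [edgesCross_erase E' e he Y] at hsY
  -- extract facts about X
  have hAX : arcsOut A X = 0 := by omega
  have hEX : edgesCross (E'.erase e) X = 0 := by omega
  have hcrossX : (e.1 ∈ X ∧ e.2 ∉ X) ∨ (e.2 ∈ X ∧ e.1 ∉ X) := by
    by_contra hc; rw [if_neg hc] at hsX; omega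
  have houtX : ¬ (e.1 ∈ X ∧ e.2 ∉ X) := by
    intro hc; rw [if_pos hc] at hX; omega
  have heX : e.2 ∈ X ∧ e.1 ∉ X := by tauto
  -- extract facts about Y
  have hAY : arcsOut A Y = 0 := by omega
  have hEY : edgesCross (E'.erase e) Y = 0 := by omega
  have hcrossY : (e.1 ∈ Y ∧ e.2 ∉ Y) ∨ (e.2 ∈ Y ∧ e.1 ∉ Y) := by
    by_contra hc; rw [if_neg hc] at hsY; omega
  have houtY : ¬ ((Prod.swap e).1 ∈ Y ∧ (Prod.swap e).2 ∉ Y) := by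
    intro hc; rw [if_pos hc] at hY; omega
  have heY : e.1 ∈ Y ∧ e.2 ∉ Y := by
    simp only [Prod.fst_swap, Prod.snd_swap] at houtY
    tauto
  -- submodularity
  have hsub : arcsOut A (X ∩ Y) + edgesCross (E'.erase e) (X ∩ Y) +
      (arcsOut A (X ∪ Y) + edgesCross (E'.erase e) (X ∪ Y)) = 0 := by
    have h3 := arcsOut_submod A X Y
    have h4 := edgesCross_submod (E'.erase e) X Y
    omega
  by_cases hI : (X ∩ Y).Nonempty
  · have hIuniv : X ∩ Y ≠ Finset.univ := by
      intro h
      have h5 : e.1 ∈ X ∩ Y := by rw [h]; exact Finset.mem_univ _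
      exact heX.2 (Finset.mem_inter.1 h5).1
    have h6 := hstrong (X ∩ Y) hI hIuniv
    rw [edgesCross_erase E' e he (X ∩ Y)] at h6
    have hnc : ¬ ((e.1 ∈ X ∩ Y ∧ e.2 ∉ X ∩ Y) ∨ (e.2 ∈ X ∩ Y ∧ e.1 ∉ X ∩ Y)) := by
      simp only [Finset.mem_inter]
      tauto
    rw [if_neg hnc] at h6
    omega
  · have hIempty : X ∩ Y = ∅ := Finset.not_nonempty_iff_eq_empty.1 hI
    by_cases hU : X ∪ Y = Finset.univ
    · -- Y = Xᶜ
      have hYc : Y = Xᶜ := by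
        ext a
        simp only [Finset.mem_compl]
        constructor
        · intro ha hX'
          have h7 : a ∈ X ∩ Y := Finset.mem_inter.2 ⟨hX', ha⟩
          rw [hIempty] at h7
          exact absurd h7 (Finset.notMem_empty a)
        · intro ha
          have h8 : a ∈ X ∪ Y := by rw [hU]; exact Finset.mem_univ _
          rcases Finset.mem_union.1 h8 with h | h
          · exact absurd h ha
          · exact h
      have hb := hnb X hXne hXuniv
      have h5 := edgesCross_le A X
      rw [← hYc] at h5
      omega
    · have hUne : (X ∪ Y).Nonempty := hXne.mono Finset.subset_union_left
      have h9 := hstrong (X ∪ Y) hUne hU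
      rw [edgesCross_erase E' e he (X ∪ Y)] at h9
      have hnc : ¬ ((e.1 ∈ X ∪ Y ∧ e.2 ∉ X ∪ Y) ∨ (e.2 ∈ X ∪ Y ∧ e.1 ∉ X ∪ Y)) := by
        simp only [Finset.mem_union]
        tauto
      rw [if_neg hnc] at h9
      omega

end RobbinsAux

open RobbinsAux in
/-- Robbins-type theorem for partial orientations: `G = (V, E)` has a strongly connected
partial orientation in which exactly `k` edges are oriented (an orientation of an edge is
its ordered version or the reverse) iff `G` is connected and `k ≤ |E| - b(G)`. -/
theorem stmt_2 {V : Type*} [Fintype V] [Nonempty V] (E : Multiset (V × V)) (k : ℕ) :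
    (∃ E' F₁ F₂ : Multiset (V × V),
        E = E' + F₁ + F₂.map Prod.swap ∧
        Multiset.card (F₁ + F₂) = k ∧
        ArcStrong 1 E' (F₁ + F₂)) ↔
      MConnected E ∧ k ≤ Multiset.card E - bridgeCount E := by
  constructor
  · rintro ⟨E', F₁, F₂, hE, hk, hstrong⟩
    have hdecomp : ∀ X : Finset V, edgesCross E X =
        edgesCross E' X + edgesCross F₁ X + edgesCross F₂ X := by
      intro X
      rw [hE, edgesCross_add, edgesCross_add, edgesCross_map_swap]
    have harc : ∀ X : Finset V, arcsOut (F₁ + F₂) X ≤ edgesCross F₁ X + edgesCross F₂ X := by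
      intro X
      have h1 := arcsOut_pair_le (F₁ + F₂) X
      rw [edgesCross_add] at h1
      omega
    have hconn : MConnected E := by
      intro X hXne hXuniv
      have h2 := hstrong X hXne hXuniv
      have h3 := harc X
      rw [hdecomp X]
      omega
    refine ⟨hconn, ?_⟩
    -- show every bridge (with multiplicity) lies in E'
    have hle : (E.filter fun e => ¬ MConnected (E.erase e)) ≤ E' := by
      rw [Multiset.le_iff_count]
      intro x
      rw [Multiset.count_filter]
      split
      case isFalse => exact Nat.zero_le _
      case isTrue hb =>
        by_cases hxE : x ∈ E
        case neg => simp [Multiset.count_eq_zero_of_notMem hxE]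
        case pos =>
        unfold MConnected at hb
        push_neg at hb
        obtain ⟨X, hXne, hXuniv, hX⟩ := hb
        have hX0 : edgesCross (E.erase x) X = 0 := by omega
        have hXc_ne : Xᶜ.Nonempty := by
          rw [Finset.nonempty_iff_ne_empty, Ne, Finset.compl_eq_empty_iff]
          exact hXuniv
        have hXc_univ : Xᶜ ≠ Finset.univ := by
          rw [Ne, Finset.compl_eq_univ_iff]
          exact hXne.ne_empty
        have hs1 := hstrong X hXne hXuniv
        have hs2 := hstrong Xᶜ hXc_ne hXc_univ
        rw [edgesCross_compl] at hs2
        have hpair := arcsOut_pair_le (F₁ + F₂) X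
        rw [edgesCross_add] at hpair
        have hxEX := edgesCross_erase E x hxE X
        have hdX := hdecomp X
        have hcx : ((x.1 ∈ X ∧ x.2 ∉ X) ∨ (x.2 ∈ X ∧ x.1 ∉ X)) ∧ edgesCross E X = 1 := by
          by_cases hc : (x.1 ∈ X ∧ x.2 ∉ X) ∨ (x.2 ∈ X ∧ x.1 ∉ X)
          · refine ⟨hc, ?_⟩
            rw [hxEX, if_pos hc, hX0]
          · exfalso
            rw [if_neg hc, hX0] at hxEX
            have := hconn X hXne hXuniv
            omega
        obtain ⟨hcx, hEX1⟩ := hcx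
        have key : edgesCross E' X = 1 ∧ edgesCross F₁ X + edgesCross F₂ X = 0 := by
          omega
        have hcount1 : Multiset.count x E ≤ 1 := by
          have := count_le_edgesCross (S := E) (X := X) hcx
          omega
        have hcsum : Multiset.count x E = Multiset.count x E' + Multiset.count x F₁ +
            Multiset.count x (F₂.map Prod.swap) := by
          rw [hE]
          simp [Multiset.count_add]
        by_contra hlt
        push_neg at hlt
        have hxE1 : Multiset.count x E = 1 := by
          have := Multiset.count_pos.2 hxE
          omega
        have hE'0 : Multiset.count x E' = 0 := by omega
        have hor : Multiset.count x F₁ ≥ 1 ∨ Multiset.count x (F₂.map Prod.swap) ≥ 1 := by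
          omega
        rcases hor with h | h
        · have := count_le_edgesCross (S := F₁) (X := X) hcx
          omega
        · have := count_le_edgesCross (S := F₂.map Prod.swap) (X := X) hcx
          rw [edgesCross_map_swap] at this
          omega
    have hbcard : bridgeCount E ≤ Multiset.card E' := Multiset.card_le_card hle
    have hcards : Multiset.card E = Multiset.card E' + Multiset.card F₁ + Multiset.card F₂ := by
      rw [hE]
      simp [Multiset.card_add]
    have hkk : Multiset.card F₁ + Multiset.card F₂ = k := by
      rw [← hk]
      simp [Multiset.card_add]
    omega
  · rintro ⟨hconn, hk⟩
    induction k with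
    | zero =>
      refine ⟨E, 0, 0, by simp, by simp, fun X hXne hXuniv => ?_⟩
      have h1 := hconn X hXne hXuniv
      have h0 : arcsOut ((0 : Multiset (V × V)) + 0) X = 0 := by
        simp [arcsOut]
      omega
    | succ k ih =>
      obtain ⟨E', F₁, F₂, hE, hkF, hstrong⟩ := ih (by omega)
      have hE'le : E' ≤ E := by
        rw [hE, add_assoc]
        exact Multiset.le_add_right _ _
      have hkk : Multiset.card F₁ + Multiset.card F₂ = k := by
        rw [← hkF]; simp [Multiset.card_add]
      have hcards : Multiset.card E = Multiset.card E' + k := by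
        rw [hE]; simp [Multiset.card_add]; omega
      have hble : bridgeCount E ≤ Multiset.card E :=
        Multiset.card_le_card (Multiset.filter_le _ _)
      have hfle : (E'.filter fun e => ¬ MConnected (E.erase e)).card ≤ bridgeCount E :=
        Multiset.card_le_card (Multiset.filter_le_filter _ hE'le)
      have hex : ∃ e ∈ E', MConnected (E.erase e) := by
        by_contra hc
        push_neg at hc
        have h10 : (E'.filter fun e => ¬ MConnected (E.erase e)) = E' :=
          Multiset.filter_eq_self.2 hc
        have h11 := congrArg Multiset.card h10
        omega
      obtain ⟨e, heE', hce⟩ := hex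
      have herase : E.erase e = E'.erase e + F₁ + F₂.map Prod.swap := by
        rw [hE, Multiset.erase_add_left_pos _ (Multiset.mem_add.2 (Or.inl heE')),
          Multiset.erase_add_left_pos _ heE']
      have hnb : ∀ X : Finset V, X.Nonempty → X ≠ Finset.univ →
          1 ≤ edgesCross (E'.erase e) X + edgesCross (F₁ + F₂) X := by
        intro X hXne hXuniv
        have h12 := hce X hXne hXuniv
        rw [herase, edgesCross_add, edgesCross_add, edgesCross_map_swap] at h12
        rw [edgesCross_add]
        omega
      rcases orient_step E' (F₁ + F₂) e heE' hstrong hnb with h | h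
      · refine ⟨E'.erase e, e ::ₘ F₁, F₂, ?_, ?_, ?_⟩
        · rw [hE, ← Multiset.cons_erase heE']
          simp [Multiset.cons_add, Multiset.add_cons]
        · rw [Multiset.cons_add, Multiset.card_cons, hkF]
        · rwa [Multiset.cons_add]
      · refine ⟨E'.erase e, F₁, Prod.swap e ::ₘ F₂, ?_, ?_, ?_⟩
        · rw [hE, ← Multiset.cons_erase heE', Multiset.map_cons, Prod.swap_swap]
          simp [Multiset.cons_add, Multiset.add_cons]
        · rw [Multiset.add_cons, Multiset.card_cons, hkF]
        · rwa [Multiset.add_cons]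
end

section
/- Every graph G obtained from a cubic 2-vertex-connected graph by subdividing every edge twice admits a legal path decomposition, i.e., a set of subpaths P = P1 ∪ P2 of G such that the edge sets of the paths partition E(G), every path in P_i has exactly i edges for i = 1, 2, and every vertex of G is contained in exactly two paths of P. -/
open scoped Classical

/-- The subdivision vertices of `G`: one vertex `w (u,v)` for each ordered adjacent
pair, so each edge `{u,v}` gets the two internal vertices `w (u,v)` and `w (v,u)`. -/
abbrev SubVert {V0 : Type*} (G : SimpleGraph V0) := {p : V0 × V0 // G.Adj p.1 p.2}

/-- The adjacency relation of the graph obtained from `G` by subdividing every edge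
twice: each edge `{u,v}` is replaced by the path `u - w(u,v) - w(v,u) - v`. -/
def subAdj {V0 : Type*} (G : SimpleGraph V0) :
    (V0 ⊕ SubVert G) → (V0 ⊕ SubVert G) → Prop
  | Sum.inl u, Sum.inr q => u = q.1.1
  | Sum.inr q, Sum.inl u => u = q.1.1
  | Sum.inr q, Sum.inr q' => q.1.1 = q'.1.2 ∧ q.1.2 = q'.1.1
  | Sum.inl _, Sum.inl _ => False

/-- The graph obtained from `G` by subdividing every edge twice. -/
def subdivide {V0 : Type*} (G : SimpleGraph V0) : SimpleGraph (V0 ⊕ SubVert G) where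
  Adj := subAdj G
  symm := ⟨by
    rintro (u | q) (w | q') h <;> simp only [subAdj] at h ⊢ <;> tauto⟩
  loopless := ⟨by
    rintro (u | q) h <;> simp only [subAdj] at h
    exact G.loopless.irrefl q.1.1 (h.2 ▸ q.2)⟩

/-- `G` is 2-vertex-connected: more than 2 vertices and deleting any vertex leaves a
connected graph. -/
def TwoVertexConnected {V0 : Type*} [Fintype V0] (G : SimpleGraph V0) : Prop :=
  2 < Fintype.card V0 ∧ ∀ v : V0, (G.induce {u | u ≠ v}).Connected

/-- `(P1, P2)` is a legal path decomposition of `G`: `P1` consists of one-edge paths,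
`P2` of two-edge paths, the edge sets of the paths partition `E(G)` (every edge lies on
exactly one path), and every vertex lies on exactly two paths. -/
def IsLegalDecomp {W : Type*} (G : SimpleGraph W)
    (P1 : Finset (W × W)) (P2 : Finset (W × W × W)) : Prop :=
  (∀ p ∈ P1, G.Adj p.1 p.2) ∧
  (∀ t ∈ P2, G.Adj t.1 t.2.1 ∧ G.Adj t.2.1 t.2.2 ∧ t.1 ≠ t.2.2) ∧
  (∀ u v : W, G.Adj u v →
      (P1.filter fun p => s(p.1, p.2) = s(u, v)).card
        + (P2.filter fun t => s(t.1, t.2.1) = s(u, v) ∨ s(t.2.1, t.2.2) = s(u, v)).card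
      = 1) ∧
  (∀ v : W, (P1.filter fun p => v = p.1 ∨ v = p.2).card
        + (P2.filter fun t => v = t.1 ∨ v = t.2.1 ∨ v = t.2.2).card = 2)

private lemma card_filter_image' {α β : Type*} [DecidableEq β] {f : α → β}
    (hf : Function.Injective f) (s : Finset α) (p : β → Prop) [DecidablePred p] :
    ((s.image f).filter p).card = (s.filter fun x => p (f x)).card := by
  rw [Finset.filter_image, Finset.card_image_of_injective _ hf]

private lemma card_filter_eq_and {α : Type*} [Fintype α] [DecidableEq α]
    (u : α) (p : α → Prop) [DecidablePred p] :
    (Finset.univ.filter fun x => x = u ∧ p x).card = if p u then 1 else 0 := by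
  have h : (Finset.univ.filter fun x => x = u ∧ p x)
      = Finset.univ.filter fun x => x = u ∧ p u := by
    apply Finset.filter_congr
    rintro x -
    constructor <;> rintro ⟨rfl, h⟩ <;> exact ⟨rfl, h⟩
  rw [h]
  by_cases hp : p u
  · simp [hp, Finset.filter_eq']
  · simp [hp]

/-- Every graph obtained from a cubic 2-vertex-connected graph by subdividing every
edge twice admits a legal path decomposition. -/
theorem stmt_5 {V0 : Type*} [Fintype V0] (G0 : SimpleGraph V0)
    (hcubic : ∀ v : V0, G0.degree v = 3) (h2c : TwoVertexConnected G0) :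
    ∃ (P1 : Finset ((V0 ⊕ SubVert G0) × (V0 ⊕ SubVert G0)))
      (P2 : Finset ((V0 ⊕ SubVert G0) × (V0 ⊕ SubVert G0) × (V0 ⊕ SubVert G0))),
      IsLegalDecomp (subdivide G0) P1 P2 := by
  letI : DecidableEq (V0 ⊕ SubVert G0) := fun a b => Classical.propDecidable _
  obtain ⟨lt, hasymm, htri⟩ : ∃ lt : V0 → V0 → Prop,
      (∀ x y, lt x y → ¬ lt y x) ∧ (∀ x y, x ≠ y → lt x y ∨ lt y x) :=
    ⟨WellOrderingRel, fun x y h h' => asymm h h', fun x y h =>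
      (trichotomous_of WellOrderingRel x y).imp id (fun h' => h'.elim (fun e => absurd e h) id)⟩
  have h3 : ∀ u : V0, ∃ x y z : V0, x ≠ y ∧ x ≠ z ∧ y ≠ z ∧
      G0.neighborFinset u = {x, y, z} := fun u =>
    Finset.card_eq_three.mp (by rw [G0.card_neighborFinset_eq_degree]; exact hcubic u)
  choose a b c hab hac hbc hset using h3
  have ha : ∀ u, G0.Adj u (a u) := fun u => by
    rw [← SimpleGraph.mem_neighborFinset, hset u]; simp
  have hb : ∀ u, G0.Adj u (b u) := fun u => by
    rw [← SimpleGraph.mem_neighborFinset, hset u]; simp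
  have hc : ∀ u, G0.Adj u (c u) := fun u => by
    rw [← SimpleGraph.mem_neighborFinset, hset u]; simp
  have hmemn : ∀ u y, G0.Adj u y → (y = a u ∨ y = b u ∨ y = c u) := by
    intro u y h
    have hy : y ∈ G0.neighborFinset u := by rwa [SimpleGraph.mem_neighborFinset]
    rw [hset u] at hy; simpa using hy
  -- the three families of paths
  set fA : V0 → (V0 ⊕ SubVert G0) × (V0 ⊕ SubVert G0) :=
    fun u => (Sum.inl u, Sum.inr ⟨(u, c u), hc u⟩) with hfAdef
  set fB : SubVert G0 → (V0 ⊕ SubVert G0) × (V0 ⊕ SubVert G0) :=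
    fun r => (Sum.inr r, Sum.inr ⟨(r.1.2, r.1.1), r.2.symm⟩) with hfBdef
  set fT : V0 → (V0 ⊕ SubVert G0) × (V0 ⊕ SubVert G0) × (V0 ⊕ SubVert G0) :=
    fun u => (Sum.inr ⟨(u, a u), ha u⟩, Sum.inl u, Sum.inr ⟨(u, b u), hb u⟩) with hfTdef
  have hfA : Function.Injective fA := by
    intro u v h; simpa [hfAdef] using congrArg Prod.fst h
  have hfB : Function.Injective fB := by
    intro r r' h; simpa [hfBdef] using congrArg Prod.fst h
  have hfT : Function.Injective fT := by
    intro u v h; simpa [hfTdef] using congrArg (fun t => t.2.1) h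
  set A := Finset.univ.image fA with hA
  set Bs := (Finset.univ.filter fun r : SubVert G0 => lt r.1.1 r.1.2).image fB with hB
  set T := Finset.univ.image fT with hT
  have hABdisj : Disjoint A Bs := by
    rw [Finset.disjoint_left]
    intro p hpA hpB
    rw [hA, Finset.mem_image] at hpA
    rw [hB, Finset.mem_image] at hpB
    obtain ⟨u, -, rfl⟩ := hpA
    obtain ⟨r, -, hr⟩ := hpB
    exact absurd (congrArg Prod.fst hr) (by simp [hfAdef, hfBdef])
  refine ⟨A ∪ Bs, T, ?_, ?_, ?_, ?_⟩
  · -- every pair in P1 is an edge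
    intro p hp
    rw [Finset.mem_union] at hp
    rcases hp with hp | hp
    · rw [hA, Finset.mem_image] at hp
      obtain ⟨u, -, rfl⟩ := hp
      show subAdj G0 (fA u).1 (fA u).2
      simp [hfAdef, subAdj]
    · rw [hB, Finset.mem_image] at hp
      obtain ⟨r, -, rfl⟩ := hp
      show subAdj G0 (fB r).1 (fB r).2
      simp [hfBdef, subAdj]
  · -- every triple in P2 is a 2-path
    intro t ht
    rw [hT, Finset.mem_image] at ht
    obtain ⟨u, -, rfl⟩ := ht
    refine ⟨?_, ?_, ?_⟩
    · show subAdj G0 (fT u).1 (fT u).2.1; simp [hfTdef, subAdj]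
    · show subAdj G0 (fT u).2.1 (fT u).2.2; simp [hfTdef, subAdj]
    · simp only [hfTdef, ne_eq, Sum.inr.injEq, Subtype.mk.injEq, Prod.mk.injEq]
      intro h
      exact hab u h.2
  · -- each edge on exactly one path
    intro x y hxy
    have hxy' : subAdj G0 x y := hxy
    have key : ∀ q : SubVert G0,
        ((A ∪ Bs).filter fun p => s(p.1, p.2) = s(Sum.inl q.1.1, Sum.inr q)).card
          + (T.filter fun t => s(t.1, t.2.1) = s(Sum.inl q.1.1, Sum.inr q)
              ∨ s(t.2.1, t.2.2) = s(Sum.inl q.1.1, Sum.inr q)).card = 1 := by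
      intro q
      rw [Finset.filter_union,
        Finset.card_union_of_disjoint (Finset.disjoint_filter_filter hABdisj),
        hA, hB, hT, card_filter_image' hfA, card_filter_image' hfB, card_filter_image' hfT]
      have eA : (Finset.univ.filter fun x => s((fA x).1, (fA x).2) = s(Sum.inl q.1.1, Sum.inr q))
          = Finset.univ.filter fun x => x = q.1.1 ∧ q.1.2 = c x := by
        apply Finset.filter_congr
        rintro x -
        simp only [hfAdef, Sym2.eq_iff, Sum.inl.injEq, Sum.inr.injEq, Subtype.ext_iff,
          Prod.ext_iff, and_false, false_and, or_false, reduceCtorEq]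
        constructor
        · rintro ⟨rfl, -, h2⟩; exact ⟨rfl, h2.symm⟩
        · rintro ⟨rfl, h2⟩; exact ⟨rfl, rfl, h2.symm⟩
      have eB : ((Finset.univ.filter fun r : SubVert G0 => lt r.1.1 r.1.2).filter
            fun r => s((fB r).1, (fB r).2) = s(Sum.inl q.1.1, Sum.inr q)) = ∅ := by
        rw [Finset.filter_eq_empty_iff]
        rintro r -
        simp [hfBdef, Sym2.eq_iff]
      have eT : (Finset.univ.filter fun x =>
            s((fT x).1, (fT x).2.1) = s(Sum.inl q.1.1, Sum.inr q)
              ∨ s((fT x).2.1, (fT x).2.2) = s(Sum.inl q.1.1, Sum.inr q))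
          = Finset.univ.filter fun x => x = q.1.1 ∧ (q.1.2 = a x ∨ q.1.2 = b x) := by
        apply Finset.filter_congr
        rintro x -
        simp only [hfTdef, Sym2.eq_iff, Sum.inl.injEq, Sum.inr.injEq, Subtype.ext_iff,
          Prod.ext_iff, and_false, false_and, or_false, false_or, reduceCtorEq]
        constructor
        · rintro (⟨⟨rfl, h2⟩, -⟩ | ⟨rfl, -, h2⟩)
          · exact ⟨rfl, Or.inl h2.symm⟩
          · exact ⟨rfl, Or.inr h2.symm⟩
        · rintro ⟨rfl, h2 | h2⟩
          · exact Or.inl ⟨⟨rfl, h2.symm⟩, rfl⟩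
          · exact Or.inr ⟨rfl, rfl, h2.symm⟩
      rw [eA, eB, eT, card_filter_eq_and, card_filter_eq_and, Finset.card_empty]
      rcases hmemn q.1.1 q.1.2 q.2 with h | h | h
      · rw [h]; simp [hab q.1.1, (hac q.1.1)]
      · rw [h]; simp [(hab q.1.1).symm, (hbc q.1.1)]
      · rw [h]; simp [(hac q.1.1).symm, (hbc q.1.1).symm]
    match x, y, hxy' with
    | Sum.inl u, Sum.inr q, hxy' =>
      obtain rfl : u = q.1.1 := hxy'
      exact key q
    | Sum.inr q, Sum.inl u, hxy' =>
      obtain rfl : u = q.1.1 := hxy'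
      rw [show s((Sum.inr q : V0 ⊕ SubVert G0), Sum.inl q.1.1) = s(Sum.inl q.1.1, Sum.inr q)
        from Sym2.eq_swap]
      exact key q
    | Sum.inr q, Sum.inr q', hxy' =>
      -- middle edge
      have hq' : q'.1 = (q.1.2, q.1.1) := by
        ext <;> simp [hxy'.1.symm, hxy'.2.symm]
      rw [Finset.filter_union,
        Finset.card_union_of_disjoint (Finset.disjoint_filter_filter hABdisj),
        hA, hB, hT, card_filter_image' hfA, card_filter_image' hfB, card_filter_image' hfT]
      have eA : (Finset.univ.filter fun x =>
            s((fA x).1, (fA x).2) = s(Sum.inr q, Sum.inr q')) = ∅ := by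
        rw [Finset.filter_eq_empty_iff]; rintro x -; simp [hfAdef, Sym2.eq_iff]
      have eT : (Finset.univ.filter fun x =>
            s((fT x).1, (fT x).2.1) = s(Sum.inr q, Sum.inr q')
              ∨ s((fT x).2.1, (fT x).2.2) = s(Sum.inr q, Sum.inr q')) = ∅ := by
        rw [Finset.filter_eq_empty_iff]; rintro x -; simp [hfTdef, Sym2.eq_iff]
      have eB : ((Finset.univ.filter fun r : SubVert G0 => lt r.1.1 r.1.2).filter
            fun r => s((fB r).1, (fB r).2) = s(Sum.inr q, Sum.inr q'))
          = Finset.univ.filter fun r : SubVert G0 =>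
              lt r.1.1 r.1.2 ∧ (r.1 = q.1 ∨ r.1 = (q.1.2, q.1.1)) := by
        rw [Finset.filter_filter]
        apply Finset.filter_congr
        rintro r -
        simp only [hfBdef, Sym2.eq_iff, Sum.inr.injEq, Subtype.ext_iff, Prod.ext_iff, hq']
        constructor
        · rintro ⟨hlt, (⟨h1, -⟩ | ⟨h1, -⟩)⟩
          · exact ⟨hlt, Or.inl ⟨h1.1, h1.2⟩⟩
          · exact ⟨hlt, Or.inr ⟨h1.1, h1.2⟩⟩
        · rintro ⟨hlt, (⟨h1, h2⟩ | ⟨h1, h2⟩)⟩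
          · exact ⟨hlt, Or.inl ⟨⟨h1, h2⟩, h2, h1⟩⟩
          · exact ⟨hlt, Or.inr ⟨⟨h1, h2⟩, h2, h1⟩⟩
      rw [eA, eB, eT]
      simp only [Finset.card_empty, Nat.zero_add, Nat.add_zero]
      have hne : q.1.1 ≠ q.1.2 := q.2.ne
      rcases htri _ _ hne with h | h
      · rw [Finset.card_eq_one]
        refine ⟨q, ?_⟩
        ext r
        simp only [Finset.mem_filter, Finset.mem_univ, true_and, Finset.mem_singleton]
        constructor
        · rintro ⟨hlt, h1 | h1⟩
          · exact Subtype.ext h1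
          · rw [h1] at hlt; exact absurd hlt (hasymm _ _ h)
        · rintro rfl; exact ⟨h, Or.inl rfl⟩
      · rw [Finset.card_eq_one]
        refine ⟨⟨(q.1.2, q.1.1), q.2.symm⟩, ?_⟩
        ext r
        simp only [Finset.mem_filter, Finset.mem_univ, true_and, Finset.mem_singleton,
          Subtype.ext_iff]
        constructor
        · rintro ⟨hlt, h1 | h1⟩
          · rw [h1] at hlt; exact absurd hlt (hasymm _ _ h)
          · exact h1
        · rintro h1; exact ⟨by rw [h1]; exact h, Or.inr h1⟩
  · -- each vertex on exactly two paths
    intro v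
    rw [Finset.filter_union,
      Finset.card_union_of_disjoint (Finset.disjoint_filter_filter hABdisj),
      hA, hB, hT, card_filter_image' hfA, card_filter_image' hfB, card_filter_image' hfT]
    match v with
    | Sum.inl u =>
      have eA : (Finset.univ.filter fun x =>
            Sum.inl u = (fA x).1 ∨ Sum.inl u = (fA x).2)
          = Finset.univ.filter fun x => x = u := by
        apply Finset.filter_congr
        rintro x -
        simp only [hfAdef, Sum.inl.injEq, reduceCtorEq, or_false]
        exact ⟨fun h => h.symm, fun h => h.symm⟩
      have eB : ((Finset.univ.filter fun r : SubVert G0 => lt r.1.1 r.1.2).filter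
            fun r => Sum.inl u = (fB r).1 ∨ Sum.inl u = (fB r).2) = ∅ := by
        rw [Finset.filter_eq_empty_iff]; rintro r -; simp [hfBdef]
      have eT : (Finset.univ.filter fun x =>
            Sum.inl u = (fT x).1 ∨ Sum.inl u = (fT x).2.1 ∨ Sum.inl u = (fT x).2.2)
          = Finset.univ.filter fun x => x = u := by
        apply Finset.filter_congr
        rintro x -
        simp only [hfTdef, Sum.inl.injEq, reduceCtorEq, or_false, false_or]
        exact ⟨fun h => h.symm, fun h => h.symm⟩
      rw [eA, eB, eT]
      have h1 : (Finset.univ.filter fun x : V0 => x = u).card = 1 := by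
        rw [Finset.card_eq_one]
        exact ⟨u, by ext x; simp⟩
      rw [h1]
      simp
    | Sum.inr q =>
      have eA : (Finset.univ.filter fun x =>
            Sum.inr q = (fA x).1 ∨ Sum.inr q = (fA x).2)
          = Finset.univ.filter fun x => x = q.1.1 ∧ q.1.2 = c x := by
        apply Finset.filter_congr
        rintro x -
        simp only [hfAdef, Sum.inr.injEq, Subtype.ext_iff, Prod.ext_iff, reduceCtorEq, false_or]
        constructor
        · rintro ⟨h1, h2⟩; exact ⟨h1.symm, h2⟩
        · rintro ⟨rfl, h2⟩; exact ⟨rfl, h2⟩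
      have eB : ((Finset.univ.filter fun r : SubVert G0 => lt r.1.1 r.1.2).filter
            fun r => Sum.inr q = (fB r).1 ∨ Sum.inr q = (fB r).2)
          = Finset.univ.filter fun r : SubVert G0 =>
              lt r.1.1 r.1.2 ∧ (r.1 = q.1 ∨ r.1 = (q.1.2, q.1.1)) := by
        rw [Finset.filter_filter]
        apply Finset.filter_congr
        rintro r -
        simp only [hfBdef, Sum.inr.injEq, Subtype.ext_iff, Prod.ext_iff]
        constructor
        · rintro ⟨hlt, h1 | h1⟩
          · exact ⟨hlt, Or.inl ⟨h1.1.symm, h1.2.symm⟩⟩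
          · exact ⟨hlt, Or.inr ⟨h1.2.symm, h1.1.symm⟩⟩
        · rintro ⟨hlt, h1 | h1⟩
          · exact ⟨hlt, Or.inl ⟨h1.1.symm, h1.2.symm⟩⟩
          · exact ⟨hlt, Or.inr ⟨h1.2.symm, h1.1.symm⟩⟩
      have eT : (Finset.univ.filter fun x =>
            Sum.inr q = (fT x).1 ∨ Sum.inr q = (fT x).2.1 ∨ Sum.inr q = (fT x).2.2)
          = Finset.univ.filter fun x => x = q.1.1 ∧ (q.1.2 = a x ∨ q.1.2 = b x) := by
        apply Finset.filter_congr
        rintro x -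
        simp only [hfTdef, Sum.inr.injEq, Subtype.ext_iff, Prod.ext_iff, reduceCtorEq, false_or]
        constructor
        · rintro (⟨h1, h2⟩ | ⟨h1, h2⟩)
          · exact ⟨h1.symm, Or.inl h2⟩
          · exact ⟨h1.symm, Or.inr h2⟩
        · rintro ⟨rfl, h2 | h2⟩
          · exact Or.inl ⟨rfl, h2⟩
          · exact Or.inr ⟨rfl, h2⟩
      rw [eA, eB, eT, card_filter_eq_and, card_filter_eq_and]
      have hBcard : (Finset.univ.filter fun r : SubVert G0 =>
          lt r.1.1 r.1.2 ∧ (r.1 = q.1 ∨ r.1 = (q.1.2, q.1.1))).card = 1 := by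
        have hne : q.1.1 ≠ q.1.2 := q.2.ne
        rcases htri _ _ hne with h | h
        · rw [Finset.card_eq_one]
          refine ⟨q, ?_⟩
          ext r
          simp only [Finset.mem_filter, Finset.mem_univ, true_and, Finset.mem_singleton]
          constructor
          · rintro ⟨hlt, h1 | h1⟩
            · exact Subtype.ext h1
            · rw [h1] at hlt; exact absurd hlt (hasymm _ _ h)
          · rintro rfl; exact ⟨h, Or.inl rfl⟩
        · rw [Finset.card_eq_one]
          refine ⟨⟨(q.1.2, q.1.1), q.2.symm⟩, ?_⟩
          ext r
          simp only [Finset.mem_filter, Finset.mem_univ, true_and, Finset.mem_singleton,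
            Subtype.ext_iff]
          constructor
          · rintro ⟨hlt, h1 | h1⟩
            · rw [h1] at hlt; exact absurd hlt (hasymm _ _ h)
            · exact h1
          · rintro h1; exact ⟨by rw [h1]; exact h, Or.inr h1⟩
      rw [hBcard]
      rcases hmemn q.1.1 q.1.2 q.2 with h | h | h
      · rw [h]; simp [hab q.1.1, (hac q.1.1)]
      · rw [h]; simp [(hab q.1.1).symm, (hbc q.1.1)]
      · rw [h]; simp [(hac q.1.1).symm, (hbc q.1.1).symm]
end

section
/- For any 2-edge-connected graph G, define an equivalence relation ∼ on V(G) by u ∼ v if and only if the local edge-connectivity λ_G(u,v) is at least 3. Let Q_G be the quotient graph whose vertices are the equivalence classes of ∼, with an edge between classes B_u and B_v for every edge of G joining B_u and B_v. Then Q_G is a cactus, i.e., λ_{Q_G}(u,v) = 2 for all distinct vertices u, v of Q_G. -/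
open scoped Classical

/-- Local edge-connectivity between `u` and `v` in the multigraph `E`: the minimum
size of a cut separating `u` from `v` (by Menger, the maximum number of pairwise
edge-disjoint `u`-`v` paths). -/
noncomputable def lam {V : Type*} (E : Multiset (V × V)) (u v : V) : ℕ :=
  sInf {n | ∃ X : Finset V, u ∈ X ∧ v ∉ X ∧ edgesCross E X = n}

/-- The crossing number of a cut `X'` in the quotient graph equals the crossing
number of its preimage in the original graph. -/
lemma quot_cross {V : Type*} [Fintype V] (E : Multiset (V × V)) (s : Setoid V)
    (X' : Finset (Quotient s)) :
    edgesCross ((E.filter fun e => ¬ s.r e.1 e.2).map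
        fun e => (Quotient.mk s e.1, Quotient.mk s e.2)) X'
      = edgesCross E (Finset.univ.filter fun a => Quotient.mk s a ∈ X') := by
  classical
  unfold edgesCross
  rw [Multiset.filter_map, Multiset.card_map, Multiset.filter_filter]
  have hpq : (fun a : V × V =>
        ((fun e : Quotient s × Quotient s => e.1 ∈ X' ∧ e.2 ∉ X' ∨ e.2 ∈ X' ∧ e.1 ∉ X') ∘
          fun e : V × V => (Quotient.mk s e.1, Quotient.mk s e.2)) a ∧ ¬s.r a.1 a.2)
      = fun e : V × V =>
        (e.1 ∈ Finset.univ.filter (fun a => Quotient.mk s a ∈ X') ∧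
          e.2 ∉ Finset.univ.filter (fun a => Quotient.mk s a ∈ X')) ∨
        (e.2 ∈ Finset.univ.filter (fun a => Quotient.mk s a ∈ X') ∧
          e.1 ∉ Finset.univ.filter (fun a => Quotient.mk s a ∈ X')) := by
    funext e
    refine propext ?_
    simp only [Function.comp, Finset.mem_filter, Finset.mem_univ, true_and]
    constructor
    · rintro ⟨h, _⟩; exact h
    · intro h
      refine ⟨h, fun hr => ?_⟩
      have heq : Quotient.mk s e.1 = Quotient.mk s e.2 := Quot.sound hr
      rcases h with ⟨h1, h2⟩ | ⟨h1, h2⟩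
      · rw [heq] at h1; exact h2 h1
      · rw [heq] at h2; exact h2 h1
  simp only [hpq]

/-- For a 2-edge-connected graph `G`, the quotient graph `Q_G` by the equivalence
relation `u ∼ v ↔ λ_G(u,v) ≥ 3` (with one edge for every edge of `G` joining two
distinct classes) is a cactus: all local edge-connectivities of `Q_G` equal 2. -/
theorem stmt_8 {V : Type*} [Fintype V] (E : Multiset (V × V))
    (h2ec : ∀ u v : V, u ≠ v → 2 ≤ lam E u v)
    (s : Setoid V) (hs : ∀ u v : V, s.r u v ↔ (u = v ∨ 3 ≤ lam E u v)) :
    ∀ qu qv : Quotient s, qu ≠ qv →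
      lam ((E.filter fun e => ¬ s.r e.1 e.2).map
            fun e => (Quotient.mk s e.1, Quotient.mk s e.2)) qu qv = 2 := by
  classical
  intro qu qv hne
  obtain ⟨u, hu⟩ := Quotient.exists_rep qu
  obtain ⟨v, hv⟩ := Quotient.exists_rep qv
  subst hu; subst hv
  have hnr : ¬ s.r u v := fun h => hne (Quot.sound h)
  have huv : u ≠ v := fun h => hnr (h ▸ s.refl u)
  have hge2 : 2 ≤ lam E u v := h2ec u v huv
  have hlt3 : ¬ 3 ≤ lam E u v := fun h3 => hnr ((hs u v).mpr (Or.inr h3))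
  have hlam2 : lam E u v = 2 := by omega
  -- the set of cut values between u and v is nonempty, so the inf is attained
  have hT : {n | ∃ X : Finset V, u ∈ X ∧ v ∉ X ∧ edgesCross E X = n}.Nonempty :=
    ⟨edgesCross E {u}, {u}, by simp, by simp [Ne.symm huv], rfl⟩
  have hmem := Nat.sInf_mem hT
  rw [show sInf {n | ∃ X : Finset V, u ∈ X ∧ v ∉ X ∧ edgesCross E X = n} = lam E u v from rfl,
    hlam2] at hmem
  obtain ⟨X, huX, hvX, hX2⟩ := hmem
  -- the minimum 2-cut X is closed under the equivalence relation
  have hcl : ∀ a b : V, s.r a b → a ∈ X → b ∈ X := by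
    intro a b hab ha
    by_contra hb
    rcases (hs a b).mp hab with h | h
    · exact hb (h ▸ ha)
    · have hle : lam E a b ≤ edgesCross E X := Nat.sInf_le ⟨X, ha, hb, rfl⟩
      omega
  set X' : Finset (Quotient s) := X.image (Quotient.mk s) with hX'
  have hXeq : (Finset.univ.filter fun a => Quotient.mk s a ∈ X') = X := by
    ext a
    simp only [Finset.mem_filter, Finset.mem_univ, true_and, hX', Finset.mem_image]
    constructor
    · rintro ⟨b, hb, hba⟩
      exact hcl b a (Quotient.exact hba) hb
    · intro ha; exact ⟨a, ha, rfl⟩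
  have huX' : Quotient.mk s u ∈ X' := Finset.mem_image_of_mem _ huX
  have hvX' : Quotient.mk s v ∉ X' := by
    intro h
    have : v ∈ (Finset.univ.filter fun a => Quotient.mk s a ∈ X') := by
      simp [h]
    rw [hXeq] at this
    exact hvX this
  have hcross : edgesCross ((E.filter fun e => ¬ s.r e.1 e.2).map
      fun e => (Quotient.mk s e.1, Quotient.mk s e.2)) X' = 2 := by
    rw [quot_cross, hXeq, hX2]
  have h2mem : (2 : ℕ) ∈ {n | ∃ Y : Finset (Quotient s),
      Quotient.mk s u ∈ Y ∧ Quotient.mk s v ∉ Y ∧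
      edgesCross ((E.filter fun e => ¬ s.r e.1 e.2).map
        fun e => (Quotient.mk s e.1, Quotient.mk s e.2)) Y = n} :=
    ⟨X', huX', hvX', hcross⟩
  refine le_antisymm (Nat.sInf_le h2mem) (le_csInf ⟨2, h2mem⟩ ?_)
  rintro n ⟨Y, h1, h2, rfl⟩
  have hkey : edgesCross ((E.filter fun e => ¬ s.r e.1 e.2).map
      fun e => (Quotient.mk s e.1, Quotient.mk s e.2)) Y
      = edgesCross E (Finset.univ.filter fun a => Quotient.mk s a ∈ Y) :=
    quot_cross E s Y
  rw [hkey]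
  have hle : lam E u v ≤ edgesCross E (Finset.univ.filter fun a => Quotient.mk s a ∈ Y) :=
    Nat.sInf_le ⟨_, by simp [h1], by simp [h2], rfl⟩
  omega
end

section
/- Let G be a cactus and F ⊆ E(G). Then the graph G' obtained from G by doubling all edges of F is 3-edge-connected if and only if the spanning subgraph (V(G), F) is connected. -/
open scoped Classical

/-- A multigraph is `m`-edge-connected. -/
def EdgeConn {V : Type*} [Fintype V] (m : ℕ) (E : Multiset (V × V)) : Prop :=
  ∀ X : Finset V, X.Nonempty → X ≠ Finset.univ → m ≤ edgesCross E X

namespace Stmt11Aux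

variable {V : Type*}

def cross (g : V × V) (X : Finset V) : Prop :=
  (g.1 ∈ X ∧ g.2 ∉ X) ∨ (g.2 ∈ X ∧ g.1 ∉ X)

noncomputable def crs (E : Multiset (V × V)) (X : Finset V) : Multiset (V × V) :=
  E.filter (fun g => cross g X)

lemma edgesCross_eq (E : Multiset (V × V)) (X : Finset V) :
    edgesCross E X = (crs E X).card := by
  unfold edgesCross crs
  congr 1
  exact Multiset.filter_congr (fun g _ => Iff.rfl)

lemma mem_crs {E : Multiset (V × V)} {X : Finset V} {g : V × V} :
    g ∈ crs E X ↔ g ∈ E ∧ cross g X := Multiset.mem_filter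

lemma count_crs (E : Multiset (V × V)) (X : Finset V) (g : V × V) :
    (crs E X).count g = if cross g X then E.count g else 0 :=
  Multiset.count_filter

lemma edgesCross_add (E F : Multiset (V × V)) (X : Finset V) :
    edgesCross (E + F) X = edgesCross E X + edgesCross F X := by
  simp [edgesCross, Multiset.filter_add]

lemma ne_univ_of_notMem [Fintype V] {S : Finset V} {v : V} (h : v ∉ S) :
    S ≠ Finset.univ := fun hh => h (hh.symm ▸ Finset.mem_univ v)

noncomputable def sd (X Z : Finset V) : Finset V := (X \ Z) ∪ (Z \ X)

lemma mem_sd {X Z : Finset V} {v : V} :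
    v ∈ sd X Z ↔ (v ∈ X ∧ v ∉ Z) ∨ (v ∈ Z ∧ v ∉ X) := by
  simp [sd, Finset.mem_union, Finset.mem_sdiff]

lemma cross_sd {g : V × V} {X Z : Finset V} :
    cross g (sd X Z) ↔ ((cross g X ∧ ¬ cross g Z) ∨ (cross g Z ∧ ¬ cross g X)) := by
  simp only [cross, mem_sd]; tauto

lemma cross_inter {g : V × V} {X Z : Finset V} (h : cross g (X ∩ Z)) :
    cross g X ∨ cross g Z := by
  simp only [cross, Finset.mem_inter] at *; tauto

lemma cross_compl [Fintype V] {g : V × V} {X : Finset V} :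
    cross g Xᶜ ↔ cross g X := by
  simp only [cross, Finset.mem_compl]; tauto

lemma crs_compl [Fintype V] (E : Multiset (V × V)) (X : Finset V) :
    crs E Xᶜ = crs E X :=
  Multiset.filter_congr (fun g _ => cross_compl)

lemma cross_pt (g : V × V) (S T : Finset V) :
    (if cross g (S ∩ T) then 1 else 0) + (if cross g (S ∪ T) then 1 else 0) ≤
    (if cross g S then 1 else 0) + (if cross g T then 1 else 0) := by
  by_cases h1 : g.1 ∈ S <;> by_cases h2 : g.2 ∈ S <;>
  by_cases h3 : g.1 ∈ T <;> by_cases h4 : g.2 ∈ T <;>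
  simp [cross, Finset.mem_inter, Finset.mem_union, h1, h2, h3, h4]

lemma crs_submod (E : Multiset (V × V)) (S T : Finset V) :
    (crs E (S ∩ T)).card + (crs E (S ∪ T)).card ≤ (crs E S).card + (crs E T).card := by
  induction E using Multiset.induction_on with
  | empty => simp [crs]
  | cons g E ih =>
    have h1 : ∀ (U : Finset V), (crs (g ::ₘ E) U).card
        = (if cross g U then 1 else 0) + (crs E U).card := by
      intro U
      simp only [crs, Multiset.filter_cons, Multiset.card_add]
      congr 1
      split <;> simp
    rw [h1, h1, h1, h1]
    have := cross_pt g S T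
    omega

lemma pairext {E : Multiset (V × V)} {Z : Finset V} {x : V × V}
    (hx : x ∈ E) (hcx : cross x Z) (hcnt : E.count x = 1)
    (hcard : (crs E Z).card = 2) :
    ∃ s, crs E Z = x ::ₘ {s} ∧ s ≠ x := by
  have hmem : x ∈ crs E Z := mem_crs.mpr ⟨hx, hcx⟩
  have h1 : x ::ₘ (crs E Z).erase x = crs E Z := Multiset.cons_erase hmem
  have hc : ((crs E Z).erase x).card = 1 := by
    have h2 := Multiset.card_erase_of_mem hmem
    rw [hcard] at h2
    simpa using h2
  obtain ⟨s, hs⟩ := Multiset.card_eq_one.mp hc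
  have hcount : (crs E Z).count x = 1 := by
    rw [count_crs, if_pos hcx, hcnt]
  refine ⟨s, by rw [← h1, hs], ?_⟩
  intro hsx
  rw [← h1, hs, hsx] at hcount
  norm_num [Multiset.count_cons, Multiset.count_singleton] at hcount

lemma crs_eq_cases [Fintype V] {E : Multiset (V × V)}
    (hA1 : ∀ S : Finset V, S.Nonempty → S ≠ Finset.univ → 1 ≤ (crs E S).card)
    {S T : Finset V} (h : crs E S = crs E T) : S = T ∨ S = Tᶜ := by
  have hpt : ∀ g ∈ E, (cross g S ↔ cross g T) := by
    intro g hg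
    constructor <;> intro hc
    · exact (mem_crs.mp (by rw [← h]; exact mem_crs.mpr ⟨hg, hc⟩)).2
    · exact (mem_crs.mp (by rw [h]; exact mem_crs.mpr ⟨hg, hc⟩)).2
  have hsd : (crs E (sd S T)).card = 0 := by
    rw [Multiset.card_eq_zero, Multiset.eq_zero_iff_forall_notMem]
    intro g hg
    obtain ⟨hgE, hgc⟩ := mem_crs.mp hg
    rw [cross_sd] at hgc
    have := hpt g hgE
    tauto
  rcases Finset.eq_empty_or_nonempty (sd S T) with he | hne
  · left
    ext v
    constructor <;> intro hv <;> by_contra hv'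
    · have hm : v ∈ sd S T := mem_sd.mpr (Or.inl ⟨hv, hv'⟩)
      rw [he] at hm; exact absurd hm (Finset.notMem_empty v)
    · have hm : v ∈ sd S T := mem_sd.mpr (Or.inr ⟨hv, hv'⟩)
      rw [he] at hm; exact absurd hm (Finset.notMem_empty v)
  · by_cases hu : sd S T = Finset.univ
    · right
      ext v
      have hm : v ∈ sd S T := hu.symm ▸ Finset.mem_univ v
      rw [mem_sd] at hm
      rw [Finset.mem_compl]
      tauto
    · have := hA1 _ hne hu
      omega

lemma crs_sd_pair {E : Multiset (V × V)} {X Z : Finset V} {α β γ : V × V}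
    (hX : crs E X = α ::ₘ {γ}) (hZ : crs E Z = γ ::ₘ {β})
    (hag : α ≠ γ) (hbg : β ≠ γ) (hab : α ≠ β)
    (hca : E.count α = 1) (hcb : E.count β = 1) :
    crs E (sd X Z) = α ::ₘ {β} := by
  have haE : α ∈ E ∧ cross α X := mem_crs.mp (by rw [hX]; exact Multiset.mem_cons_self _ _)
  have hgX : γ ∈ E ∧ cross γ X := mem_crs.mp (by rw [hX]; simp)
  have hgZ : γ ∈ E ∧ cross γ Z := mem_crs.mp (by rw [hZ]; exact Multiset.mem_cons_self _ _)
  have hbE : β ∈ E ∧ cross β Z := mem_crs.mp (by rw [hZ]; simp)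
  have hnaZ : ¬ cross α Z := by
    intro hc
    have : α ∈ crs E Z := mem_crs.mpr ⟨haE.1, hc⟩
    rw [hZ] at this
    simp only [Multiset.mem_cons, Multiset.mem_singleton] at this
    tauto
  have hnbX : ¬ cross β X := by
    intro hc
    have : β ∈ crs E X := mem_crs.mpr ⟨hbE.1, hc⟩
    rw [hX] at this
    simp only [Multiset.mem_cons, Multiset.mem_singleton] at this
    tauto
  rw [Multiset.ext]
  intro g
  rw [count_crs]
  by_cases hga : g = α
  · subst hga
    rw [if_pos (cross_sd.mpr (Or.inl ⟨haE.2, hnaZ⟩)), hca]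
    simp [Multiset.count_cons, Multiset.count_singleton, hab]
  · by_cases hgb : g = β
    · subst hgb
      rw [if_pos (cross_sd.mpr (Or.inr ⟨hbE.2, hnbX⟩)), hcb]
      simp [Multiset.count_cons, Multiset.count_singleton, hab.symm]
    · by_cases hgg : g = γ
      · subst hgg
        rw [if_neg (by rw [cross_sd]; push_neg; exact ⟨fun _ => hgZ.2, fun _ => hgX.2⟩)]
        simp [Multiset.count_cons, Multiset.count_singleton, hag.symm, hbg.symm]
      · have hrhs : Multiset.count g (α ::ₘ {β}) = 0 := by
          simp [Multiset.count_cons, Multiset.count_singleton, hga, hgb]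
        rw [hrhs]
        by_cases hgE : g ∈ E
        · have hnX : ¬ cross g X := by
            intro hc
            have : g ∈ crs E X := mem_crs.mpr ⟨hgE, hc⟩
            rw [hX] at this
            simp only [Multiset.mem_cons, Multiset.mem_singleton] at this
            tauto
          have hnZ : ¬ cross g Z := by
            intro hc
            have : g ∈ crs E Z := mem_crs.mpr ⟨hgE, hc⟩
            rw [hZ] at this
            simp only [Multiset.mem_cons, Multiset.mem_singleton] at this
            tauto
          rw [if_neg (by rw [cross_sd]; tauto)]
        · have : E.count g = 0 := Multiset.count_eq_zero_of_notMem hgE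
          rw [this]
          split <;> rfl


/-- Key structural lemma: if `R` is a "region" whose crossing edges are exactly
`g₁, g₂` (each a partner of `e` or `e` itself), every 2-cut family member is
comparable to `R`, then the inner endpoints of `g₁` and `g₂` in `R` coincide. -/
lemma coincide [Fintype V]
    (E : Multiset (V × V)) (e : V × V)
    (hA : ∀ S : Finset V, S.Nonempty → S ≠ Finset.univ → 2 ≤ (crs E S).card)
    (hB : ∀ u v : V, u ≠ v → ∃ Z : Finset V, u ∈ Z ∧ v ∉ Z ∧ (crs E Z).card = 2)
    (hcnt : E.count e = 1)
    (R : Finset V) (g₁ g₂ : V × V) (τ₁ τ₂ o₁ o₂ : V)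
    (hcrR : crs E R = g₁ ::ₘ {g₂})
    (hτ₁R : τ₁ ∈ R) (hτ₂R : τ₂ ∈ R) (ho₁R : o₁ ∉ R) (ho₂R : o₂ ∉ R)
    (hg₁ : g₁ = (τ₁, o₁) ∨ g₁ = (o₁, τ₁))
    (hg₂ : g₂ = (τ₂, o₂) ∨ g₂ = (o₂, τ₂))
    (hW₁ : g₁ = e ∨ ∃ W : Finset V,
      (e.2 ∈ W ∧ e.1 ∉ W ∧ (crs E W).card = 2) ∧ crs E W = e ::ₘ {g₁})
    (hW₂ : g₂ = e ∨ ∃ W : Finset V,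
      (e.2 ∈ W ∧ e.1 ∉ W ∧ (crs E W).card = 2) ∧ crs E W = e ::ₘ {g₂})
    (hRZ : ∀ W : Finset V, (e.2 ∈ W ∧ e.1 ∉ W ∧ (crs E W).card = 2) →
      R ⊆ W ∨ R ∩ W = ∅)
    (hab : e.1 ∉ R ∨ e.2 ∉ R) :
    τ₁ = τ₂ := by
  by_contra hne
  have heE : e ∈ E := Multiset.count_pos.mp (by omega)
  -- a separating 2-cut for τ₁, τ₂
  obtain ⟨Z'', hZ1, hZ2, hZc⟩ := hB τ₁ τ₂ hne
  -- e does not cross Z''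
  have hsame : (e.1 ∈ Z'' ↔ e.2 ∈ Z'') := by
    by_contra hcr'
    by_cases he2 : e.2 ∈ Z''
    · have hW : e.2 ∈ Z'' ∧ e.1 ∉ Z'' ∧ (crs E Z'').card = 2 :=
        ⟨he2, fun h1 => hcr' ⟨fun _ => he2, fun _ => h1⟩, hZc⟩
      rcases hRZ Z'' hW with h | h
      · exact hZ2 (h hτ₂R)
      · have : τ₁ ∈ R ∩ Z'' := Finset.mem_inter.mpr ⟨hτ₁R, hZ1⟩
        rw [h] at this; exact absurd this (Finset.notMem_empty _)
    · have he1 : e.1 ∈ Z'' := by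
        by_contra h1; exact hcr' ⟨fun h => absurd h h1, fun h => absurd h he2⟩
      have hW : e.2 ∈ Z''ᶜ ∧ e.1 ∉ Z''ᶜ ∧ (crs E Z''ᶜ).card = 2 := by
        refine ⟨Finset.mem_compl.mpr he2, by simp [Finset.mem_compl, he1], ?_⟩
        rw [crs_compl]; exact hZc
      rcases hRZ _ hW with h | h
      · exact (Finset.mem_compl.mp (h hτ₁R)) hZ1
      · have : τ₂ ∈ R ∩ Z''ᶜ :=
          Finset.mem_inter.mpr ⟨hτ₂R, Finset.mem_compl.mpr hZ2⟩
        rw [h] at this; exact absurd this (Finset.notMem_empty _)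
  -- orient so that e.1, e.2 are outside
  obtain ⟨Zs, he1s, he2s, hZsc, hor⟩ :
      ∃ Zs : Finset V, e.1 ∉ Zs ∧ e.2 ∉ Zs ∧ (crs E Zs).card = 2 ∧
        ((τ₁ ∈ Zs ∧ τ₂ ∉ Zs) ∨ (τ₂ ∈ Zs ∧ τ₁ ∉ Zs)) := by
    by_cases h1 : e.1 ∈ Z''
    · refine ⟨Z''ᶜ, by simp [Finset.mem_compl, h1], by simp [Finset.mem_compl, hsame.mp h1], ?_, ?_⟩
      · rw [crs_compl]; exact hZc
      · right; exact ⟨Finset.mem_compl.mpr hZ2, by simp [Finset.mem_compl, hZ1]⟩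
    · exact ⟨Z'', h1, fun h2 => h1 (hsame.mpr h2), hZc, Or.inl ⟨hZ1, hZ2⟩⟩
  -- main core argument, symmetric in the two boundary edges
  have core : ∀ (gp gq : V × V) (p q op oq : V),
      crs E R = gp ::ₘ {gq} → p ∈ R → q ∈ R → op ∉ R → oq ∉ R →
      (gp = (p, op) ∨ gp = (op, p)) → (gq = (q, oq) ∨ gq = (oq, q)) →
      (gp = e ∨ ∃ W : Finset V,
        (e.2 ∈ W ∧ e.1 ∉ W ∧ (crs E W).card = 2) ∧ crs E W = e ::ₘ {gp}) →
      p ∈ Zs → q ∉ Zs → False := by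
    intro gp gq p q op oq hcrR' hpR hqR hopR hoqR hgp hgq hWp hpZs hqZs
    -- gp ≠ e
    have hgpe : gp ≠ e := by
      intro hh
      rcases hgp with h | h <;> rw [hh] at h
      · apply he1s; rw [h]; exact hpZs
      · apply he2s; rw [h]; exact hpZs
    obtain ⟨W, hPW, hcrW⟩ := hWp.resolve_left hgpe
    -- counts
    have hgpE : gp ∈ E := by
      have : gp ∈ crs E R := by rw [hcrR']; exact Multiset.mem_cons_self _ _
      exact (mem_crs.mp this).1
    have hcntp : E.count gp = 1 := by
      have h1 : (crs E W).count gp = 1 := by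
        rw [hcrW]
        simp [Multiset.count_cons, Multiset.count_singleton, hgpe]
      rw [count_crs] at h1
      by_cases hc : cross gp W
      · rw [if_pos hc] at h1; exact h1
      · rw [if_neg hc] at h1; omega
    -- the set A
    set A := Zs ∩ R with hAdef
    have hpA : p ∈ A := Finset.mem_inter.mpr ⟨hpZs, hpR⟩
    have hqA : q ∉ A := fun hq => hqZs (Finset.mem_inter.mp hq).1
    have he1A : e.1 ∉ A := fun h => he1s (Finset.mem_inter.mp h).1
    have he2A : e.2 ∉ A := fun h => he2s (Finset.mem_inter.mp h).1
    have hAcard : (crs E A).card = 2 := by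
      have hsub := crs_submod E Zs R
      have hRcard : (crs E R).card = 2 := by rw [hcrR']; simp
      have hAge : 2 ≤ (crs E A).card := by
        apply hA A ⟨p, hpA⟩ (ne_univ_of_notMem hqA)
      have hUge : 2 ≤ (crs E (Zs ∪ R)).card := by
        apply hA _ ⟨p, Finset.mem_union_left _ hpZs⟩
        rcases hab with h | h
        · exact ne_univ_of_notMem (v := e.1) (by simp [Finset.mem_union, he1s, h])
        · exact ne_univ_of_notMem (v := e.2) (by simp [Finset.mem_union, he2s, h])
      rw [hZsc, hRcard, ← hAdef] at hsub
      omega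
    -- gp crosses A
    have hgpA : cross gp A := by
      rcases hgp with h | h <;> rw [h]
      · exact Or.inl ⟨hpA, fun hc => hopR (Finset.mem_inter.mp hc).2⟩
      · exact Or.inr ⟨hpA, fun hc => hopR (Finset.mem_inter.mp hc).2⟩
    obtain ⟨s, hcrA, hsgp⟩ := pairext hgpE hgpA hcntp hAcard
    have hsE : s ∈ E ∧ cross s A := mem_crs.mp (by rw [hcrA]; simp)
    have hse : s ≠ e := by
      intro hh
      rcases hsE.2 with h | h
      · exact he1A (by rw [hh] at h; exact h.1)
      · exact he2A (by rw [hh] at h; exact h.1)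
    have hsgq : ¬ cross gq A := by
      intro hc
      rcases hgq with h | h <;> rw [h] at hc <;> rcases hc with hc | hc
      · exact hqA hc.1
      · exact hoqR (Finset.mem_inter.mp hc.1).2
      · exact hoqR (Finset.mem_inter.mp hc.1).2
      · exact hqA hc.1
    have hsZs : cross s Zs := by
      rcases cross_inter hsE.2 with h | h
      · exact h
      · exfalso
        have : s ∈ crs E R := mem_crs.mpr ⟨hsE.1, h⟩
        rw [hcrR'] at this
        simp only [Multiset.mem_cons, Multiset.mem_singleton] at this
        rcases this with h' | h'
        · exact hsgp h'
        · exact hsgq (h' ▸ hsE.2)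
    have hscnt : E.count s = 1 := by
      have h1 : (crs E A).count s = 1 := by
        rw [hcrA]
        simp [Multiset.count_cons, Multiset.count_singleton, hsgp]
      rw [count_crs, if_pos hsE.2] at h1
      exact h1
    -- Wd := sd W A is in the family with partner s
    set Wd := sd W A with hWddef
    have hcrWd : crs E Wd = e ::ₘ {s} :=
      crs_sd_pair hcrW hcrA (fun h => hgpe h.symm) hsgp (fun h => hse h.symm)
        hcnt hscnt
    have hPWd : e.2 ∈ Wd ∧ e.1 ∉ Wd ∧ (crs E Wd).card = 2 := by
      refine ⟨mem_sd.mpr (Or.inl ⟨hPW.1, he2A⟩), ?_, by rw [hcrWd]; simp⟩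
      intro h
      rcases mem_sd.mp h with h' | h'
      · exact hPW.2.1 h'.1
      · exact he1A h'.1
    -- I := sd W Wd has the same crossing edges as A
    have hcrW' : crs E W = gp ::ₘ {e} := by
      rw [hcrW]; exact Multiset.cons_swap _ _ _
    have hcrI : crs E (sd W Wd) = gp ::ₘ {s} :=
      crs_sd_pair hcrW' hcrWd hgpe hse hsgp.symm hcntp hscnt
    have hAI : A = sd W Wd ∨ A = (sd W Wd)ᶜ := by
      apply crs_eq_cases (fun S h1 h2 => le_trans (by norm_num) (hA S h1 h2))
      rw [hcrA, hcrI]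
    rcases hAI with hAI | hAI
    · -- A = I : derive contradiction via comparability of R with W and Wd
      rcases hRZ W hPW with hRW | hRW <;> rcases hRZ Wd hPWd with hRWd | hRWd
      · -- R ⊆ W, R ⊆ Wd : p ∉ sd W Wd
        have : p ∉ sd W Wd := by
          intro h
          rcases mem_sd.mp h with h' | h'
          · exact h'.2 (hRWd hpR)
          · exact h'.2 (hRW hpR)
        rw [← hAI] at this; exact this hpA
      · -- R ⊆ W, R ∩ Wd = ∅ : q ∈ sd W Wd = A
        have hq : q ∈ sd W Wd := by
          apply mem_sd.mpr (Or.inl ⟨hRW hqR, ?_⟩)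
          intro h
          have : q ∈ R ∩ Wd := Finset.mem_inter.mpr ⟨hqR, h⟩
          rw [hRWd] at this; exact absurd this (Finset.notMem_empty _)
        rw [← hAI] at hq; exact hqA hq
      · -- R ∩ W = ∅, R ⊆ Wd : q ∈ sd W Wd = A
        have hq : q ∈ sd W Wd := by
          apply mem_sd.mpr (Or.inr ⟨hRWd hqR, ?_⟩)
          intro h
          have : q ∈ R ∩ W := Finset.mem_inter.mpr ⟨hqR, h⟩
          rw [hRW] at this; exact absurd this (Finset.notMem_empty _)
        rw [← hAI] at hq; exact hqA hq
      · -- R ∩ W = ∅, R ∩ Wd = ∅ : p ∉ sd W Wd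
        have : p ∉ sd W Wd := by
          intro h
          rcases mem_sd.mp h with h' | h'
          · have : p ∈ R ∩ W := Finset.mem_inter.mpr ⟨hpR, h'.1⟩
            rw [hRW] at this; exact absurd this (Finset.notMem_empty _)
          · have : p ∈ R ∩ Wd := Finset.mem_inter.mpr ⟨hpR, h'.1⟩
            rw [hRWd] at this; exact absurd this (Finset.notMem_empty _)
        rw [← hAI] at this; exact this hpA
    · -- A = Iᶜ : e.2 ∈ A, contradiction
      have h2I : e.2 ∉ sd W Wd := by
        intro h
        rcases mem_sd.mp h with h' | h'
        · exact h'.2 hPWd.1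
        · exact h'.2 hPW.1
      have : e.2 ∈ A := by rw [hAI]; exact Finset.mem_compl.mpr h2I
      exact he2A this
  -- apply the core in the two orientations
  rcases hor with h | h
  · exact core g₁ g₂ τ₁ τ₂ o₁ o₂ hcrR hτ₁R hτ₂R ho₁R ho₂R hg₁ hg₂ hW₁ h.1 h.2
  · exact core g₂ g₁ τ₂ τ₁ o₂ o₁ (by rw [hcrR]; exact Multiset.cons_swap _ _ _)
      hτ₂R hτ₁R ho₂R ho₁R hg₂ hg₁ hW₂ h.1 h.2

end Stmt11Aux

open Stmt11Aux in
/-- For a cactus `G` and `F ⊆ E(G)`: doubling all edges of `F` yields a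
3-edge-connected graph iff the spanning subgraph `(V(G), F)` is connected. -/
theorem stmt_11 {V : Type*} [Fintype V] [Nonempty V] (E F : Multiset (V × V))
    (hF : F ≤ E)
    (hcactus : ∀ u v : V, u ≠ v → lam E u v = 2) :
    EdgeConn 3 (E + F) ↔ MConnected F := by
  have hA : ∀ S : Finset V, S.Nonempty → S ≠ Finset.univ → 2 ≤ (crs E S).card := by
    intro S hS hSu
    obtain ⟨u, hu⟩ := hS
    obtain ⟨v, hv⟩ : ∃ v, v ∉ S := by
      by_contra hv; push_neg at hv
      exact hSu (Finset.eq_univ_iff_forall.mpr hv)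
    have huv : u ≠ v := fun h => hv (h ▸ hu)
    have h2 := hcactus u v huv
    have hle : lam E u v ≤ edgesCross E S := Nat.sInf_le ⟨S, hu, hv, rfl⟩
    rw [h2, edgesCross_eq] at hle
    exact hle
  have hB : ∀ u v : V, u ≠ v → ∃ Z : Finset V, u ∈ Z ∧ v ∉ Z ∧ (crs E Z).card = 2 := by
    intro u v huv
    have hne : {n | ∃ X : Finset V, u ∈ X ∧ v ∉ X ∧ edgesCross E X = n}.Nonempty :=
      ⟨edgesCross E {u}, {u}, Finset.mem_singleton_self u,
        by simp only [Finset.mem_singleton]; exact fun h => huv h.symm, rfl⟩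
    have hmem := Nat.sInf_mem hne
    rw [show sInf {n | ∃ X : Finset V, u ∈ X ∧ v ∉ X ∧ edgesCross E X = n} = lam E u v
      from rfl, hcactus u v huv] at hmem
    obtain ⟨Z, hu', hv', hZ⟩ := hmem
    exact ⟨Z, hu', hv', by rw [← edgesCross_eq]; exact hZ⟩
  constructor
  · -- hard direction
    intro hEC X hXne hXu
    by_contra h0
    have hF0 : (crs F X).card = 0 := by
      rw [← edgesCross_eq]; omega
    have hFnc : ∀ g ∈ F, ¬ cross g X := by
      intro g hg hc
      have hm : g ∈ crs F X := mem_crs.mpr ⟨hg, hc⟩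
      have := Multiset.card_pos_iff_exists_mem.mpr ⟨g, hm⟩
      omega
    have hEF3 : ∀ S : Finset V, S.Nonempty → S ≠ Finset.univ →
        3 ≤ (crs E S).card + (crs F S).card := by
      intro S h1 h2
      have h3 := hEC S h1 h2
      rw [edgesCross_add, edgesCross_eq, edgesCross_eq] at h3
      exact h3
    obtain ⟨e, heX⟩ : ∃ e, e ∈ crs E X := by
      have := hA X hXne hXu
      exact Multiset.card_pos_iff_exists_mem.mp (by omega)
    obtain ⟨heE, hecr⟩ := mem_crs.mp heX
    have hecr' : (e.1 ∈ X ∧ e.2 ∉ X) ∨ (e.2 ∈ X ∧ e.1 ∉ X) := hecr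
    have heF : e ∉ F := fun h => hFnc e h hecr
    have he12 : e.1 ≠ e.2 := by
      rcases hecr' with h | h <;> intro hh <;> rw [hh] at h <;> tauto
    obtain ⟨Z₀, hZ01, hZ02, hZ0c⟩ := hB e.2 e.1 (Ne.symm he12)
    have heEc : 0 < E.count e := Multiset.count_pos.mpr heE
    by_cases hcnt1 : E.count e = 1
    · -- main case : e has multiplicity 1
      have hpart : ∀ Z : Finset V, (e.2 ∈ Z ∧ e.1 ∉ Z ∧ (crs E Z).card = 2) →
          ∃ h : V × V, ∃ u w : V,
            crs E Z = e ::ₘ {h} ∧ h ≠ e ∧ E.count h = 1 ∧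
            (h = (u, w) ∨ h = (w, u)) ∧ u ∈ Z ∧ w ∉ Z ∧ ((u ∈ X) ↔ (w ∈ X)) := by
        intro Z hPZ
        obtain ⟨h2Z, h1Z, hcZ⟩ := hPZ
        have hecrZ : cross e Z := Or.inr ⟨h2Z, h1Z⟩
        obtain ⟨h, hcr, hhe⟩ := pairext heE hecrZ hcnt1 hcZ
        have hhcr : h ∈ E ∧ cross h Z := mem_crs.mp (by rw [hcr]; simp)
        have hhcnt : E.count h = 1 := by
          have h1 : (crs E Z).count h = 1 := by
            rw [hcr]; simp [Multiset.count_cons, Multiset.count_singleton, hhe]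
          rw [count_crs, if_pos hhcr.2] at h1
          exact h1
        have hhF : h ∈ F := by
          have h3 := hEF3 Z ⟨e.2, h2Z⟩ (ne_univ_of_notMem h1Z)
          obtain ⟨φ, hφ⟩ := Multiset.card_pos_iff_exists_mem.mp
            (show 0 < (crs F Z).card by omega)
          obtain ⟨hφF, hφc⟩ := mem_crs.mp hφ
          have hφE : φ ∈ E := Multiset.mem_of_le hF hφF
          have hm : φ ∈ crs E Z := mem_crs.mpr ⟨hφE, hφc⟩
          rw [hcr] at hm
          simp only [Multiset.mem_cons, Multiset.mem_singleton] at hm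
          rcases hm with h' | h'
          · exfalso; rw [h'] at hφF; exact heF hφF
          · rw [← h']; exact hφF
        have hhnX : ¬ ((h.1 ∈ X ∧ h.2 ∉ X) ∨ (h.2 ∈ X ∧ h.1 ∉ X)) := hFnc h hhF
        have hcc : (h.1 ∈ Z ∧ h.2 ∉ Z) ∨ (h.2 ∈ Z ∧ h.1 ∉ Z) := hhcr.2
        rcases hcc with h' | h'
        · exact ⟨h, h.1, h.2, hcr, hhe, hhcnt, Or.inl rfl, h'.1, h'.2, by tauto⟩
        · exact ⟨h, h.2, h.1, hcr, hhe, hhcnt, Or.inr rfl, h'.1, h'.2, by tauto⟩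
      choose hp up wp hcrp hnep hcntp hendp hup hwp hiffp using hpart
      -- the family of 2-cuts through e is a chain
      have hchain : ∀ Z Z' : Finset V,
          (e.2 ∈ Z ∧ e.1 ∉ Z ∧ (crs E Z).card = 2) →
          (e.2 ∈ Z' ∧ e.1 ∉ Z' ∧ (crs E Z').card = 2) →
          Z ⊆ Z' ∨ Z' ⊆ Z := by
        have hconc : ∀ W W' : Finset V,
            (e.2 ∈ W ∧ e.1 ∉ W ∧ (crs E W).card = 2) →
            crs E (W ∩ W') = crs E W → W ⊆ W' := by
          intro W W' hW hcc
          rcases crs_eq_cases (fun S h1 h2 => le_trans (by norm_num) (hA S h1 h2))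
              hcc with h | h
          · rw [← h]; exact Finset.inter_subset_right
          · exfalso
            have hm : e.1 ∈ W ∩ W' := by rw [h]; exact Finset.mem_compl.mpr hW.2.1
            exact hW.2.1 (Finset.mem_inter.mp hm).1
        intro Z Z' hZ hZ'
        have h2i : e.2 ∈ Z ∩ Z' := Finset.mem_inter.mpr ⟨hZ.1, hZ'.1⟩
        have h1i : e.1 ∉ Z ∩ Z' := fun h => hZ.2.1 (Finset.mem_inter.mp h).1
        have h1u : e.1 ∉ Z ∪ Z' := by
          intro h; rcases Finset.mem_union.mp h with h | h
          · exact hZ.2.1 h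
          · exact hZ'.2.1 h
        have hicard : (crs E (Z ∩ Z')).card = 2 := by
          have hsub := crs_submod E Z Z'
          have hi := hA _ ⟨e.2, h2i⟩ (ne_univ_of_notMem h1i)
          have hu := hA _ ⟨e.2, Finset.mem_union_left _ hZ.1⟩ (ne_univ_of_notMem h1u)
          rw [hZ.2.2, hZ'.2.2] at hsub
          omega
        have hecri : cross e (Z ∩ Z') := Or.inr ⟨h2i, h1i⟩
        obtain ⟨s, hcri, hsne⟩ := pairext heE hecri hcnt1 hicard
        have hsmem : s ∈ E ∧ cross s (Z ∩ Z') := mem_crs.mp (by rw [hcri]; simp)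
        rcases cross_inter hsmem.2 with hs | hs
        · left
          apply hconc Z Z' hZ
          rw [hcri, hcrp Z hZ]
          congr 1
          have hm : s ∈ crs E Z := mem_crs.mpr ⟨hsmem.1, hs⟩
          rw [hcrp Z hZ] at hm
          simp only [Multiset.mem_cons, Multiset.mem_singleton] at hm
          rcases hm with h' | h'
          · exact absurd h' hsne
          · rw [h']
        · right
          apply hconc Z' Z hZ'
          rw [Finset.inter_comm, hcri, hcrp Z' hZ']
          congr 1
          have hm : s ∈ crs E Z' := mem_crs.mpr ⟨hsmem.1, hs⟩
          rw [hcrp Z' hZ'] at hm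
          simp only [Multiset.mem_cons, Multiset.mem_singleton] at hm
          rcases hm with h' | h'
          · exact absurd h' hsne
          · rw [h']
      -- minimum and maximum of the chain
      have hP0 : e.2 ∈ Z₀ ∧ e.1 ∉ Z₀ ∧ (crs E Z₀).card = 2 := ⟨hZ01, hZ02, hZ0c⟩
      have hmemfam : ∀ Z : Finset V,
          Z ∈ Finset.univ.filter
            (fun Z : Finset V => e.2 ∈ Z ∧ e.1 ∉ Z ∧ (crs E Z).card = 2) ↔
          (e.2 ∈ Z ∧ e.1 ∉ Z ∧ (crs E Z).card = 2) := by
        intro Z; simp [Finset.mem_filter]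
      obtain ⟨Zmin, hZminmem, hminle⟩ := Finset.exists_min_image
        (Finset.univ.filter (fun Z : Finset V => e.2 ∈ Z ∧ e.1 ∉ Z ∧ (crs E Z).card = 2))
        Finset.card ⟨Z₀, (hmemfam Z₀).mpr hP0⟩
      obtain ⟨Zmax, hZmaxmem, hmaxle⟩ := Finset.exists_max_image
        (Finset.univ.filter (fun Z : Finset V => e.2 ∈ Z ∧ e.1 ∉ Z ∧ (crs E Z).card = 2))
        Finset.card ⟨Z₀, (hmemfam Z₀).mpr hP0⟩
      have hPmin := (hmemfam Zmin).mp hZminmem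
      have hPmax := (hmemfam Zmax).mp hZmaxmem
      have hminsub : ∀ Z, (e.2 ∈ Z ∧ e.1 ∉ Z ∧ (crs E Z).card = 2) → Zmin ⊆ Z := by
        intro Z hZ
        rcases hchain Zmin Z hPmin hZ with h | h
        · exact h
        · have hle := hminle Z ((hmemfam Z).mpr hZ)
          have heq := Finset.eq_of_subset_of_card_le h hle
          rw [heq]
      have hmaxsub : ∀ Z, (e.2 ∈ Z ∧ e.1 ∉ Z ∧ (crs E Z).card = 2) → Z ⊆ Zmax := by
        intro Z hZ
        rcases hchain Z Zmax hZ hPmax with h | h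
        · exact h
        · have hle := hmaxle Z ((hmemfam Z).mpr hZ)
          have heq := Finset.eq_of_subset_of_card_le h hle
          rw [heq]
      -- path of equalities along the chain
      have hMAIN : ∀ n : ℕ, ∀ Z : Finset V,
          ∀ hPZ : (e.2 ∈ Z ∧ e.1 ∉ Z ∧ (crs E Z).card = 2),
          Z.card = n → ((up Z hPZ ∈ X) ↔ (e.2 ∈ X)) := by
        intro n
        induction n using Nat.strong_induction_on with
        | _ n ih =>
          intro Z hPZ hcard
          by_cases hmin : Z = Zmin
          · have hco := coincide E e hA hB hcnt1 Z e (hp Z hPZ)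
              e.2 (up Z hPZ) e.1 (wp Z hPZ)
              (hcrp Z hPZ) hPZ.1 (hup Z hPZ) hPZ.2.1 (hwp Z hPZ)
              (Or.inr rfl) (hendp Z hPZ) (Or.inl rfl)
              (Or.inr ⟨Z, hPZ, hcrp Z hPZ⟩)
              (fun W hW => Or.inl (by rw [hmin]; exact hminsub W hW))
              (Or.inl hPZ.2.1)
            rw [← hco]
          · -- predecessor
            have hss : Zmin ⊂ Z :=
              Finset.ssubset_iff_subset_ne.mpr ⟨hminsub Z hPZ, fun h => hmin h.symm⟩
            obtain ⟨Zp, hZpmem, hZple⟩ := Finset.exists_max_image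
              ((Finset.univ.filter
                (fun W : Finset V => e.2 ∈ W ∧ e.1 ∉ W ∧ (crs E W).card = 2)).filter
                (fun W => W ⊂ Z))
              Finset.card ⟨Zmin, Finset.mem_filter.mpr ⟨hZminmem, hss⟩⟩
            have hZpm := Finset.mem_filter.mp hZpmem
            have hPZp := (hmemfam Zp).mp hZpm.1
            have hZpss : Zp ⊂ Z := hZpm.2
            have hpredmax : ∀ W, (e.2 ∈ W ∧ e.1 ∉ W ∧ (crs E W).card = 2) →
                W ⊂ Z → W ⊆ Zp := by
              intro W hW hWss
              have hcle : W.card ≤ Zp.card := hZple W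
                (Finset.mem_filter.mpr ⟨(hmemfam W).mpr hW, hWss⟩)
              rcases hchain W Zp hW hPZp with h | h
              · exact h
              · have heq := Finset.eq_of_subset_of_card_le h hcle
                rw [← heq]
            have hadj : ∀ W, (e.2 ∈ W ∧ e.1 ∉ W ∧ (crs E W).card = 2) →
                Zp ⊂ W → Z ⊆ W := by
              intro W hW hssW
              rcases hchain W Z hW hPZ with h | h
              · by_cases hWZ : W = Z
                · rw [← hWZ]
                · exact absurd (hpredmax W hW
                    (Finset.ssubset_iff_subset_ne.mpr ⟨h, hWZ⟩)) hssW.2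
              · exact h
            -- partners of Z and Zp are different
            have hdiffZ : hp Z hPZ ≠ hp Zp hPZp := by
              intro hhh
              have hceq : crs E Z = crs E Zp := by
                rw [hcrp Z hPZ, hcrp Zp hPZp, hhh]
              rcases crs_eq_cases (fun S h1 h2 => le_trans (by norm_num) (hA S h1 h2))
                  hceq with h | h
              · exact lt_irrefl Zp (h ▸ hZpss)
              · have hm := hPZ.1
                rw [h] at hm
                exact (Finset.mem_compl.mp hm) hPZp.1
            have hZpE : hp Zp hPZp ∈ E ∧ cross (hp Zp hPZp) Zp :=
              mem_crs.mp (by rw [hcrp Zp hPZp]; simp)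
            have hZE : hp Z hPZ ∈ E ∧ cross (hp Z hPZ) Z :=
              mem_crs.mp (by rw [hcrp Z hPZ]; simp)
            have hwZpZ : wp Zp hPZp ∈ Z := by
              by_contra hw
              have hcrs : cross (hp Zp hPZp) Z := by
                rcases hendp Zp hPZp with h | h <;> rw [h]
                · exact Or.inl ⟨hZpss.subset (hup Zp hPZp), hw⟩
                · exact Or.inr ⟨hZpss.subset (hup Zp hPZp), hw⟩
              have hm : hp Zp hPZp ∈ crs E Z := mem_crs.mpr ⟨hZpE.1, hcrs⟩
              rw [hcrp Z hPZ] at hm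
              simp only [Multiset.mem_cons, Multiset.mem_singleton] at hm
              rcases hm with h' | h'
              · exact (hnep Zp hPZp) h'
              · exact hdiffZ h'.symm
            have huZZp : up Z hPZ ∉ Zp := by
              by_contra hu
              have hcrs : cross (hp Z hPZ) Zp := by
                rcases hendp Z hPZ with h | h <;> rw [h]
                · exact Or.inl ⟨hu, fun hc => hwp Z hPZ (hZpss.subset hc)⟩
                · exact Or.inr ⟨hu, fun hc => hwp Z hPZ (hZpss.subset hc)⟩
              have hm : hp Z hPZ ∈ crs E Zp := mem_crs.mpr ⟨hZE.1, hcrs⟩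
              rw [hcrp Zp hPZp] at hm
              simp only [Multiset.mem_cons, Multiset.mem_singleton] at hm
              rcases hm with h' | h'
              · exact (hnep Z hPZ) h'
              · exact hdiffZ h'
            -- the region between Zp and Z
            have hRdef : sd Z Zp = Z \ Zp := by
              have hd : Zp \ Z = ∅ := Finset.sdiff_eq_empty_iff_subset.mpr hZpss.subset
              rw [sd, hd, Finset.union_empty]
            have hcrR : crs E (Z \ Zp) = hp Z hPZ ::ₘ {hp Zp hPZp} := by
              rw [← hRdef]
              have h1 : crs E Z = hp Z hPZ ::ₘ {e} := by
                rw [hcrp Z hPZ]; exact Multiset.cons_swap _ _ _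
              exact crs_sd_pair h1 (hcrp Zp hPZp) (hnep Z hPZ) (hnep Zp hPZp)
                hdiffZ (hcntp Z hPZ) (hcntp Zp hPZp)
            have hRZ' : ∀ W : Finset V, (e.2 ∈ W ∧ e.1 ∉ W ∧ (crs E W).card = 2) →
                (Z \ Zp) ⊆ W ∨ (Z \ Zp) ∩ W = ∅ := by
              intro W hW
              rcases hchain W Zp hW hPZp with h | h
              · right
                apply Finset.eq_empty_iff_forall_notMem.mpr
                intro v hv
                obtain ⟨hv1, hv2⟩ := Finset.mem_inter.mp hv
                exact (Finset.mem_sdiff.mp hv1).2 (h hv2)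
              · by_cases hWZp : W = Zp
                · right
                  apply Finset.eq_empty_iff_forall_notMem.mpr
                  intro v hv
                  obtain ⟨hv1, hv2⟩ := Finset.mem_inter.mp hv
                  rw [hWZp] at hv2
                  exact (Finset.mem_sdiff.mp hv1).2 hv2
                · left
                  exact Finset.Subset.trans Finset.sdiff_subset
                    (hadj W hW (Finset.ssubset_iff_subset_ne.mpr ⟨h, fun hh => hWZp hh.symm⟩))
            have hco := coincide E e hA hB hcnt1 (Z \ Zp)
              (hp Z hPZ) (hp Zp hPZp)
              (up Z hPZ) (wp Zp hPZp) (wp Z hPZ) (up Zp hPZp)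
              hcrR
              (Finset.mem_sdiff.mpr ⟨hup Z hPZ, huZZp⟩)
              (Finset.mem_sdiff.mpr ⟨hwZpZ, hwp Zp hPZp⟩)
              (fun h => hwp Z hPZ (Finset.mem_sdiff.mp h).1)
              (fun h => (Finset.mem_sdiff.mp h).2 (hup Zp hPZp))
              (hendp Z hPZ) ((hendp Zp hPZp).symm)
              (Or.inr ⟨Z, hPZ, hcrp Z hPZ⟩)
              (Or.inr ⟨Zp, hPZp, hcrp Zp hPZp⟩)
              hRZ' (Or.inl (fun h => hPZ.2.1 (Finset.mem_sdiff.mp h).1))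
            have hIH := ih Zp.card (by rw [← hcard]; exact Finset.card_lt_card hZpss)
              Zp hPZp rfl
            rw [hco, ← hiffp Zp hPZp]
            exact hIH
      -- conclude with the maximal element
      have hMmax := hMAIN Zmax.card Zmax hPmax rfl
      have hcrRc : crs E Zmaxᶜ = e ::ₘ {hp Zmax hPmax} := by
        rw [crs_compl]; exact hcrp Zmax hPmax
      have hco := coincide E e hA hB hcnt1 Zmaxᶜ e (hp Zmax hPmax)
        e.1 (wp Zmax hPmax) e.2 (up Zmax hPmax)
        hcrRc (Finset.mem_compl.mpr hPmax.2.1) (Finset.mem_compl.mpr (hwp Zmax hPmax))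
        (fun h => (Finset.mem_compl.mp h) hPmax.1)
        (fun h => (Finset.mem_compl.mp h) (hup Zmax hPmax))
        (Or.inl rfl) ((hendp Zmax hPmax).symm)
        (Or.inl rfl) (Or.inr ⟨Zmax, hPmax, hcrp Zmax hPmax⟩)
        (fun W hW => Or.inr (by
          apply Finset.eq_empty_iff_forall_notMem.mpr
          intro v hv
          obtain ⟨hv1, hv2⟩ := Finset.mem_inter.mp hv
          exact (Finset.mem_compl.mp hv1) (hmaxsub W hW hv2)))
        (Or.inr (fun h => (Finset.mem_compl.mp h) hPmax.1))
      have hfin : (e.1 ∈ X) ↔ (e.2 ∈ X) := by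
        rw [hco, ← hiffp Zmax hPmax]
        exact hMmax
      rcases hecr' with h | h <;> tauto
    · -- e has multiplicity at least 2
      have hecrZ : cross e Z₀ := Or.inr ⟨hZ01, hZ02⟩
      have hcount : 2 ≤ (crs E Z₀).count e := by
        rw [count_crs, if_pos hecrZ]; omega
      have hceq : (crs E Z₀).count e = (crs E Z₀).card := by
        have hle := Multiset.count_le_card e (crs E Z₀)
        omega
      have hall := Multiset.count_eq_card.mp hceq
      have hFZ0 : (crs F Z₀).card = 0 := by
        rw [Multiset.card_eq_zero, Multiset.eq_zero_iff_forall_notMem]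
        intro g hg
        obtain ⟨hgF, hgc⟩ := mem_crs.mp hg
        have hgE : g ∈ E := Multiset.mem_of_le hF hgF
        have hge := hall g (mem_crs.mpr ⟨hgE, hgc⟩)
        rw [← hge] at hgF
        exact heF hgF
      have h3 := hEF3 Z₀ ⟨e.2, hZ01⟩ (ne_univ_of_notMem hZ02)
      omega
  · intro hM S hS hSu
    rw [edgesCross_add, edgesCross_eq]
    have h2 := hA S hS hSu
    have h1 := hM S hS hSu
    omega
end

section
/- Let G be a 2-edge-connected graph, w̄ : E(G) → ℝ≥0 a weight function, and k a real number. Let Q_G be the quotient of G by the equivalence relation u ∼ v iff λ_G(u,v) ≥ 3, with induced weight function w on E(Q_G). Then G can be made 3-edge-connected by doubling a set F̄ of edges with w̄(F̄) ≤ k if and only if Q_G can be made 3-edge-connected by doubling a set F of edges with w(F) ≤ k. -/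
open scoped Classical

lemma edgesCross_add {V : Type*} (M N : Multiset (V × V)) (X : Finset V) :
    edgesCross (M + N) X = edgesCross M X + edgesCross N X := by
  unfold edgesCross
  rw [Multiset.filter_add, Multiset.card_add]

lemma edgesCross_mono {V : Type*} {M N : Multiset (V × V)} (h : M ≤ N) (X : Finset V) :
    edgesCross M X ≤ edgesCross N X :=
  Multiset.card_le_card (Multiset.filter_le_filter _ h)

/-- Crossing edge counts are preserved under a vertex map matching the cuts. -/
lemma edgesCross_map {V W : Type*} (f : V → W) (M : Multiset (V × V))
    (Y : Finset W) (X : Finset V) (h : ∀ v, f v ∈ Y ↔ v ∈ X) :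
    edgesCross (M.map (fun e => (f e.1, f e.2))) Y = edgesCross M X := by
  unfold edgesCross
  rw [Multiset.filter_map, Multiset.card_map]
  exact congrArg Multiset.card (Multiset.filter_congr (fun e _ => by simp [h]))

/-- If every crossing edge satisfies `p`, filtering by `p` keeps the crossing count. -/
lemma edgesCross_filter {V : Type*} (p : V × V → Prop) [DecidablePred p] (M : Multiset (V × V)) (X : Finset V)
    (h : ∀ e ∈ M, ((e.1 ∈ X ∧ e.2 ∉ X) ∨ (e.2 ∈ X ∧ e.1 ∉ X)) → p e) :
    edgesCross (M.filter p) X = edgesCross M X := by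
  unfold edgesCross
  rw [Multiset.filter_filter]
  exact congrArg Multiset.card
    (Multiset.filter_congr (fun e he => ⟨fun hc => hc.1, fun hc => ⟨hc, h e he hc⟩⟩))

lemma lam_le_edgesCross {V : Type*} (E : Multiset (V × V)) {u v : V} {X : Finset V}
    (hu : u ∈ X) (hv : v ∉ X) : lam E u v ≤ edgesCross E X :=
  Nat.sInf_le ⟨X, hu, hv, rfl⟩

lemma sum_map_le_sum_map {V : Type*} (w : V × V → NNReal) {F' F : Multiset (V × V)}
    (h : F' ≤ F) : (F'.map w).sum ≤ (F.map w).sum := by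
  obtain ⟨u, rfl⟩ := Multiset.le_iff_exists_add.mp h
  rw [Multiset.map_add, Multiset.sum_add]
  exact le_self_add

/-- For a 2-edge-connected weighted graph `G` and its quotient `Q_G` by the relation
`u ∼ v ↔ λ_G(u,v) ≥ 3` (edges of `Q_G` being the edges of `G` joining distinct classes,
with induced weights): `G` can be made 3-edge-connected by doubling an edge set of
weight at most `k` iff `Q_G` can. -/
theorem stmt_12 {V : Type*} [Fintype V] (E : Multiset (V × V))
    (w : V × V → NNReal) (k : NNReal)
    (h2ec : ∀ u v : V, u ≠ v → 2 ≤ lam E u v)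
    (s : Setoid V) (hs : ∀ u v : V, s.r u v ↔ (u = v ∨ 3 ≤ lam E u v)) :
    (∃ F ≤ E, (F.map w).sum ≤ k ∧ EdgeConn 3 (E + F)) ↔
      (∃ F ≤ E.filter (fun e => ¬ s.r e.1 e.2), (F.map w).sum ≤ k ∧
        EdgeConn 3
          ((E.filter fun e => ¬ s.r e.1 e.2).map
              (fun e => (Quotient.mk s e.1, Quotient.mk s e.2))
            + F.map fun e => (Quotient.mk s e.1, Quotient.mk s e.2))) := by
  constructor
  · -- forward direction
    rintro ⟨F, hFE, hFw, hF3⟩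
    refine ⟨F.filter (fun e => ¬ s.r e.1 e.2), Multiset.filter_le_filter _ hFE,
      le_trans (sum_map_le_sum_map w (Multiset.filter_le _ _)) hFw, ?_⟩
    intro Y hYne hYuniv
    -- the preimage cut
    set X : Finset V := Finset.univ.filter (fun v => Quotient.mk s v ∈ Y) with hX
    have hmem : ∀ v : V, Quotient.mk s v ∈ Y ↔ v ∈ X := by
      intro v; simp [hX]
    -- X is saturated
    have hsat : ∀ u v : V, s.r u v → (u ∈ X ↔ v ∈ X) := by
      intro u v huv
      rw [← hmem, ← hmem, Quotient.sound huv]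
    have hXne : X.Nonempty := by
      obtain ⟨q, hq⟩ := hYne
      obtain ⟨v, rfl⟩ := q.exists_rep
      exact ⟨v, (hmem v).mp hq⟩
    have hXuniv : X ≠ Finset.univ := by
      obtain ⟨q, hq⟩ := not_forall.mp (Finset.eq_univ_iff_forall.not.mp hYuniv)
      obtain ⟨v, rfl⟩ := q.exists_rep
      intro h
      exact hq ((hmem v).mpr (h ▸ Finset.mem_univ v))
    have key := hF3 X hXne hXuniv
    rw [edgesCross_add] at key
    have hE' : edgesCross (E.filter fun e => ¬ s.r e.1 e.2) X = edgesCross E X := by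
      refine edgesCross_filter _ E X ?_
      rintro e _ (⟨h1, h2⟩ | ⟨h1, h2⟩) hr
      · exact h2 ((hsat e.1 e.2 hr).mp h1)
      · exact h2 ((hsat e.1 e.2 hr).mpr h1)
    have hF' : edgesCross (F.filter fun e => ¬ s.r e.1 e.2) X = edgesCross F X := by
      refine edgesCross_filter _ F X ?_
      rintro e _ (⟨h1, h2⟩ | ⟨h1, h2⟩) hr
      · exact h2 ((hsat e.1 e.2 hr).mp h1)
      · exact h2 ((hsat e.1 e.2 hr).mpr h1)
    rw [edgesCross_add,
      edgesCross_map (Quotient.mk s) _ Y X hmem,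
      edgesCross_map (Quotient.mk s) _ Y X hmem, hE', hF']
    exact key
  · -- backward direction
    rintro ⟨F, hFE, hFw, hF3⟩
    have hFE' : F ≤ E := le_trans hFE (Multiset.filter_le _ _)
    refine ⟨F, hFE', hFw, ?_⟩
    intro X hXne hXuniv
    rw [edgesCross_add]
    by_cases hsat : ∀ u ∈ X, ∀ v ∉ X, ¬ s.r u v
    · -- saturated cut: use quotient connectivity
      set Y : Finset (Quotient s) := X.image (Quotient.mk s) with hY
      have hmem : ∀ v : V, Quotient.mk s v ∈ Y ↔ v ∈ X := by
        intro v
        constructor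
        · intro hv
          obtain ⟨u, hu, huv⟩ := Finset.mem_image.mp hv
          rcases (hs u v).mp (Quotient.exact huv) with rfl | _
          · exact hu
          · by_contra hvX
            exact hsat u hu v hvX (Quotient.exact huv)
        · intro hv; exact Finset.mem_image_of_mem _ hv
      have hYne : Y.Nonempty := hXne.image _
      have hYuniv : Y ≠ Finset.univ := by
        obtain ⟨v, hv⟩ := not_forall.mp (Finset.eq_univ_iff_forall.not.mp hXuniv)
        intro h
        exact hv ((hmem v).mp (h ▸ Finset.mem_univ (Quotient.mk s v)))
      have key := hF3 Y hYne hYuniv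
      rw [edgesCross_add, edgesCross_map (Quotient.mk s) _ Y X hmem,
        edgesCross_map (Quotient.mk s) _ Y X hmem] at key
      calc 3 ≤ edgesCross (E.filter fun e => ¬ s.r e.1 e.2) X + edgesCross F X := key
        _ ≤ edgesCross E X + edgesCross F X := by
            exact Nat.add_le_add_right (edgesCross_mono (Multiset.filter_le _ _) X) _
    · -- non-saturated cut: a 3-connected pair is separated
      push_neg at hsat
      obtain ⟨u, hu, v, hv, hr⟩ := hsat
      rcases (hs u v).mp hr with rfl | hlam
      · exact absurd hu hv
      · have := le_trans hlam (lam_le_edgesCross E hu hv)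
        exact le_trans this (Nat.le_add_right _ _)
end

section
/- Let M be a mixed graph that is k-strong in a vertex subset S (i.e., for any two vertices s1, s2 ∈ S there are k internally vertex-disjoint paths from s1 to s2 in M), and let v ∈ V(M) − S. Suppose there are k paths P1, ..., Pk from v to vertices s1, ..., sk ∈ S pairwise intersecting only in v, and k paths P'1, ..., P'k from vertices s'1, ..., s'k ∈ S to v pairwise intersecting only in v. Then M is k-strong in S ∪ {v}. -/
open scoped Classical

/-- One step in a mixed graph `(V, E, A)`: traverse an arc forward or an edge in
either direction. -/
def MStep {V : Type*} (E A : Multiset (V × V)) (x y : V) : Prop :=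
  (x, y) ∈ A ∨ (x, y) ∈ E ∨ (y, x) ∈ E

/-- `p` is a path from `a` to `b` in the mixed graph `(V, E, A)`: a nonempty list of
pairwise distinct vertices, starting at `a`, ending at `b`, with consecutive vertices
joined by an arc (forward) or an edge. -/
def IsMPath {V : Type*} (E A : Multiset (V × V)) (a b : V) (p : List V) : Prop :=
  p.Chain' (MStep E A) ∧ p.head? = some a ∧ p.getLast? = some b ∧ p.Nodup

/-- The mixed graph `(V, E, A)` is `k`-strong in the vertex set `S`: any two vertices
of `S` are joined by `k` paths that pairwise meet only in the endpoints. -/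
def KStrongIn {V : Type*} (E A : Multiset (V × V)) (k : ℕ) (S : Set V) : Prop :=
  ∀ s₁ ∈ S, ∀ s₂ ∈ S, ∃ P : Fin k → List V,
    (∀ i, IsMPath E A s₁ s₂ (P i)) ∧
    ∀ i j, i ≠ j → ∀ x, x ∈ P i → x ∈ P j → x = s₁ ∨ x = s₂

@[simp] theorem chain'_eq_isChain {V : Type*} {R : V → V → Prop} {l : List V} :
    l.Chain' R ↔ l.IsChain R := Iff.rfl

namespace MGaux

variable {V : Type*}

/-- Walk for a relation: chain list with given first and last element. -/
def IsWalk (R : V → V → Prop) (a b : V) (p : List V) : Prop :=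
  p.Chain' R ∧ p.head? = some a ∧ p.getLast? = some b

def IsPath (R : V → V → Prop) (a b : V) (p : List V) : Prop :=
  IsWalk R a b p ∧ p.Nodup

theorem IsPath.ne_nil {R : V → V → Prop} {a b : V} {p : List V} (h : IsPath R a b p) :
    p ≠ [] := by
  rintro rfl; simpa using h.1.2.1

theorem IsWalk.ne_nil {R : V → V → Prop} {a b : V} {p : List V} (h : IsWalk R a b p) :
    p ≠ [] := by
  rintro rfl; simpa using h.2.1

theorem head_mem {a : V} {p : List V} (h : p.head? = some a) : a ∈ p := by
  cases p with
  | nil => simp at h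
  | cons x l => simp at h; simp [h]

theorem last_mem {a : V} {p : List V} (h : p.getLast? = some a) : a ∈ p := by
  have : p ≠ [] := by rintro rfl; simp at h
  rw [List.getLast?_eq_getLast this] at h
  rw [← Option.some_inj.mp h] at *
  exact List.getLast_mem this

/-- not nodup gives a duplicate split -/
theorem exists_dup_split {p : List V} (h : ¬ p.Nodup) :
    ∃ (a : V) (l₁ l₂ l₃ : List V), p = l₁ ++ a :: (l₂ ++ a :: l₃) := by
  induction p with
  | nil => simp at h
  | cons x l ih =>
    by_cases hx : x ∈ l
    · obtain ⟨s, t, rfl⟩ := List.append_of_mem hx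
      exact ⟨x, [], s, t, by simp⟩
    · have : ¬ l.Nodup := fun hn => h (List.nodup_cons.mpr ⟨hx, hn⟩)
      obtain ⟨a, l₁, l₂, l₃, rfl⟩ := ih this
      exact ⟨a, x :: l₁, l₂, l₃, by simp⟩

/-- From any walk one can extract a path with the same endpoints whose vertices
are among the walk's vertices. -/
theorem walk_to_path {R : V → V → Prop} {a b : V} :
    ∀ {p : List V}, IsWalk R a b p → ∃ q, IsPath R a b q ∧ ∀ u ∈ q, u ∈ p := by
  have main : ∀ n : ℕ, ∀ p : List V, p.length ≤ n → IsWalk R a b p →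
      ∃ q, IsPath R a b q ∧ ∀ u ∈ q, u ∈ p := by
    intro n
    induction n with
    | zero => intro p hp hw; exact absurd (List.length_eq_zero_iff.mp (Nat.le_zero.mp hp)) hw.ne_nil
    | succ n ih =>
      intro p hp hw
      by_cases hn : p.Nodup
      · exact ⟨p, ⟨hw, hn⟩, fun u hu => hu⟩
      · obtain ⟨c, l₁, l₂, l₃, rfl⟩ := exists_dup_split hn
        set q : List V := (l₁ ++ [c]) ++ l₃ with hq
        have hpeq : l₁ ++ c :: (l₂ ++ c :: l₃) = (l₁ ++ [c]) ++ (l₂ ++ c :: l₃) := by simp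
        have hchain : q.Chain' R := by
          have h1 : (l₁ ++ [c]).Chain' R := hw.1.prefix (by rw [hpeq]; exact List.prefix_append _ _)
          have h2 : (c :: l₃).Chain' R := hw.1.suffix (by
            refine ⟨l₁ ++ c :: l₂, by simp⟩)
          refine List.IsChain.append h1 (h2.suffix (List.suffix_cons c l₃)) ?_
          intro x hx y hy
          simp [List.getLast?_append] at hx
          subst hx
          cases l₃ with
          | nil => simp at hy
          | cons d l => simp at hy; rw [← hy]; exact (List.isChain_cons_cons.mp h2).1
        have hhead : q.head? = some a := by
          have := hw.2.1
          rw [hpeq] at this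
          rw [List.head?_append] at this ⊢
          cases h : (l₁ ++ [c]).head? with
          | none => simp [h] at this ⊢; exact absurd h (by simp)
          | some z => simp [h] at this ⊢; simpa [this]
        have hlast : q.getLast? = some b := by
          have := hw.2.2
          cases l₃ with
          | nil =>
            have h3 : (l₁ ++ c :: (l₂ ++ [c])).getLast? = some c := by
              have heq : l₁ ++ c :: (l₂ ++ [c]) = (l₁ ++ c :: l₂) ++ [c] := by simp
              rw [heq, List.getLast?_concat]
            rw [this] at h3
            have hbc : b = c := Option.some.inj h3
            subst hbc
            simp [hq, List.getLast?_append]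
          | cons d l =>
            have hne : (d :: l) ≠ ([] : List V) := by simp
            rw [show l₁ ++ c :: (l₂ ++ c :: d :: l) = (l₁ ++ c :: l₂ ++ [c]) ++ (d :: l) by simp] at this
            rw [List.getLast?_append] at this
            rw [show q = (l₁ ++ [c]) ++ (d :: l) by simp [hq], List.getLast?_append]
            cases h : (d :: l).getLast? with
            | none => simp at h
            | some z => simp [h] at this ⊢; exact this
        have hlen : q.length ≤ n := by
          have := hp
          simp [hq] at this ⊢
          omega
        obtain ⟨q', hq', hmem⟩ := ih q hlen ⟨hchain, hhead, hlast⟩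
        refine ⟨q', hq', fun u hu => ?_⟩
        have := hmem u hu
        simp [hq] at this ⊢
        tauto
  intro p hw
  exact main p.length p le_rfl hw



theorem chain'_imp_mem {R S : V → V → Prop} :
    ∀ {l : List V}, l.Chain' R → (∀ a b, a ∈ l → b ∈ l → R a b → S a b) → l.Chain' S := by
  intro l
  induction l with
  | nil => intro _ _; simp
  | cons x t ih =>
    cases t with
    | nil => intro _ _; simp
    | cons y t' =>
      intro h him
      rw [chain'_eq_isChain, List.isChain_cons_cons] at h ⊢
      exact ⟨him _ _ (by simp) (by simp) h.1,
        ih h.2 (fun a b ha hb => him a b (by simp [ha]) (by simp [hb]))⟩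

theorem exists_next_of_mem_dropLast {R : V → V → Prop} :
    ∀ {l : List V}, l.Chain' R → ∀ u ∈ l.dropLast, ∃ w, R u w ∧ w ∈ l := by
  intro l
  induction l with
  | nil => simp
  | cons x t ih =>
    cases t with
    | nil => simp
    | cons y t' =>
      intro h u hu
      rw [chain'_eq_isChain, List.isChain_cons_cons] at h
      rw [List.dropLast_cons₂, List.mem_cons] at hu
      rcases hu with rfl | hu
      · exact ⟨y, h.1, by simp⟩
      · obtain ⟨w, hw, hwm⟩ := ih h.2 u hu
        exact ⟨w, hw, by simp [List.mem_cons] at hwm ⊢; tauto⟩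

/-- If a list is an `R`-chain but not an `S`-chain, where `R` only exceeds `S` at the
pair `(x, y)`, then the list contains `x :: y` consecutively. -/
theorem chain'_pair_split {R S : V → V → Prop} {x y : V}
    (hRS : ∀ u w, R u w → S u w ∨ (u = x ∧ w = y)) :
    ∀ {l : List V}, l.Chain' R → ¬ l.Chain' S → ∃ l₁ l₂, l = l₁ ++ x :: y :: l₂ := by
  intro l
  induction l with
  | nil => intro _ h; simp at h
  | cons u t ih =>
    cases t with
    | nil => intro _ h; simp at h
    | cons w t' =>
      intro h hn
      rw [chain'_eq_isChain, List.isChain_cons_cons] at h hn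
      by_cases hS : S u w
      · have : ¬ (w :: t').Chain' S := fun hc => hn ⟨hS, hc⟩
        obtain ⟨l₁, l₂, hl⟩ := ih h.2 this
        exact ⟨u :: l₁, l₂, by rw [hl]; simp⟩
      · rcases hRS _ _ h.1 with h' | ⟨rfl, rfl⟩
        · exact absurd h' hS
        · exact ⟨[], t', rfl⟩

/-- First element of a list satisfying a predicate, with split. -/
theorem first_hit {X : V → Prop} :
    ∀ {l : List V}, (∃ u ∈ l, X u) → ∃ s z t, l = s ++ z :: t ∧ X z ∧ ∀ u ∈ s, ¬ X u := by
  intro l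
  induction l with
  | nil => simp
  | cons a t ih =>
    intro h
    by_cases ha : X a
    · exact ⟨[], a, t, by simp, ha, by simp⟩
    · have : ∃ u ∈ t, X u := by
        obtain ⟨u, hu, hX⟩ := h
        rcases List.mem_cons.mp hu with rfl | hu
        · exact absurd hX ha
        · exact ⟨u, hu, hX⟩
      obtain ⟨s, z, t', rfl, hz, hs⟩ := ih this
      refine ⟨a :: s, z, t', by simp, hz, ?_⟩
      intro u hu
      rcases List.mem_cons.mp hu with rfl | hu
      · exact ha
      · exact hs u hu

theorem prefix_path {R : V → V → Prop} {a b z : V} {p s t : List V}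
    (hp : IsPath R a b p) (hsplit : p = s ++ z :: t) : IsPath R a z (s ++ [z]) := by
  have hpre : (s ++ [z]) <+: p := ⟨t, by simp [hsplit]⟩
  refine ⟨⟨hp.1.1.prefix hpre, ?_, by rw [List.getLast?_concat]⟩, hp.2.sublist hpre.sublist⟩
  · have := hp.1.2.1
    rw [hsplit] at this
    rw [List.head?_append] at this ⊢
    cases s with
    | nil => simpa using this
    | cons c l => simpa using this

theorem suffix_path {R : V → V → Prop} {a b z : V} {p s t : List V}
    (hp : IsPath R a b p) (hsplit : p = s ++ z :: t) : IsPath R z b (z :: t) := by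
  have hsuf : (z :: t) <:+ p := ⟨s, hsplit.symm⟩
  refine ⟨⟨hp.1.1.suffix hsuf, by simp, ?_⟩, hp.2.sublist hsuf.sublist⟩
  · have := hp.1.2.2
    rw [hsplit, List.getLast?_append] at this
    simpa using this

section P3
variable {V : Type*} [DecidableEq V]

/-- `u` is immediately followed by `w` somewhere in `p`. -/
def Adj (p : List V) (u w : V) : Prop := ∃ l₁ l₂, p = l₁ ++ u :: w :: l₂

theorem adj_of_chain'_stuff {R : V → V → Prop} {p : List V} (h : p.Chain' R)
    {u w : V} (ha : Adj p u w) : R u w := by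
  obtain ⟨l₁, l₂, rfl⟩ := ha
  have : List.Chain' R [u, w] := h.infix ⟨l₁, l₂, by simp⟩
  exact (List.isChain_cons_cons.mp this).1

theorem chain'_of_adj {S : V → V → Prop} :
    ∀ {p : List V}, (∀ u w, Adj p u w → S u w) → p.Chain' S := by
  intro p
  induction p with
  | nil => simp
  | cons x t ih =>
    cases t with
    | nil => simp
    | cons y t' =>
      intro h
      rw [chain'_eq_isChain, List.isChain_cons_cons]
      refine ⟨h x y ⟨[], t', rfl⟩, ih ?_⟩
      rintro u w ⟨l₁, l₂, he⟩
      exact h u w ⟨x :: l₁, l₂, by rw [he]; simp⟩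

theorem adj_mem_left {p : List V} {u w : V} (h : Adj p u w) : u ∈ p := by
  obtain ⟨l₁, l₂, rfl⟩ := h; simp

theorem adj_mem_right {p : List V} {u w : V} (h : Adj p u w) : w ∈ p := by
  obtain ⟨l₁, l₂, rfl⟩ := h; simp

theorem adj_reverse {p : List V} {u w : V} (h : Adj p u w) : Adj p.reverse w u := by
  obtain ⟨l₁, l₂, rfl⟩ := h
  exact ⟨l₂.reverse, l₁.reverse, by simp⟩

theorem adj_ne {p : List V} (hnd : p.Nodup) {u w : V} (h : Adj p u w) : u ≠ w := by
  obtain ⟨l₁, l₂, rfl⟩ := h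
  have hinf : [u, w] <:+: (l₁ ++ u :: w :: l₂) := ⟨l₁, l₂, by simp⟩
  have : List.Nodup [u, w] := hnd.sublist hinf.sublist
  simpa using this

theorem adj_snd_ne_head {p : List V} (hnd : p.Nodup) {a u w : V}
    (hh : p.head? = some a) (h : Adj p u w) : w ≠ a := by
  obtain ⟨l₁, l₂, rfl⟩ := h
  rintro rfl
  cases l₁ with
  | nil => simp at hh; subst hh; simp at hnd
  | cons c l =>
    simp at hh
    subst hh
    rw [List.cons_append, List.nodup_cons] at hnd
    exact hnd.1 (by simp)

theorem adj_fst_ne_last {p : List V} (hnd : p.Nodup) {b u w : V}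
    (hh : p.getLast? = some b) (h : Adj p u w) : u ≠ b := by
  have := adj_snd_ne_head (List.nodup_reverse.mpr hnd) (by rwa [List.head?_reverse]) (adj_reverse h)
  exact this

end P3
section P3b
variable {V : Type*} [DecidableEq V]

def Rel (G : Finset (V × V)) (u w : V) : Prop := (u, w) ∈ G

def Sep (G : Finset (V × V)) (a b : V) (C : Finset V) : Prop :=
  a ∉ C ∧ b ∉ C ∧ ∀ p, IsPath (Rel G) a b p → ∃ u ∈ p, u ∈ C

/-- the set of vertices reachable from `a` by a path avoiding `X`. -/
def Va (G : Finset (V × V)) (a : V) (X : Finset V) : Set V :=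
  {u | ∃ p, IsPath (Rel G) a u p ∧ ∀ w ∈ p, w ∉ X}

def rev (G : Finset (V × V)) : Finset (V × V) := G.image Prod.swap

theorem mem_rev {G : Finset (V × V)} {u w : V} : (u, w) ∈ rev G ↔ (w, u) ∈ G := by
  constructor
  · rintro h
    obtain ⟨⟨c, d⟩, hm, he⟩ := Finset.mem_image.mp h
    have h1 : c = w := by have := congrArg Prod.snd he; simpa [Prod.swap] using this
    have h2 : d = u := by have := congrArg Prod.fst he; simpa [Prod.swap] using this
    subst h1; subst h2; exact hm
  · intro h
    exact Finset.mem_image.mpr ⟨(w, u), h, rfl⟩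

theorem rev_card {G : Finset (V × V)} : (rev G).card = G.card :=
  Finset.card_image_of_injective _ Prod.swap_injective

theorem rev_erase {G : Finset (V × V)} {x y : V} :
    (rev G).erase (y, x) = rev (G.erase (x, y)) := by
  ext ⟨u, w⟩
  constructor
  · intro h
    have h1 := Finset.mem_erase.mp h
    have h2 := mem_rev.mp h1.2
    have : (w, u) ∈ G.erase (x, y) := Finset.mem_erase.mpr ⟨by
      intro he
      apply h1.1
      have := congrArg Prod.fst he; have := congrArg Prod.snd he
      simp_all, h2⟩
    exact mem_rev (G := G.erase (x, y)) |>.mpr this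
  · intro h
    have h2 := mem_rev (G := G.erase (x, y)) |>.mp h
    have h3 := Finset.mem_erase.mp h2
    refine Finset.mem_erase.mpr ⟨?_, mem_rev.mpr h3.2⟩
    intro he
    apply h3.1
    have e1 := congrArg Prod.fst he; have e2 := congrArg Prod.snd he
    simp_all

theorem isWalk_rev {G : Finset (V × V)} {a b : V} {p : List V} :
    IsWalk (Rel (rev G)) a b p ↔ IsWalk (Rel G) b a p.reverse := by
  unfold IsWalk
  rw [chain'_eq_isChain, chain'_eq_isChain, List.isChain_reverse, List.head?_reverse, List.getLast?_reverse]
  constructor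
  · rintro ⟨h1, h2, h3⟩
    exact ⟨chain'_imp_mem h1 (fun u w _ _ hr => mem_rev.mp hr), h3, h2⟩
  · rintro ⟨h1, h2, h3⟩
    exact ⟨chain'_imp_mem h1 (fun u w _ _ hr => mem_rev.mpr hr), h3, h2⟩

theorem isPath_rev {G : Finset (V × V)} {a b : V} {p : List V} :
    IsPath (Rel (rev G)) a b p ↔ IsPath (Rel G) b a p.reverse := by
  unfold IsPath
  rw [isWalk_rev, List.nodup_reverse]

theorem isPath_rev' {G : Finset (V × V)} {a b : V} {p : List V}
    (h : IsPath (Rel G) a b p) : IsPath (Rel (rev G)) b a p.reverse := by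
  rw [isPath_rev, List.reverse_reverse]; exact h

theorem sep_rev {G : Finset (V × V)} {a b : V} {C : Finset V} :
    Sep (rev G) b a C ↔ Sep G a b C := by
  unfold Sep
  refine and_congr (iff_of_eq rfl) (and_congr (iff_of_eq rfl) ?_) |>.trans (by
    constructor
    · rintro ⟨h1, h2, h3⟩; exact ⟨h2, h1, h3⟩
    · rintro ⟨h1, h2, h3⟩; exact ⟨h2, h1, h3⟩)
  constructor
  · intro h p hp
    obtain ⟨u, hu, hC⟩ := h p.reverse (isPath_rev' hp)
    exact ⟨u, List.mem_reverse.mp hu, hC⟩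
  · intro h p hp
    obtain ⟨u, hu, hC⟩ := h p.reverse (by
      rw [isPath_rev] at hp
      exact hp)
    refine ⟨u, ?_, hC⟩
    have := List.mem_reverse.mpr hu
    simpa using this

end P3b
section P4
variable {V : Type*} [DecidableEq V]

def Cut (G : Finset (V × V)) (a b : V) (k : ℕ) : Prop :=
  ∀ C : Finset V, Sep G a b C → k ≤ C.card

theorem cut_rev {G : Finset (V × V)} {a b : V} {k : ℕ} (h : Cut G a b k) :
    Cut (rev G) b a k := fun C hC => h C (sep_rev.mp hC)

theorem va_not_mem {G : Finset (V × V)} {a u : V} {X : Finset V}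
    (h : u ∈ Va G a X) : u ∉ X := by
  obtain ⟨p, hp, hav⟩ := h
  exact hav u (last_mem hp.1.2.2)

theorem a_mem_va {G : Finset (V × V)} {a : V} {X : Finset V} (ha : a ∉ X) :
    a ∈ Va G a X := ⟨[a], ⟨⟨by simp, by simp, by simp⟩, by simp⟩, by simpa⟩

theorem b_not_mem_va {G : Finset (V × V)} {a b : V} {X : Finset V}
    (hsep : Sep G a b X) : b ∉ Va G a X := by
  rintro ⟨p, hp, hav⟩
  obtain ⟨u, hu, huX⟩ := hsep.2.2 p hp
  exact hav u hu huX

/-- A path in `G` that misses `x` (or misses `y`) is a path in `G.erase (x,y)`. -/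
theorem erase_path {G : Finset (V × V)} {a b x y : V} {p : List V}
    (hp : IsPath (Rel G) a b p) (hxy : x ∉ p ∨ y ∉ p) :
    IsPath (Rel (G.erase (x, y))) a b p := by
  refine ⟨⟨chain'_imp_mem hp.1.1 ?_, hp.1.2.1, hp.1.2.2⟩, hp.2⟩
  intro u w hu hw hR
  refine Finset.mem_erase.mpr ⟨?_, hR⟩
  intro he
  have h1 : u = x := by have := congrArg Prod.fst he; simpa using this
  have h2 : w = y := by have := congrArg Prod.snd he; simpa using this
  subst h1; subst h2
  tauto

theorem sep_insert_fst {G : Finset (V × V)} {a b x y : V} {Y : Finset V}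
    (hxa : x ≠ a) (hxb : x ≠ b) (hY : Sep (G.erase (x, y)) a b Y) :
    Sep G a b (insert x Y) := by
  refine ⟨by simp [hxa.symm, hY.1], by simp [hxb.symm, hY.2.1], ?_⟩
  intro p hp
  by_contra hno
  push_neg at hno
  have hxp : x ∉ p := fun hx => by simpa using hno x hx
  obtain ⟨u, hu, huY⟩ := hY.2.2 p (erase_path hp (Or.inl hxp))
  exact hno u hu (by simp [huY])

theorem sep_insert_snd {G : Finset (V × V)} {a b x y : V} {Y : Finset V}
    (hya : y ≠ a) (hyb : y ≠ b) (hY : Sep (G.erase (x, y)) a b Y) :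
    Sep G a b (insert y Y) := by
  refine ⟨by simp [hya.symm, hY.1], by simp [hyb.symm, hY.2.1], ?_⟩
  intro p hp
  by_contra hno
  push_neg at hno
  have hyp : y ∉ p := fun hy => by simpa using hno y hy
  obtain ⟨u, hu, huY⟩ := hY.2.2 p (erase_path hp (Or.inr hyp))
  exact hno u hu (by simp [huY])

/-- There is a `Y`-avoiding path, and it passes through the arc `(x,y)`. -/
theorem exists_p0 {G : Finset (V × V)} {a b x y : V} {Y : Finset V} {k : ℕ}
    (hcut : Cut G a b k) (hY : Sep (G.erase (x, y)) a b Y) (hYk : Y.card < k) :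
    ∃ l r, IsPath (Rel G) a b (l ++ x :: y :: r) ∧ ∀ u ∈ l ++ x :: y :: r, u ∉ Y := by
  have hns : ¬ Sep G a b Y := fun hs => absurd (hcut Y hs) (by omega)
  have hC : ¬ ∀ p, IsPath (Rel G) a b p → ∃ u ∈ p, u ∈ Y :=
    fun h => hns ⟨hY.1, hY.2.1, h⟩
  push_neg at hC
  obtain ⟨p, hp, hav⟩ := hC
  have hnc : ¬ p.Chain' (Rel (G.erase (x, y))) := by
    intro hc
    obtain ⟨u, hu, huY⟩ := hY.2.2 p ⟨⟨hc, hp.1.2.1, hp.1.2.2⟩, hp.2⟩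
    exact hav u hu huY
  have hRS : ∀ u w, Rel G u w → Rel (G.erase (x, y)) u w ∨ (u = x ∧ w = y) := by
    intro u w hR
    by_cases h : (u, w) = (x, y)
    · right
      exact ⟨by have := congrArg Prod.fst h; simpa using this,
        by have := congrArg Prod.snd h; simpa using this⟩
    · left; exact Finset.mem_erase.mpr ⟨h, hR⟩
  obtain ⟨l, r, hsplit⟩ := chain'_pair_split hRS hp.1.1 hnc
  rw [hsplit] at hp hav
  exact ⟨l, r, hp, hav⟩

end P4
section P5
variable {V : Type*} [DecidableEq V]

theorem walk_append {S : V → V → Prop} {a m b : V} {q t : List V}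
    (h1 : IsWalk S a m q) (h2 : IsWalk S m b (m :: t)) : IsWalk S a b (q ++ t) := by
  refine ⟨?_, ?_, ?_⟩
  · refine List.IsChain.append h1.1 (h2.1.suffix (List.suffix_cons m t)) ?_
    intro x' hx' y' hy'
    rw [h1.2.2] at hx'
    have hx'' : m = x' := by simpa using hx'
    cases t with
    | nil => simp at hy'
    | cons d t' =>
      have hyd : d = y' := by simpa using hy'
      rw [← hx'', ← hyd]
      exact (List.isChain_cons_cons.mp h2.1).1
  · rw [List.head?_append, h1.2.1]; rfl
  · cases t with
    | nil =>
      have : m = b := by simpa using h2.2.2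
      subst this
      simpa using h1.2.2
    | cons d t' =>
      rw [List.getLast?_append]
      have h3 := h2.2.2
      rw [List.getLast?_cons_cons] at h3
      rw [h3]; rfl

theorem chain_erase_of_avoid_fst {G : Finset (V × V)} {x y : V} {q : List V}
    (hc : q.Chain' (Rel G)) (h : ∀ u ∈ q, u ≠ x) : q.Chain' (Rel (G.erase (x, y))) := by
  refine chain'_imp_mem hc ?_
  intro u w hu _ hR
  refine Finset.mem_erase.mpr ⟨?_, hR⟩
  intro he
  exact h u hu (by have := congrArg Prod.fst he; simpa using this)

theorem chain_erase_of_avoid_snd {G : Finset (V × V)} {x y : V} {q : List V}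
    (hc : q.Chain' (Rel G)) (hnd : q.Nodup) (h : ∀ u ∈ q.tail, u ≠ y) :
    q.Chain' (Rel (G.erase (x, y))) := by
  refine chain'_of_adj ?_
  intro u w hadj
  refine Finset.mem_erase.mpr ⟨?_, adj_of_chain'_stuff hc hadj⟩
  intro he
  have hw : w = y := by have := congrArg Prod.snd he; simpa using this
  subst hw
  obtain ⟨l₁, l₂, rfl⟩ := hadj
  cases l₁ with
  | nil => exact (h w (by simp)) rfl
  | cons c l => exact (h w (by simp)) rfl

/-- `y` is not reachable from `a` avoiding `insert x Y`. -/
theorem y_not_mem_va {G : Finset (V × V)} {a b x y : V} {Y : Finset V} {k : ℕ}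
    (hyb : y ≠ b) (hcut : Cut G a b k) (hY : Sep (G.erase (x, y)) a b Y)
    (hYk : Y.card < k) : y ∉ Va G a (insert x Y) := by
  rintro ⟨q, hq, hqav⟩
  obtain ⟨l, r, hp0, hp0av⟩ := exists_p0 hcut hY hYk
  have hsplit : l ++ x :: y :: r = (l ++ [x]) ++ y :: r := by simp
  have hsuf : IsPath (Rel G) y b (y :: r) := suffix_path hp0 hsplit
  have hrne : r ≠ [] := by
    rintro rfl
    have := hsuf.1.2.2
    simp at this
    exact hyb this
  have hnd0 := hp0.2
  rw [hsplit] at hnd0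
  have hxr : x ∉ y :: r := fun hx =>
    (List.disjoint_of_nodup_append hnd0) (by simp) hx
  -- build walk q ++ r in the erased graph
  have hcq : q.Chain' (Rel (G.erase (x, y))) :=
    chain_erase_of_avoid_fst hq.1.1 (fun u hu hux => by
      have := hqav u hu; simp [hux] at this)
  have hcyr : (y :: r).Chain' (Rel (G.erase (x, y))) := by
    refine chain_erase_of_avoid_snd hsuf.1.1 hsuf.2 ?_
    intro u hu
    simp only [List.tail_cons] at hu
    intro huy
    rw [huy] at hu
    have hnds : List.Nodup (y :: r) := hsuf.2
    rw [List.nodup_cons] at hnds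
    exact hnds.1 hu
  have hwalk : IsWalk (Rel (G.erase (x, y))) a b (q ++ r) :=
    walk_append ⟨hcq, hq.1.2.1, hq.1.2.2⟩ ⟨hcyr, by simp, hsuf.1.2.2⟩
  obtain ⟨p', hp', hmem⟩ := walk_to_path hwalk
  obtain ⟨u, hu, huY⟩ := hY.2.2 p' hp'
  have := hmem u hu
  rw [List.mem_append] at this
  rcases this with h | h
  · have := hqav u h; simp at this; exact this.2 huY
  · exact hp0av u (by simp [h]) huY

/-- no vertex is both in `Va` and (reverse-)reachable to `b` avoiding `insert y Y`. -/
theorem va_vb_disjoint {G : Finset (V × V)} {a b x y : V} {Y : Finset V} {u : V}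
    (hY : Sep (G.erase (x, y)) a b Y) (hsepP : Sep G a b (insert x Y))
    (hu1 : u ∈ Va G a (insert x Y)) (hu2 : u ∈ Va (rev G) b (insert y Y)) : False := by
  obtain ⟨q, hq, hqav⟩ := hu1
  obtain ⟨q', hq', hq'av⟩ := hu2
  have hq'' := isPath_rev.mp hq'
  set r : List V := q'.reverse with hr
  have hq''av : ∀ w ∈ r, w ∉ insert y Y := fun w hw => hq'av w (List.mem_reverse.mp hw)
  -- r is a path from u to b in G
  cases hrc : r with
  | nil => rw [hrc] at hq''; exact hq''.ne_nil rfl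
  | cons m t =>
    have hm : u = m := by
      have := hq''.1.2.1
      rw [hrc] at this
      simpa using this.symm
    subst hm
    have hcq : q.Chain' (Rel (G.erase (x, y))) :=
      chain_erase_of_avoid_fst hq.1.1 (fun w hw hwx => by
        have := hqav w hw; simp [hwx] at this)
    have hcr : (u :: t).Chain' (Rel (G.erase (x, y))) := by
      have : (u :: t).Chain' (Rel G) := by rw [← hrc]; exact hq''.1.1
      refine chain'_imp_mem this ?_
      intro c d hc hd hR
      refine Finset.mem_erase.mpr ⟨?_, hR⟩
      intro he
      have hd' : d = y := by have := congrArg Prod.snd he; simpa using this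
      have hdd := hq''av d (by rw [hrc]; exact hd)
      exact hdd (by simp [hd'])
    have hwalk : IsWalk (Rel (G.erase (x, y))) a b (q ++ t) :=
      walk_append ⟨hcq, hq.1.2.1, hq.1.2.2⟩ ⟨hcr, by simp, by rw [← hrc]; exact hq''.1.2.2⟩
    obtain ⟨p', hp', hmem⟩ := walk_to_path hwalk
    obtain ⟨w, hw, hwY⟩ := hY.2.2 p' hp'
    have := hmem w hw
    rw [List.mem_append] at this
    rcases this with h | h
    · have := hqav w h; simp at this; exact this.2 hwY
    · have := hq''av w (by rw [hrc]; simp [h]); simp at this; exact this.2 hwY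

end P5
section P6
variable {V : Type*} [DecidableEq V]

theorem not_sep_path {G : Finset (V × V)} {a b : V} {C : Finset V}
    (ha : a ∉ C) (hb : b ∉ C) (hns : ¬ Sep G a b C) :
    ∃ p, IsPath (Rel G) a b p ∧ ∀ u ∈ p, u ∉ C := by
  have hC : ¬ ∀ p, IsPath (Rel G) a b p → ∃ u ∈ p, u ∈ C := fun h => hns ⟨ha, hb, h⟩
  push_neg at hC
  exact hC

theorem count_lemma {G : Finset (V × V)} {a b x y : V} {Y : Finset V} {k : ℕ}
    (he : (x, y) ∈ G) (hxa : x ≠ a) (hxb : x ≠ b) (hya : y ≠ a) (hyb : y ≠ b)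
    (hxy : x ≠ y) (hcut : Cut G a b k) (hY : Sep (G.erase (x, y)) a b Y)
    (hYk : Y.card < k) :
    k + 1 ≤ (G.filter (fun g => g.1 ∉ Va G a (insert x Y))).card := by
  have hsepP := sep_insert_fst hxa hxb hY
  have hsepQ := sep_insert_snd hya hyb hY
  have hPk : (insert x Y).card = k := le_antisymm
    (le_trans (Finset.card_insert_le _ _) (by omega)) (hcut _ hsepP)
  have hQk : (insert y Y).card = k := le_antisymm
    (le_trans (Finset.card_insert_le _ _) (by omega)) (hcut _ hsepQ)
  have hxY : x ∉ Y := fun h => by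
    rw [Finset.insert_eq_self.mpr h] at hPk; omega
  have hyY : y ∉ Y := fun h => by
    rw [Finset.insert_eq_self.mpr h] at hQk; omega
  have hT : (insert x (insert y Y)).card = k + 1 := by
    rw [Finset.card_insert_of_notMem (by simp [hxy, hxY]),
      Finset.card_insert_of_notMem hyY]
    rw [Finset.card_insert_of_notMem hxY] at hPk
    omega
  have key : ∀ z ∈ insert x (insert y Y), z ∉ Va G a (insert x Y) ∧ ∃ w, (z, w) ∈ G := by
    intro z hz
    simp only [Finset.mem_insert] at hz
    rcases hz with rfl | hzy | hz
    · exact ⟨fun h => va_not_mem h (Finset.mem_insert_self _ _), ⟨y, he⟩⟩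
    · rw [hzy]
      refine ⟨y_not_mem_va hyb hcut hY hYk, ?_⟩
      obtain ⟨l, r, hp0, _⟩ := exists_p0 hcut hY hYk
      cases r with
      | nil =>
        exfalso
        have h3 := hp0.1.2.2
        rw [show l ++ x :: y :: ([] : List V) = (l ++ [x]) ++ [y] by simp,
          List.getLast?_concat] at h3
        exact hyb (Option.some.inj h3)
      | cons d t =>
        exact ⟨d, adj_of_chain'_stuff hp0.1.1 ⟨l ++ [x], t, by simp⟩⟩
    · refine ⟨fun h => va_not_mem h (Finset.mem_insert_of_mem hz), ?_⟩
      have hzQ : z ∈ insert y Y := Finset.mem_insert_of_mem hz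
      have hCz : ((insert y Y).erase z).card < k := by
        rw [Finset.card_erase_of_mem hzQ, hQk]; omega
      have hns : ¬ Sep G a b ((insert y Y).erase z) := fun hs => by
        have := hcut _ hs; omega
      obtain ⟨p, hp, hav⟩ := not_sep_path
        (fun h => hsepQ.1 (Finset.mem_of_mem_erase h))
        (fun h => hsepQ.2.1 (Finset.mem_of_mem_erase h)) hns
      obtain ⟨u, hu, huQ⟩ := hsepQ.2.2 p hp
      have huz : u = z := by
        by_contra hne
        exact hav u hu (Finset.mem_erase.mpr ⟨hne, huQ⟩)
      subst huz
      obtain ⟨s, t, hsp⟩ := List.append_of_mem hu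
      cases t with
      | nil =>
        exfalso
        have h3 := hp.1.2.2
        rw [hsp, show s ++ [u] = s ++ [u] from rfl, List.getLast?_concat] at h3
        exact (by rintro rfl; exact hY.2.1 hz : u ≠ b) (Option.some.inj h3)
      | cons d t' =>
        exact ⟨d, adj_of_chain'_stuff hp.1.1 ⟨s, t', hsp⟩⟩
  classical
  have hinj : ∀ z ∈ insert x (insert y Y),
      (fun z => (z, if h : ∃ w, (z, w) ∈ G then h.choose else z)) z
        ∈ G.filter (fun g => g.1 ∉ Va G a (insert x Y)) := by
    intro z hz
    obtain ⟨hva, w, hw⟩ := key z hz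
    have hex : ∃ w, (z, w) ∈ G := ⟨w, hw⟩
    simp only [hex, dif_pos]
    exact Finset.mem_filter.mpr ⟨hex.choose_spec, hva⟩
  calc k + 1 = (insert x (insert y Y)).card := hT.symm
    _ ≤ _ := Finset.card_le_card_of_injOn _ hinj (by
        intro u hu w hw hfe
        have := congrArg Prod.fst hfe
        simpa using this)

end P6
section P7
variable {V : Type*} [DecidableEq V]

theorem adj_mem_dropLast {p : List V} {u w : V} (h : Adj p u w) : u ∈ p.dropLast := by
  obtain ⟨l₁, l₂, rfl⟩ := h
  rw [List.dropLast_append_cons]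
  simp

theorem adj_concat {s : List V} {z u w : V} (h : Adj (s ++ [z]) u w) : u ∈ s := by
  have := adj_mem_dropLast h
  rwa [List.dropLast_concat] at this

/-- auxiliary graph on the `a`-side of the separator `X`. -/
noncomputable def Ha (G : Finset (V × V)) (a b : V) (X : Finset V) : Finset (V × V) :=
  G.filter (fun g => g.1 ∈ Va G a X) ∪ X.image (fun z => (z, b))

theorem no_va_arc_to_b {G : Finset (V × V)} {a b u : V} {X : Finset V}
    (hsepX : Sep G a b X) (hu : u ∈ Va G a X) (harc : (u, b) ∈ G) : False := by
  obtain ⟨r, hr, hrav⟩ := hu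
  have hwalk : IsWalk (Rel G) a b (r ++ [b]) :=
    walk_append ⟨hr.1.1, hr.1.2.1, hr.1.2.2⟩ ⟨by simp [Rel, harc], by simp, by simp⟩
  obtain ⟨p', hp', hmem⟩ := walk_to_path hwalk
  obtain ⟨w, hw, hwX⟩ := hsepX.2.2 p' hp'
  rcases List.mem_append.mp (hmem w hw) with h | h
  · exact hrav w h hwX
  · simp at h; subst h; exact hsepX.2.1 hwX

theorem sep_of_sep_ha {G : Finset (V × V)} {a b : V} {X C : Finset V}
    (hsepX : Sep G a b X) (hC : Sep (Ha G a b X) a b C) : Sep G a b C := by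
  refine ⟨hC.1, hC.2.1, ?_⟩
  intro p hp
  by_contra hno
  push_neg at hno
  obtain ⟨u0, hu0, hu0X⟩ := hsepX.2.2 p hp
  obtain ⟨s, z, t, hsplit, hzX, hsX⟩ := first_hit (X := fun u => u ∈ X) ⟨u0, hu0, hu0X⟩
  have hsVa : ∀ u ∈ s, u ∈ Va G a X := by
    intro u hu
    obtain ⟨s₁, s₂, hs⟩ := List.append_of_mem hu
    refine ⟨s₁ ++ [u], prefix_path (t := s₂ ++ z :: t) hp (by rw [hsplit, hs]; simp), ?_⟩
    intro w hw
    refine hsX w ?_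
    rw [hs]
    rcases List.mem_append.mp hw with h | h
    · simp [h]
    · simp at h; simp [h]
  have hzb : z ≠ b := by rintro rfl; exact hsepX.2.1 hzX
  have htne : t ≠ [] := by
    rintro rfl
    have h3 := hp.1.2.2
    rw [hsplit, show s ++ [z] = s ++ [z] from rfl, List.getLast?_concat] at h3
    exact hzb (Option.some.inj h3)
  -- the prefix path in G
  have hpre : IsPath (Rel G) a z (s ++ [z]) := prefix_path hp hsplit
  -- build the Ha path q
  have hchain : ((s ++ [z]) ++ [b]).Chain' (Rel (Ha G a b X)) := by
    refine List.IsChain.append ?_ (by simp) ?_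
    · refine chain'_of_adj ?_
      intro u w hadj
      have huS : u ∈ s := adj_concat hadj
      exact Finset.mem_union_left _ (Finset.mem_filter.mpr
        ⟨adj_of_chain'_stuff hpre.1.1 hadj, hsVa u huS⟩)
    · intro x' hx' y' hy'
      rw [List.getLast?_concat] at hx'
      have hx'' : z = x' := by simpa using hx'
      have hy'' : b = y' := by simpa using hy'
      rw [← hx'', ← hy'']
      exact Finset.mem_union_right _ (Finset.mem_image.mpr ⟨z, hzX, rfl⟩)
  have hbq : b ∉ s ++ [z] := by
    intro hb
    have hnd := hp.2
    rw [hsplit] at hnd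
    have hbt : b ∈ t := by
      have h3 := hp.1.2.2
      rw [hsplit, show s ++ z :: t = (s ++ [z]) ++ t by simp, List.getLast?_append] at h3
      cases ht : t.getLast? with
      | none => rw [ht] at h3; simp at h3; exact absurd (List.getLast?_eq_none_iff.mp ht) htne
      | some c =>
        rw [ht] at h3; simp at h3
        subst h3
        exact last_mem ht
    rw [show s ++ z :: t = (s ++ [z]) ++ t by simp] at hnd
    exact List.disjoint_of_nodup_append hnd hb hbt
  have hq : IsPath (Rel (Ha G a b X)) a b ((s ++ [z]) ++ [b]) := by
    refine ⟨⟨hchain, ?_, by rw [List.getLast?_concat]⟩, ?_⟩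
    · cases s with
      | nil =>
        exfalso
        have := hp.1.2.1
        rw [hsplit] at this
        simp at this
        subst this
        exact hsepX.1 hzX
      | cons c s' =>
        have := hp.1.2.1
        rw [hsplit] at this
        simp at this ⊢
        exact this
    · rw [List.nodup_append]
      refine ⟨hp.2.sublist (by rw [hsplit]; exact List.IsPrefix.sublist ⟨t, by simp⟩), by simp, ?_⟩
      intro u hu
      simp only [List.mem_singleton]
      rintro _ rfl rfl
      exact hbq hu
  obtain ⟨u, hu, huC⟩ := hC.2.2 _ hq
  rcases List.mem_append.mp hu with h | h
  · refine hno u ?_ huC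
    rw [hsplit]
    rcases List.mem_append.mp h with h' | h'
    · simp [h']
    · simp at h'; simp [h']
  · simp at h; subst h; exact hC.2.1 huC

theorem ha_card_lt {G : Finset (V × V)} {a b : V} {X : Finset V} {k : ℕ}
    (hXk : X.card = k)
    (hcount : k + 1 ≤ (G.filter (fun g => g.1 ∉ Va G a X)).card) :
    (Ha G a b X).card < G.card := by
  have h1 : (Ha G a b X).card ≤ (G.filter (fun g => g.1 ∈ Va G a X)).card + k := by
    refine le_trans (Finset.card_union_le _ _) ?_
    have := Finset.card_image_le (s := X) (f := fun z => (z, b))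
    omega
  have h2 := Finset.card_filter_add_card_filter_not
    (s := G) (p := fun g => g.1 ∈ Va G a X)
  omega

end P7
section P8
variable {V : Type*} [DecidableEq V]

theorem ha_path_split {G : Finset (V × V)} {a b : V} {X : Finset V} {p : List V}
    (hab : a ≠ b) (hsepX : Sep G a b X)
    (hp : IsPath (Rel (Ha G a b X)) a b p) :
    ∃ z ∈ X, ∃ q, IsPath (Rel G) a z q ∧ (∀ u ∈ q, u = z ∨ u ∈ Va G a X) ∧
      (∀ u ∈ q, u ∈ p) ∧ b ∉ q := by
  have hpne : p ≠ [] := hp.ne_nil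
  have hplen : p.dropLast ≠ [] := by
    intro h
    have hl := List.dropLast_append_getLast hpne
    rw [h] at hl
    simp at hl
    have h1 := hp.1.2.1
    have h2 := hp.1.2.2
    rw [← hl] at h1 h2
    simp at h1 h2
    exact hab (h1.symm.trans h2)
  set q : List V := p.dropLast with hqdef
  have hlast : p = q ++ [p.getLast hpne] := (List.dropLast_append_getLast hpne).symm
  have hgb : p.getLast hpne = b := by
    have := hp.1.2.2
    rw [List.getLast?_eq_getLast hpne] at this
    exact Option.some.inj this
  rw [hgb] at hlast
  have hbq : b ∉ q := by
    intro hb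
    have hnd := hp.2
    rw [hlast] at hnd
    exact List.disjoint_of_nodup_append hnd hb (by simp)
  -- type-1 structure on q
  have hS : q.Chain' (fun u w => (u, w) ∈ G ∧ u ∈ Va G a X) := by
    refine chain'_of_adj ?_
    intro u w hadj
    have hwq : w ∈ q := adj_mem_right hadj
    have hadj' : Adj p u w := by
      obtain ⟨l₁, l₂, hql⟩ := hadj
      exact ⟨l₁, l₂ ++ [b], by rw [hlast, hql]; simp⟩
    have hrel : Rel (Ha G a b X) u w := adj_of_chain'_stuff hp.1.1 hadj'
    rcases Finset.mem_union.mp hrel with h | h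
    · exact ⟨(Finset.mem_filter.mp h).1, (Finset.mem_filter.mp h).2⟩
    · exfalso
      obtain ⟨z', hz', he⟩ := Finset.mem_image.mp h
      have hwb : b = w := by have := congrArg Prod.snd he; simpa using this
      rw [← hwb] at hwq
      exact hbq hwq
  set z : V := q.getLast hplen with hzdef
  have hzX : z ∈ X := by
    have hadjz : Adj p z b := by
      refine ⟨q.dropLast, [], ?_⟩
      rw [hlast]
      conv_lhs => rw [← List.dropLast_append_getLast hplen]
      simp [hzdef]
    have hrel : Rel (Ha G a b X) z b := adj_of_chain'_stuff hp.1.1 hadjz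
    rcases Finset.mem_union.mp hrel with h | h
    · exfalso
      exact no_va_arc_to_b hsepX (Finset.mem_filter.mp h).2 (Finset.mem_filter.mp h).1
    · obtain ⟨z', hz', he⟩ := Finset.mem_image.mp h
      have : z' = z := by have := congrArg Prod.fst he; simpa using this
      rwa [this] at hz'
  refine ⟨z, hzX, q, ⟨⟨chain'_imp_mem hS (fun u w _ _ h => h.1), ?_, ?_⟩, ?_⟩, ?_, ?_, hbq⟩
  · have h1 := hp.1.2.1
    rw [hlast, List.head?_append] at h1
    cases hh : q.head? with
    | none => exact absurd (List.head?_eq_none_iff.mp hh) hplen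
    | some c => rw [hh] at h1; simp at h1; simp [h1]
  · rw [List.getLast?_eq_getLast hplen]
  · exact hp.2.sublist (by rw [hlast]; exact List.IsPrefix.sublist ⟨[b], rfl⟩)
  · intro u hu
    rcases List.mem_append.mp (by rw [← List.dropLast_append_getLast hplen] at hu; exact hu) with h | h
    · right
      obtain ⟨w, hw, _⟩ := exists_next_of_mem_dropLast hS u h
      exact hw.2
    · left; simpa using h
  · intro u hu
    rw [hlast]
    simp [hu]

theorem extract_fan {G : Finset (V × V)} {a b : V} {X : Finset V} {k : ℕ}
    (hab : a ≠ b) (hsepX : Sep G a b X) (hXk : X.card = k)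
    (Ps : Fin k → List V) (hPs : ∀ i, IsPath (Rel (Ha G a b X)) a b (Ps i))
    (hdisj : ∀ i j, i ≠ j → ∀ u, u ∈ Ps i → u ∈ Ps j → u = a ∨ u = b) :
    ∃ F : V → List V,
      (∀ z ∈ X, IsPath (Rel G) a z (F z) ∧ ∀ u ∈ F z, u = z ∨ u ∈ Va G a X) ∧
      (∀ z ∈ X, ∀ z' ∈ X, z ≠ z' → ∀ u, u ∈ F z → u ∈ F z' → u = a) := by
  classical
  choose zi hziX qi hqi hqiVa hqiSub hqiB using fun i => ha_path_split hab hsepX (hPs i)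
  have hzinj : Function.Injective zi := by
    intro i j hij
    by_contra hne
    have h1 : zi i ∈ qi i := last_mem (hqi i).1.2.2
    have h2 : zi i ∈ qi j := by rw [hij]; exact last_mem (hqi j).1.2.2
    rcases hdisj i j hne _ (hqiSub i _ h1) (hqiSub j _ h2) with h | h
    · exact hsepX.1 (h ▸ hziX i)
    · exact hsepX.2.1 (h ▸ hziX i)
  have himg : Finset.univ.image zi = X := by
    refine Finset.eq_of_subset_of_card_le (fun u hu => ?_) ?_
    · obtain ⟨i, _, rfl⟩ := Finset.mem_image.mp hu
      exact hziX i
    · rw [Finset.card_image_of_injective _ hzinj, hXk]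
      simp
  refine ⟨fun w => if h : ∃ i, zi i = w then qi h.choose else [], ?_, ?_⟩
  · intro w hw
    have hex : ∃ i, zi i = w := by
      have := himg ▸ hw
      obtain ⟨i, _, hi⟩ := Finset.mem_image.mp this
      exact ⟨i, hi⟩
    simp only [hex, dif_pos]
    constructor
    · have h := hqi hex.choose
      rwa [hex.choose_spec] at h
    · have h := hqiVa hex.choose
      rwa [hex.choose_spec] at h
  · intro w hw w' hw' hne u hu hu'
    have hex : ∃ i, zi i = w := by
      have := himg ▸ hw
      obtain ⟨i, _, hi⟩ := Finset.mem_image.mp this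
      exact ⟨i, hi⟩
    have hex' : ∃ i, zi i = w' := by
      have := himg ▸ hw'
      obtain ⟨i, _, hi⟩ := Finset.mem_image.mp this
      exact ⟨i, hi⟩
    simp only [hex, hex', dif_pos] at hu hu'
    have hine : hex.choose ≠ hex'.choose := by
      intro h
      exact hne (hex.choose_spec ▸ h ▸ hex'.choose_spec)
    rcases hdisj _ _ hine u (hqiSub _ _ hu) (hqiSub _ _ hu') with h | h
    · exact h
    · exact absurd (h ▸ hu) (h ▸ hqiB hex.choose)
end P8
section P9
variable {V : Type*} [DecidableEq V]

def MengerConc (G : Finset (V × V)) (a b : V) (k : ℕ) : Prop :=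
  ∃ Ps : Fin k → List V, (∀ i, IsPath (Rel G) a b (Ps i)) ∧
    ∀ i j, i ≠ j → ∀ u, u ∈ Ps i → u ∈ Ps j → u = a ∨ u = b

theorem main_glue {k : ℕ} {G : Finset (V × V)} {a b x y : V} {Y : Finset V}
    (IH : ∀ H : Finset (V × V), H.card < G.card → ∀ a' b' : V, a' ≠ b' →
      Cut H a' b' k → MengerConc H a' b' k)
    (hab : a ≠ b) (he : (x, y) ∈ G) (hxa : x ≠ a) (hxb : x ≠ b) (hya : y ≠ a)
    (hyb : y ≠ b) (hxy : x ≠ y) (hcut : Cut G a b k)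
    (hY : Sep (G.erase (x, y)) a b Y) (hYk : Y.card < k) :
    MengerConc G a b k := by
  classical
  have hsepP := sep_insert_fst hxa hxb hY
  have hsepQ := sep_insert_snd hya hyb hY
  have hPk : (insert x Y).card = k := le_antisymm
    (le_trans (Finset.card_insert_le _ _) (by omega)) (hcut _ hsepP)
  have hQk : (insert y Y).card = k := le_antisymm
    (le_trans (Finset.card_insert_le _ _) (by omega)) (hcut _ hsepQ)
  have hxY : x ∉ Y := fun h => by rw [Finset.insert_eq_self.mpr h] at hPk; omega
  have hyY : y ∉ Y := fun h => by rw [Finset.insert_eq_self.mpr h] at hQk; omega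
  have hyP : y ∉ insert x Y := by simp [hxy.symm, hyY]
  have he' : (y, x) ∈ rev G := mem_rev.mpr he
  have hcut' : Cut (rev G) b a k := cut_rev hcut
  have hY' : Sep ((rev G).erase (y, x)) b a Y := by rw [rev_erase]; exact sep_rev.mpr hY
  have hsepQ' : Sep (rev G) b a (insert y Y) := sep_insert_fst hyb hya hY'
  -- A-side fan
  have hcountA := count_lemma he hxa hxb hya hyb hxy hcut hY hYk
  have hHaA : (Ha G a b (insert x Y)).card < G.card := ha_card_lt hPk hcountA
  obtain ⟨PsA, hPsA, hdisjA⟩ := IH _ hHaA a b hab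
    (fun C hC => hcut C (sep_of_sep_ha hsepP hC))
  obtain ⟨F, hF, hFdisj⟩ := extract_fan hab hsepP hPk PsA hPsA hdisjA
  -- B-side fan (in the reversed graph)
  have hcountB := count_lemma he' hyb hya hxb hxa hxy.symm hcut' hY' hYk
  have hHaB : (Ha (rev G) b a (insert y Y)).card < G.card := by
    have := ha_card_lt (b := a) hQk hcountB
    rwa [rev_card] at this
  obtain ⟨PsB, hPsB, hdisjB⟩ := IH _ hHaB b a hab.symm
    (fun C hC => hcut' C (sep_of_sep_ha hsepQ' hC))
  obtain ⟨F', hF', hF'disj⟩ := extract_fan hab.symm hsepQ' hQk PsB hPsB hdisjB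
  set VA : Set V := Va G a (insert x Y) with hVA
  set VB : Set V := Va (rev G) b (insert y Y) with hVB
  have hyVA : y ∉ VA := y_not_mem_va hyb hcut hY hYk
  have hxVB : x ∉ VB := y_not_mem_va hxa hcut' hY' hYk
  have hVAB : ∀ u, u ∈ VA → u ∈ VB → False := fun u h1 h2 => va_vb_disjoint hY hsepP h1 h2
  set B : V → List V := fun w => (F' w).reverse with hB
  have hBpath : ∀ w ∈ insert y Y, IsPath (Rel G) w b (B w) :=
    fun w hw => isPath_rev.mp (hF' w hw).1
  have hBmem : ∀ w ∈ insert y Y, ∀ u ∈ B w, u = w ∨ u ∈ VB := by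
    intro w hw u hu
    exact (hF' w hw).2 u (List.mem_reverse.mp hu)
  set m : V → V := fun z => if z = x then y else z with hm
  have hmQ : ∀ z ∈ insert x Y, m z ∈ insert y Y := by
    intro z hz
    by_cases h : z = x
    · simp [hm, h]
    · rcases Finset.mem_insert.mp hz with h' | h'
      · exact absurd h' h
      · simp [hm, h, h']
  have hminj : ∀ z ∈ insert x Y, ∀ z' ∈ insert x Y, m z = m z' → z = z' := by
    intro z hz z' hz' hmm
    by_cases h1 : z = x <;> by_cases h2 : z' = x
    · rw [h1, h2]
    · exfalso
      simp only [hm, h1, if_pos, h2, if_neg, not_false_iff] at hmm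
      rcases Finset.mem_insert.mp hz' with h' | h'
      · exact h2 h'
      · exact hyY (hmm ▸ h')
    · exfalso
      simp only [hm, h1, if_neg, not_false_iff, h2, if_pos] at hmm
      rcases Finset.mem_insert.mp hz with h' | h'
      · exact h1 h'
      · exact hyY (hmm ▸ h')
    · simpa [hm, h1, h2] using hmm
  set tp : V → List V := fun z => if z = x then B y else (B z).tail with htp
  have htpsub : ∀ z ∈ insert x Y, ∀ u ∈ tp z, u ∈ B (m z) := by
    intro z hz u hu
    by_cases h : z = x
    · simp only [htp, h, if_pos] at hu
      simpa [hm, h] using hu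
    · simp only [htp, h, if_neg, not_false_iff] at hu
      have : u ∈ B z := List.mem_of_mem_tail hu
      simpa [hm, h] using this
  -- each glued list is a path from a to b
  have hglue : ∀ z ∈ insert x Y, IsPath (Rel G) a b (F z ++ tp z) := by
    intro z hz
    obtain ⟨hFz, hFzmem⟩ := hF z hz
    by_cases h : z = x
    · have hBy := hBpath y (Finset.mem_insert_self _ _)
      have hBymem := hBmem y (Finset.mem_insert_self _ _)
      have htpz : tp z = B y := by simp [htp, h]
      rw [htpz]
      cases hby : B y with
      | nil => rw [hby] at hBy; exact absurd rfl hBy.ne_nil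
      | cons c t =>
        rw [hby] at hBy hBymem
        have hcy : c = y := by
          have := hBy.1.2.1; simpa using this
        have h2 : IsWalk (Rel G) z b (z :: c :: t) := by
          refine ⟨List.isChain_cons_cons.mpr ⟨?_, hBy.1.1⟩, by simp, ?_⟩
          · rw [h, hcy]; exact he
          · rw [List.getLast?_cons_cons]; exact hBy.1.2.2
        refine ⟨walk_append ⟨hFz.1.1, hFz.1.2.1, hFz.1.2.2⟩ h2, ?_⟩
        rw [List.nodup_append]
        refine ⟨hFz.2, hBy.2, ?_⟩
        intro u hu _ hu' rfl
        rcases hFzmem u hu with h1 | h1 <;> rcases hBymem u hu' with h2' | h2'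
        · exact hxy ((h.symm.trans h1.symm).trans h2')
        · exact hxVB (by rw [← (h1.trans h)]; exact h2')
        · exact hyVA (by rw [← h2']; exact h1)
        · exact hVAB u h1 h2'
    · have hzY : z ∈ Y := by
        rcases Finset.mem_insert.mp hz with h' | h'
        · exact absurd h' h
        · exact h'
      have hzQ : z ∈ insert y Y := Finset.mem_insert_of_mem hzY
      have hBz := hBpath z hzQ
      have hBzmem := hBmem z hzQ
      have htpz : tp z = (B z).tail := by simp [htp, h]
      rw [htpz]
      cases hbz : B z with
      | nil => rw [hbz] at hBz; exact absurd rfl hBz.ne_nil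
      | cons c t =>
        rw [hbz] at hBz hBzmem
        have hcz : c = z := by
          have := hBz.1.2.1; simpa using this
        rw [hcz] at hBz hBzmem
        show IsPath (Rel G) a b (F z ++ t)
        have h2 : IsWalk (Rel G) z b (z :: t) := by
          refine ⟨hBz.1.1, by simp, ?_⟩
          · have h3 := hBz.1.2.2
            cases t with
            | nil =>
              exfalso
              simp at h3
              exact hY.2.1 (h3 ▸ hzY)
            | cons d t' => rw [List.getLast?_cons_cons] at h3; exact h3
        have hnt : z ∉ t := by
          have := hBz.2; rw [List.nodup_cons] at this; exact this.1
        refine ⟨walk_append ⟨hFz.1.1, hFz.1.2.1, hFz.1.2.2⟩ h2, ?_⟩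
        rw [List.nodup_append]
        refine ⟨hFz.2, by have := hBz.2; rw [List.nodup_cons] at this; exact this.2, ?_⟩
        intro u hu _ hu' rfl
        have huB : u ∈ z :: t := by simp [hu']
        have hunz : u ≠ z := fun hh => hnt (hh ▸ hu')
        have h2' : u ∈ VB := by
          rcases hBzmem u huB with h' | h'
          · exact absurd h' hunz
          · exact h'
        rcases hFzmem u hu with h1 | h1
        · subst h1
          exact absurd (va_not_mem h2') (by simp [hzQ])
        · exact hVAB u h1 h2'
  -- mixed disjointness
  have hmixed : ∀ z ∈ insert x Y, ∀ z' ∈ insert x Y, z ≠ z' →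
      ∀ u, u ∈ F z → u ∈ tp z' → False := by
    intro z hz z' hz' hne u hu hu'
    have c1 := (hF z hz).2 u hu
    have c2 := hBmem (m z') (hmQ z' hz') u (htpsub z' hz' u hu')
    rcases c1 with h1 | h1 <;> rcases c2 with h2 | h2
    · by_cases h3 : z' = x
      · have hmz : m z' = y := by simp [hm, h3]
        have hzy : z = y := h1.symm.trans (h2.trans hmz)
        exact hyP (by rw [← hzy]; exact hz)
      · have hmz : m z' = z' := by simp [hm, h3]
        exact hne (h1.symm.trans (h2.trans hmz))
    · have hzVB : z ∈ VB := by rw [← h1]; exact h2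
      by_cases h3 : z = x
      · exact hxVB (by rw [← h3]; exact hzVB)
      · have hzY : z ∈ Y := by
          rcases Finset.mem_insert.mp hz with h' | h'
          · exact absurd h' h3
          · exact h'
        exact absurd (va_not_mem hzVB) (by simp [hzY])
    · by_cases h3 : z' = x
      · have hmz : m z' = y := by simp [hm, h3]
        have h4 : y ∈ VA := by rw [← hmz, ← h2]; exact h1
        exact hyVA h4
      · have hmz : m z' = z' := by simp [hm, h3]
        have h4 : z' ∈ VA := by rw [← hmz, ← h2]; exact h1
        exact absurd (va_not_mem h4) (by simp [hz'])
    · exact hVAB u h1 h2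
  -- enumeration of the separator
  have hPk2 : k = (insert x Y).card := hPk.symm
  set ζ : Fin k → V := fun i => ((insert x Y).equivFin.symm (finCongr hPk2 i) : V) with hζ
  have hζmem : ∀ i, ζ i ∈ insert x Y := fun i => ((insert x Y).equivFin.symm _).2
  have hζinj : Function.Injective ζ := by
    intro i j hij
    have h1 : ((insert x Y).equivFin.symm (finCongr hPk2 i)) =
        ((insert x Y).equivFin.symm (finCongr hPk2 j)) := Subtype.ext hij
    have h2 := (insert x Y).equivFin.symm.injective h1
    exact (finCongr hPk2).injective h2
  refine ⟨fun i => F (ζ i) ++ tp (ζ i), fun i => hglue _ (hζmem i), ?_⟩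
  intro i j hij u hu hu'
  have hzz : ζ i ≠ ζ j := fun h => hij (hζinj h)
  rcases List.mem_append.mp hu with h1 | h1 <;> rcases List.mem_append.mp hu' with h2 | h2
  · left; exact hFdisj _ (hζmem i) _ (hζmem j) hzz u h1 h2
  · exact absurd (hmixed _ (hζmem i) _ (hζmem j) hzz u h1 h2) not_false
  · exact absurd (hmixed _ (hζmem j) _ (hζmem i) hzz.symm u h2 h1) not_false
  · right
    have hmne : m (ζ i) ≠ m (ζ j) := fun h => hzz (hminj _ (hζmem i) _ (hζmem j) h)
    exact hF'disj _ (hmQ _ (hζmem i)) _ (hmQ _ (hζmem j)) hmne u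
      (List.mem_reverse.mp (htpsub _ (hζmem i) u h1))
      (List.mem_reverse.mp (htpsub _ (hζmem j) u h2))

end P9
section P10
variable {V : Type*} [DecidableEq V]

theorem menger_step (k : ℕ) (G : Finset (V × V))
    (IH : ∀ H : Finset (V × V), H.card < G.card → ∀ a' b' : V, a' ≠ b' →
      Cut H a' b' k → MengerConc H a' b' k)
    (a b : V) (hab : a ≠ b) (hcut : Cut G a b k) : MengerConc G a b k := by
  classical
  have erase_conv : ∀ (g : V × V) (p : List V), IsPath (Rel (G.erase g)) a b p →
      IsPath (Rel G) a b p := by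
    intro g p hp
    exact ⟨⟨chain'_imp_mem hp.1.1 (fun u w _ _ hr => Finset.mem_of_mem_erase hr),
      hp.1.2.1, hp.1.2.2⟩, hp.2⟩
  rcases Nat.eq_zero_or_pos k with rfl | hk
  · exact ⟨fun i => i.elim0, fun i => i.elim0, fun i j _ => i.elim0⟩
  by_cases hdir : (a, b) ∈ G
  · refine ⟨fun _ => [a, b], fun i => ⟨⟨?_, by simp, by simp⟩, by simp [hab]⟩, ?_⟩
    · exact List.isChain_cons_cons.mpr ⟨hdir, by simp⟩
    · intro i j _ u hu _
      simpa using hu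
  by_cases huse : ∃ g ∈ G, g.2 = a ∨ g.1 = b ∨ g.1 = g.2
  · obtain ⟨g, hg, hgp⟩ := huse
    have hconv : ∀ p, IsPath (Rel G) a b p → IsPath (Rel (G.erase g)) a b p := by
      intro p hp
      refine ⟨⟨chain'_of_adj ?_, hp.1.2.1, hp.1.2.2⟩, hp.2⟩
      intro u w hadj
      have hrel := adj_of_chain'_stuff hp.1.1 hadj
      refine Finset.mem_erase.mpr ⟨?_, hrel⟩
      intro heq
      rcases hgp with h | h | h
      · exact (adj_snd_ne_head hp.2 hp.1.2.1 hadj) (by rw [← h, ← heq])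
      · exact (adj_fst_ne_last hp.2 hp.1.2.2 hadj) (by rw [← h, ← heq])
      · exact (adj_ne hp.2 hadj) (by
          have h1 : (u, w).1 = g.1 := by rw [heq]
          have h2 : (u, w).2 = g.2 := by rw [heq]
          simp at h1 h2
          rw [h1, h2, h])
    have hcut' : Cut (G.erase g) a b k := fun C hC =>
      hcut C ⟨hC.1, hC.2.1, fun p hp => hC.2.2 p (hconv p hp)⟩
    obtain ⟨Ps, hPs, hdisj⟩ := IH (G.erase g) (Finset.card_erase_lt_of_mem hg) a b hab hcut'
    exact ⟨Ps, fun i => erase_conv g _ (hPs i), hdisj⟩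
  by_cases harc : ∃ g ∈ G, g.1 ≠ a ∧ g.2 ≠ b
  · obtain ⟨⟨x, y⟩, he, hxy'⟩ := harc
    obtain ⟨hxa, hyb⟩ := hxy'
    push_neg at huse
    obtain ⟨hya, hxb, hxyne⟩ := huse (x, y) he
    by_cases h5 : Cut (G.erase (x, y)) a b k
    · obtain ⟨Ps, hPs, hdisj⟩ := IH (G.erase (x, y))
        (Finset.card_erase_lt_of_mem he) a b hab h5
      exact ⟨Ps, fun i => erase_conv (x, y) _ (hPs i), hdisj⟩
    · unfold Cut at h5
      push_neg at h5
      obtain ⟨Y, hY, hYk⟩ := h5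
      exact main_glue IH hab he hxa hxb hya hyb hxyne hcut hY hYk
  · push_neg at harc huse
    set W := (G.filter (fun g => g.1 = a ∧ (g.2, b) ∈ G)).image Prod.snd with hW
    have hWG : ∀ w ∈ W, (a, w) ∈ G ∧ (w, b) ∈ G := by
      intro w hw
      obtain ⟨g, hgf, hgs⟩ := Finset.mem_image.mp hw
      obtain ⟨hgG, hg1, hg2⟩ := Finset.mem_filter.mp hgf
      constructor
      · have : g = (a, w) := Prod.ext hg1 hgs
        rwa [this] at hgG
      · rwa [hgs] at hg2
    have hsepW : Sep G a b W := by
      refine ⟨?_, ?_, ?_⟩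
      · intro ha
        exact hdir (by
          have := (hWG a ha).2
          exact this)
      · intro hb
        exact (huse (b, b) (hWG b hb).2).2.1 rfl
      · intro p hp
        cases p with
        | nil => exact absurd rfl hp.ne_nil
        | cons c rest =>
          have hca : c = a := by have := hp.1.2.1; simpa using this
          subst hca
          cases rest with
          | nil =>
            exfalso
            have := hp.1.2.2
            simp at this
            exact hab this
          | cons w rest' =>
            have harc1 : (c, w) ∈ G := (List.isChain_cons_cons.mp hp.1.1).1
            cases rest' with
            | nil =>
              exfalso
              have := hp.1.2.2
              simp at this
              exact hdir (this ▸ harc1)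
            | cons d t =>
              have harc2 : (w, d) ∈ G := (List.isChain_cons_cons.mp (List.isChain_cons_cons.mp hp.1.1).2).1
              have hwd := harc (w, d) harc2
              have hwa : w ≠ c := by
                have := hp.2
                rw [List.nodup_cons] at this
                exact fun hh => this.1 (by simp [hh.symm])
              simp at hwd
              rcases (by tauto : w = c ∨ d = b) with h | h
              · exact absurd h hwa
              · refine ⟨w, by simp, ?_⟩
                refine Finset.mem_image.mpr ⟨(c, w), Finset.mem_filter.mpr ⟨harc1, rfl, ?_⟩, rfl⟩
                rw [h] at harc2
                simpa using harc2
    have hkW := hcut W hsepW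
    obtain ⟨T, hTW, hTk⟩ := Finset.exists_subset_card_eq hkW
    set ι : Fin k → V := fun i => (T.equivFin.symm (finCongr hTk.symm i) : V) with hι
    have hιW : ∀ i, ι i ∈ W := fun i => hTW (T.equivFin.symm _).2
    have hιinj : Function.Injective ι := by
      intro i j hij
      have h1 := T.equivFin.symm.injective (Subtype.ext hij)
      exact (finCongr hTk.symm).injective h1
    have hιa : ∀ i, ι i ≠ a := by
      intro i hia
      have hAA := (hWG _ (hιW i)).1
      rw [hia] at hAA
      exact (huse (a, a) hAA).1 rfl
    have hιb : ∀ i, ι i ≠ b := by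
      intro i hib
      have hBB := (hWG _ (hιW i)).2
      rw [hib] at hBB
      exact (huse (b, b) hBB).2.1 rfl
    refine ⟨fun i => [a, ι i, b], fun i => ⟨⟨?_, by simp, by simp⟩, ?_⟩, ?_⟩
    · exact List.isChain_cons_cons.mpr ⟨(hWG _ (hιW i)).1,
        List.isChain_cons_cons.mpr ⟨(hWG _ (hιW i)).2, by simp⟩⟩
    · simp [hab, hιb i, (hιa i).symm]
    · intro i j hij u hu hu'
      simp at hu hu'
      rcases hu with h | h | h
      · exact Or.inl h
      · rcases hu' with h' | h' | h'
        · exact Or.inl h'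
        · exact absurd (hιinj (h.symm.trans h')) hij
        · exact Or.inr h'
      · exact Or.inr h

theorem menger (k : ℕ) (G : Finset (V × V)) (a b : V) (hab : a ≠ b)
    (hcut : Cut G a b k) : MengerConc G a b k := by
  have main : ∀ n (G : Finset (V × V)), G.card = n → ∀ a b : V, a ≠ b →
      Cut G a b k → MengerConc G a b k := by
    intro n
    induction n using Nat.strong_induction_on with
    | _ n ih =>
      intro G hGn a b hab hcut
      exact menger_step k G
        (fun H hH a' b' hab' hcut' => ih H.card (by omega) H rfl a' b' hab' hcut')
        a b hab hcut
  exact main G.card G rfl a b hab hcut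

end P10
section P11
variable {V : Type*} [DecidableEq V]

theorem pigeon {k : ℕ} (C : Finset V) (hC : C.card < k) (R : Fin k → List V)
    (hdisj : ∀ i j, i ≠ j → ∀ x, x ∈ R i → x ∈ R j → x ∉ C) :
    ∃ i, ∀ c ∈ C, c ∉ R i := by
  by_contra hno
  push_neg at hno
  choose f hfC hfR using hno
  have hinj : Function.Injective f := by
    intro i j hij
    by_contra hne
    exact hdisj i j hne (f i) (hfR i) (hij ▸ hfR j) (hfC i)
  have hle := Finset.card_le_card_of_injOn (s := (Finset.univ : Finset (Fin k))) f
    (fun i _ => hfC i) hinj.injOn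
  simp at hle
  omega

variable [Fintype V]

theorem mpath_iff {E A : Multiset (V × V)} {a b : V} {p : List V}
    [DecidablePred fun g : V × V => MStep E A g.1 g.2] :
    IsMPath E A a b p ↔
      IsPath (Rel (Finset.univ.filter fun g : V × V => MStep E A g.1 g.2)) a b p := by
  constructor
  · rintro ⟨h1, h2, h3, h4⟩
    refine ⟨⟨h1.imp ?_, h2, h3⟩, h4⟩
    intro u w hs
    show (u, w) ∈ Finset.univ.filter fun g : V × V => MStep E A g.1 g.2
    exact Finset.mem_filter.mpr ⟨Finset.mem_univ _, hs⟩
  · rintro ⟨⟨h1, h2, h3⟩, h4⟩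
    refine ⟨h1.imp ?_, h2, h3, h4⟩
    intro u w hs
    exact (Finset.mem_filter.mp hs).2

theorem app_cut_fwd {E A : Multiset (V × V)} {k : ℕ} {S : Set V} {v t : V}
    [DecidablePred fun g : V × V => MStep E A g.1 g.2]
    (hS : KStrongIn E A k S) (ht : t ∈ S)
    (s : Fin k → V) (hs : ∀ i, s i ∈ S) (P : Fin k → List V)
    (hP : ∀ i, IsMPath E A v (s i) (P i))
    (hPdisj : ∀ i j, i ≠ j → ∀ x, x ∈ P i → x ∈ P j → x = v) :
    Cut (Finset.univ.filter fun g : V × V => MStep E A g.1 g.2) v t k := by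
  set G := Finset.univ.filter fun g : V × V => MStep E A g.1 g.2 with hG
  intro C hC
  by_contra hlt
  push_neg at hlt
  obtain ⟨i, hiC⟩ := pigeon C hlt P (by
    intro i j hij x hxi hxj hxC
    exact hC.1 ((hPdisj i j hij x hxi hxj) ▸ hxC))
  have hsiC : s i ∉ C := fun h => hiC _ h (last_mem (hP i).2.2.1)
  obtain ⟨Q, hQ, hQdisj⟩ := hS (s i) (hs i) t ht
  obtain ⟨j, hjC⟩ := pigeon C hlt Q (by
    intro p q hpq x hxp hxq hxC
    rcases hQdisj p q hpq x hxp hxq with rfl | rfl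
    · exact hsiC hxC
    · exact hC.2.1 hxC)
  have hPi := mpath_iff.mp (hP i)
  have hQj := mpath_iff.mp (hQ j)
  cases hqj : Q j with
  | nil => rw [hqj] at hQj; exact hQj.ne_nil rfl
  | cons c rest =>
    rw [hqj] at hQj hjC
    have hcsi : c = s i := by have := hQj.1.2.1; simpa using this
    rw [hcsi] at hQj hjC
    have hwalk : IsWalk (Rel G) v t (P i ++ rest) :=
      walk_append ⟨hPi.1.1, hPi.1.2.1, hPi.1.2.2⟩ ⟨hQj.1.1, by simp, hQj.1.2.2⟩
    obtain ⟨p', hp', hmem⟩ := walk_to_path hwalk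
    obtain ⟨u, hu, huC⟩ := hC.2.2 p' hp'
    rcases List.mem_append.mp (hmem u hu) with h | h
    · exact hiC u huC h
    · exact hjC u huC (by simp [h])

theorem app_cut_bwd {E A : Multiset (V × V)} {k : ℕ} {S : Set V} {v t : V}
    [DecidablePred fun g : V × V => MStep E A g.1 g.2]
    (hS : KStrongIn E A k S) (ht : t ∈ S)
    (s' : Fin k → V) (hs' : ∀ i, s' i ∈ S) (P' : Fin k → List V)
    (hP' : ∀ i, IsMPath E A (s' i) v (P' i))
    (hP'disj : ∀ i j, i ≠ j → ∀ x, x ∈ P' i → x ∈ P' j → x = v) :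
    Cut (Finset.univ.filter fun g : V × V => MStep E A g.1 g.2) t v k := by
  set G := Finset.univ.filter fun g : V × V => MStep E A g.1 g.2 with hG
  intro C hC
  by_contra hlt
  push_neg at hlt
  obtain ⟨i, hiC⟩ := pigeon C hlt P' (by
    intro i j hij x hxi hxj hxC
    exact hC.2.1 ((hP'disj i j hij x hxi hxj) ▸ hxC))
  have hsiC : s' i ∉ C := fun h => hiC _ h (head_mem (hP' i).2.1)
  obtain ⟨Q, hQ, hQdisj⟩ := hS t ht (s' i) (hs' i)
  obtain ⟨j, hjC⟩ := pigeon C hlt Q (by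
    intro p q hpq x hxp hxq hxC
    rcases hQdisj p q hpq x hxp hxq with rfl | rfl
    · exact hC.1 hxC
    · exact hsiC hxC)
  have hPi := mpath_iff.mp (hP' i)
  have hQj := mpath_iff.mp (hQ j)
  cases hpi : P' i with
  | nil => rw [hpi] at hPi; exact hPi.ne_nil rfl
  | cons c rest =>
    rw [hpi] at hPi hiC
    have hcsi : c = s' i := by have := hPi.1.2.1; simpa using this
    rw [hcsi] at hPi hiC
    have hwalk : IsWalk (Rel G) t v (Q j ++ rest) :=
      walk_append ⟨hQj.1.1, hQj.1.2.1, hQj.1.2.2⟩ ⟨hPi.1.1, by simp, hPi.1.2.2⟩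
    obtain ⟨p', hp', hmem⟩ := walk_to_path hwalk
    obtain ⟨u, hu, huC⟩ := hC.2.2 p' hp'
    rcases List.mem_append.mp (hmem u hu) with h | h
    · exact hjC u huC h
    · exact hiC u huC (by simp [h])

end P11
end MGaux

/-- If a mixed graph `M` is `k`-strong in `S`, `v ∉ S`, and there are `k` paths from
`v` to vertices of `S` meeting pairwise only in `v` as well as `k` paths from vertices
of `S` to `v` meeting pairwise only in `v`, then `M` is `k`-strong in `S ∪ {v}`. -/
theorem stmt_13 {V : Type*} [Fintype V] (E A : Multiset (V × V)) (k : ℕ)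
    (S : Set V) (v : V) (hv : v ∉ S)
    (hS : KStrongIn E A k S)
    (s s' : Fin k → V) (hs : ∀ i, s i ∈ S) (hs' : ∀ i, s' i ∈ S)
    (P P' : Fin k → List V)
    (hP : ∀ i, IsMPath E A v (s i) (P i))
    (hPdisj : ∀ i j, i ≠ j → ∀ x, x ∈ P i → x ∈ P j → x = v)
    (hP' : ∀ i, IsMPath E A (s' i) v (P' i))
    (hP'disj : ∀ i j, i ≠ j → ∀ x, x ∈ P' i → x ∈ P' j → x = v) :
    KStrongIn E A k (S ∪ {v}) := by
  classical
  intro s₁ hs₁ s₂ hs₂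
  rcases (Set.mem_union _ _ _).mp hs₁ with h1 | h1 <;>
    rcases (Set.mem_union _ _ _).mp hs₂ with h2 | h2
  · exact hS s₁ h1 s₂ h2
  · -- s₂ = v
    have hv2 : s₂ = v := Set.mem_singleton_iff.mp h2
    subst hv2
    have htv : s₁ ≠ s₂ := fun h => hv (h ▸ h1)
    have hcut := MGaux.app_cut_bwd hS h1 s' hs' P' hP' hP'disj
    obtain ⟨Ps, hPs, hdisj⟩ := MGaux.menger k _ s₁ s₂ htv hcut
    exact ⟨Ps, fun i => MGaux.mpath_iff.mpr (hPs i), hdisj⟩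
  · -- s₁ = v
    have hv1 : s₁ = v := Set.mem_singleton_iff.mp h1
    subst hv1
    have htv : s₁ ≠ s₂ := fun h => hv (h ▸ h2)
    have hcut := MGaux.app_cut_fwd hS h2 s hs P hP hPdisj
    obtain ⟨Ps, hPs, hdisj⟩ := MGaux.menger k _ s₁ s₂ htv hcut
    exact ⟨Ps, fun i => MGaux.mpath_iff.mpr (hPs i), hdisj⟩
  · have hv1 : s₁ = v := Set.mem_singleton_iff.mp h1
    have hv2 : s₂ = v := Set.mem_singleton_iff.mp h2
    have h12 : s₁ = s₂ := hv1.trans hv2.symm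
    refine ⟨fun _ => [s₁], fun i => ⟨by simp, by simp, by simp [h12], by simp⟩, ?_⟩
    intro i j _ u hu _
    left
    simpa using hu
end

section
/- Let D1, D2 be digraphs on the same vertex set with the same underlying undirected multigraph, such that D1 contains an (x0, y0, z0, v*, k)-out-rocket R (meaning R is a subgraph of D1 and the in- and out-degrees in D1 of all interior vertices of R equal those in R), D2 is 2-strong, and the tip arc of R is reversed in D2 (i.e., D2 contains the arc v*u where uv* is the tip arc of R). Then the number of arcs of D1 that are reversed in D2 is at least k + 1. -/
open scoped Classical

/-- Out-degree of a vertex in a multiset of arcs. -/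
noncomputable def outDeg {V : Type*} (A : Multiset (V × V)) (v : V) : ℕ :=
  (A.filter fun a => a.1 = v).card

/-- In-degree of a vertex in a multiset of arcs. -/
noncomputable def inDeg {V : Type*} (A : Multiset (V × V)) (v : V) : ℕ :=
  (A.filter fun a => a.2 = v).card

/-- A digraph is `k`-strong: more than `k` vertices, and deleting any set of fewer
than `k` vertices leaves a strongly connected digraph. -/
def KStrongD {V : Type*} [Fintype V] (k : ℕ) (A : Multiset (V × V)) : Prop :=
  k < Fintype.card V ∧ ∀ S : Finset V, S.card < k →
    ∀ X : Finset V, X.Nonempty → X ⊆ Sᶜ → X ≠ Sᶜ →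
      1 ≤ arcsOut (A.filter fun a => a.1 ∉ S ∧ a.2 ∉ S) X

/-- The arcs of the `(x 0, y 0, z 0, w, k)`-out-rocket with vertices
`x i, y i, z i` (`0 ≤ i ≤ k`), `u` and tip vertex `w`. -/
noncomputable def rocketArcs {V : Type*} (k : ℕ) (x y z : ℕ → V) (u w : V) :
    Multiset (V × V) :=
  ((Finset.Icc 1 k).val.bind fun i => {(x i, y i), (y i, z i), (z i, x i)})
    + ((Finset.range k).val.bind fun i =>
        {(x i, x (i + 1)), (y i, y (i + 1)), (z (i + 1), z i)})
    + {(x k, u), (y k, u), (u, z k), (u, w)}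

/-- The interior vertices of the rocket: `x i, y i, z i` for `1 ≤ i ≤ k` and `u`. -/
def rocketInterior {V : Type*} (k : ℕ) (x y z : ℕ → V) (u : V) : List V :=
  u :: (List.range k).flatMap fun i => [x (i + 1), y (i + 1), z (i + 1)]

lemma filterBind {α β : Type*} (p : α → Prop) [DecidablePred p] (s : Multiset β)
    (f : β → Multiset α) :
    Multiset.filter p (s.bind f) = s.bind (fun b => Multiset.filter p (f b)) := by
  induction s using Multiset.induction_on with
  | empty => simp
  | cons a s ih => simp [Multiset.cons_bind, Multiset.filter_add, ih]

lemma bindEqSum {α β : Type*} (s : Finset β) (f : β → Multiset α) :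
    s.val.bind f = ∑ j ∈ s, f j := by
  rw [Finset.sum_eq_multiset_sum]; rfl

lemma card_filter_fst {V : Type*} (A : Multiset (V × V)) (X : Finset V) :
    Multiset.card (A.filter (fun a => a.1 ∈ X)) = ∑ v ∈ X, outDeg A v := by
  induction X using Finset.induction_on with
  | empty =>
      rw [Multiset.filter_eq_nil.2 (by simp)]; simp
  | @insert v X hv ih =>
    rw [Finset.sum_insert hv, ← ih]
    have h := Multiset.filter_add_filter (fun a : V × V => a.1 = v) (fun a => a.1 ∈ X) A
    have h0 : Multiset.filter (fun a : V × V => a.1 = v ∧ a.1 ∈ X) A = 0 := by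
      rw [Multiset.filter_eq_nil]
      rintro a _ ⟨rfl, hm⟩
      exact hv hm
    rw [h0, add_zero] at h
    have h2 : Multiset.filter (fun a : V × V => a.1 ∈ insert v X) A
        = Multiset.filter (fun a : V × V => a.1 = v ∨ a.1 ∈ X) A := by
      apply Multiset.filter_congr
      intro a _
      simp [Finset.mem_insert]
    rw [h2, ← h, Multiset.card_add, outDeg]

lemma card_filter_snd {V : Type*} (A : Multiset (V × V)) (X : Finset V) :
    Multiset.card (A.filter (fun a => a.2 ∈ X)) = ∑ v ∈ X, inDeg A v := by
  induction X using Finset.induction_on with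
  | empty =>
      rw [Multiset.filter_eq_nil.2 (by simp)]; simp
  | @insert v X hv ih =>
    rw [Finset.sum_insert hv, ← ih]
    have h := Multiset.filter_add_filter (fun a : V × V => a.2 = v) (fun a => a.2 ∈ X) A
    have h0 : Multiset.filter (fun a : V × V => a.2 = v ∧ a.2 ∈ X) A = 0 := by
      rw [Multiset.filter_eq_nil]
      rintro a _ ⟨rfl, hm⟩
      exact hv hm
    rw [h0, add_zero] at h
    have h2 : Multiset.filter (fun a : V × V => a.2 ∈ insert v X) A
        = Multiset.filter (fun a : V × V => a.2 = v ∨ a.2 ∈ X) A := by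
      apply Multiset.filter_congr
      intro a _
      simp [Finset.mem_insert]
    rw [h2, ← h, Multiset.card_add, inDeg]

lemma filter_fst_mem_eq {V : Type*} (R D : Multiset (V × V)) (X : Finset V) (hle : R ≤ D)
    (h : ∀ v ∈ X, outDeg D v = outDeg R v) :
    D.filter (fun a => a.1 ∈ X) = R.filter (fun a => a.1 ∈ X) := by
  refine (Multiset.eq_of_le_of_card_le (Multiset.filter_le_filter _ hle) ?_).symm
  rw [card_filter_fst, card_filter_fst]
  exact le_of_eq (Finset.sum_congr rfl (fun v hv => (h v hv)))

lemma filter_snd_mem_eq {V : Type*} (R D : Multiset (V × V)) (X : Finset V) (hle : R ≤ D)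
    (h : ∀ v ∈ X, inDeg D v = inDeg R v) :
    D.filter (fun a => a.2 ∈ X) = R.filter (fun a => a.2 ∈ X) := by
  refine (Multiset.eq_of_le_of_card_le (Multiset.filter_le_filter _ hle) ?_).symm
  rw [card_filter_snd, card_filter_snd]
  exact le_of_eq (Finset.sum_congr rfl (fun v hv => (h v hv)))

lemma filter_triple {α : Type*} (p : α → Prop) [DecidablePred p] (a b c : α)
    (ha : ¬ p a) (hb : ¬ p b) (hc : p c) :
    Multiset.filter p {a, b, c} = {c} := by
  show Multiset.filter p (a ::ₘ b ::ₘ {c}) = {c}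
  rw [Multiset.filter_cons, Multiset.filter_cons, Multiset.filter_singleton,
    if_neg ha, if_neg hb, if_pos hc]
  simp

lemma filter_triple_zero {α : Type*} (p : α → Prop) [DecidablePred p] (a b c : α)
    (ha : ¬ p a) (hb : ¬ p b) (hc : ¬ p c) :
    Multiset.filter p {a, b, c} = 0 := by
  show Multiset.filter p (a ::ₘ b ::ₘ {c}) = 0
  rw [Multiset.filter_cons, Multiset.filter_cons, Multiset.filter_singleton,
    if_neg ha, if_neg hb, if_neg hc]
  simp

lemma filter_triple2 {α : Type*} (p : α → Prop) [DecidablePred p] (a b c : α)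
    (ha : p a) (hb : p b) (hc : ¬ p c) :
    Multiset.filter p {a, b, c} = {a, b} := by
  show Multiset.filter p (a ::ₘ b ::ₘ {c}) = {a, b}
  rw [Multiset.filter_cons, Multiset.filter_cons, Multiset.filter_singleton,
    if_pos ha, if_pos hb, if_neg hc]
  rfl

lemma filter_quad {α : Type*} (p : α → Prop) [DecidablePred p] (a b c d : α)
    (ha : ¬ p a) (hb : ¬ p b) (hc : ¬ p c) (hd : p d) :
    Multiset.filter p {a, b, c, d} = {d} := by
  show Multiset.filter p (a ::ₘ b ::ₘ c ::ₘ {d}) = {d}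
  rw [Multiset.filter_cons, Multiset.filter_cons, Multiset.filter_cons,
    Multiset.filter_singleton, if_neg ha, if_neg hb, if_neg hc, if_pos hd]
  simp

lemma filter_quad_zero {α : Type*} (p : α → Prop) [DecidablePred p] (a b c d : α)
    (ha : ¬ p a) (hb : ¬ p b) (hc : ¬ p c) (hd : ¬ p d) :
    Multiset.filter p {a, b, c, d} = 0 := by
  show Multiset.filter p (a ::ₘ b ::ₘ c ::ₘ {d}) = 0
  rw [Multiset.filter_cons, Multiset.filter_cons, Multiset.filter_cons,
    Multiset.filter_singleton, if_neg ha, if_neg hb, if_neg hc, if_neg hd]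
  simp

lemma rocket_filter_out {V : Type*} (k i : ℕ) (hik : i < k) (x y z : ℕ → V) (u w : V)
    (Z : Finset V)
    (hx : ∀ j, j ≤ k → (x j ∈ Z ↔ i + 1 ≤ j))
    (hy : ∀ j, j ≤ k → (y j ∈ Z ↔ i + 1 ≤ j))
    (hz : ∀ j, j ≤ k → (z j ∈ Z ↔ i + 1 ≤ j))
    (hu : u ∈ Z) (hw : w ∉ Z) :
    (rocketArcs k x y z u w).filter (fun a => a.2 ∉ Z ∧ a.1 ∈ Z)
      = {(z (i + 1), z i), (u, w)} := by
  set p : V × V → Prop := fun a => a.2 ∉ Z ∧ a.1 ∈ Z with hp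
  unfold rocketArcs
  rw [Multiset.filter_add, Multiset.filter_add, filterBind, filterBind,
    bindEqSum, bindEqSum]
  have h1 : ∑ j ∈ Finset.Icc 1 k, Multiset.filter p {(x j, y j), (y j, z j), (z j, x j)} = 0 := by
    apply Finset.sum_eq_zero
    intro j hj
    rw [Finset.mem_Icc] at hj
    apply filter_triple_zero <;>
      · rintro ⟨hh, ht⟩
        simp only [hp] at hh ht
        first
          | (rw [hx j hj.2] at *; rw [hy j hj.2] at *; omega)
          | (rw [hy j hj.2] at *; rw [hz j hj.2] at *; omega)
          | (rw [hz j hj.2] at *; rw [hx j hj.2] at *; omega)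
  have h2 : ∑ j ∈ Finset.range k,
      Multiset.filter p {(x j, x (j + 1)), (y j, y (j + 1)), (z (j + 1), z j)}
      = {(z (i + 1), z i)} := by
    have hpt : ∀ j ∈ Finset.range k,
        Multiset.filter p {(x j, x (j + 1)), (y j, y (j + 1)), (z (j + 1), z j)}
        = if j = i then ({(z (j + 1), z j)} : Multiset (V × V)) else 0 := by
      intro j hj
      rw [Finset.mem_range] at hj
      split_ifs with hji
      · subst hji
        apply filter_triple
        · rintro ⟨hh, -⟩; exact hh ((hx (j + 1) (by omega)).2 (by omega))
        · rintro ⟨hh, -⟩; exact hh ((hy (j + 1) (by omega)).2 (by omega))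
        · exact ⟨fun hc => by rw [hz j (by omega)] at hc; omega,
            (hz (j + 1) (by omega)).2 (by omega)⟩
      · apply filter_triple_zero
        · rintro ⟨hh, ht⟩
          rw [hx j (by omega)] at ht
          exact hh ((hx (j + 1) (by omega)).2 (by omega))
        · rintro ⟨hh, ht⟩
          rw [hy j (by omega)] at ht
          exact hh ((hy (j + 1) (by omega)).2 (by omega))
        · rintro ⟨hh, ht⟩
          rw [hz (j + 1) (by omega)] at ht
          rw [hz j (by omega)] at hh
          omega
    rw [Finset.sum_congr rfl hpt, Finset.sum_ite_eq', if_pos (Finset.mem_range.2 hik)]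
  have h3 : Multiset.filter p {(x k, u), (y k, u), (u, z k), (u, w)} = {(u, w)} := by
    apply filter_quad
    · rintro ⟨hh, -⟩; exact hh hu
    · rintro ⟨hh, -⟩; exact hh hu
    · rintro ⟨hh, -⟩; exact hh ((hz k le_rfl).2 (by omega))
    · exact ⟨hw, hu⟩
  rw [h1, h2, h3, zero_add, Multiset.singleton_add]
  rfl

lemma rocket_filter_in {V : Type*} (k i : ℕ) (hik : i < k) (x y z : ℕ → V) (u w : V)
    (Z : Finset V)
    (hx : ∀ j, j ≤ k → (x j ∈ Z ↔ i + 1 ≤ j))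
    (hy : ∀ j, j ≤ k → (y j ∈ Z ↔ i + 1 ≤ j))
    (hz : ∀ j, j ≤ k → (z j ∈ Z ↔ i + 1 ≤ j))
    (hu : u ∈ Z) (hw : w ∉ Z) :
    (rocketArcs k x y z u w).filter (fun a => a.1 ∉ Z ∧ a.2 ∈ Z)
      = {(x i, x (i + 1)), (y i, y (i + 1))} := by
  set p : V × V → Prop := fun a => a.1 ∉ Z ∧ a.2 ∈ Z with hp
  unfold rocketArcs
  rw [Multiset.filter_add, Multiset.filter_add, filterBind, filterBind,
    bindEqSum, bindEqSum]
  have h1 : ∑ j ∈ Finset.Icc 1 k, Multiset.filter p {(x j, y j), (y j, z j), (z j, x j)} = 0 := by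
    apply Finset.sum_eq_zero
    intro j hj
    rw [Finset.mem_Icc] at hj
    apply filter_triple_zero <;>
      · rintro ⟨ht, hh⟩
        simp only [hp] at hh ht
        first
          | (rw [hx j hj.2] at *; rw [hy j hj.2] at *; omega)
          | (rw [hy j hj.2] at *; rw [hz j hj.2] at *; omega)
          | (rw [hz j hj.2] at *; rw [hx j hj.2] at *; omega)
  have h2 : ∑ j ∈ Finset.range k,
      Multiset.filter p {(x j, x (j + 1)), (y j, y (j + 1)), (z (j + 1), z j)}
      = {(x i, x (i + 1)), (y i, y (i + 1))} := by
    have hpt : ∀ j ∈ Finset.range k,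
        Multiset.filter p {(x j, x (j + 1)), (y j, y (j + 1)), (z (j + 1), z j)}
        = if j = i then ({(x j, x (j + 1)), (y j, y (j + 1))} : Multiset (V × V)) else 0 := by
      intro j hj
      rw [Finset.mem_range] at hj
      split_ifs with hji
      · subst hji
        apply filter_triple2
        · exact ⟨fun hc => by rw [hx j (by omega)] at hc; omega,
            (hx (j + 1) (by omega)).2 (by omega)⟩
        · exact ⟨fun hc => by rw [hy j (by omega)] at hc; omega,
            (hy (j + 1) (by omega)).2 (by omega)⟩
        · rintro ⟨ht, -⟩; exact ht ((hz (j + 1) (by omega)).2 (by omega))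
      · apply filter_triple_zero
        · rintro ⟨ht, hh⟩
          rw [hx j (by omega)] at ht
          rw [hx (j + 1) (by omega)] at hh
          omega
        · rintro ⟨ht, hh⟩
          rw [hy j (by omega)] at ht
          rw [hy (j + 1) (by omega)] at hh
          omega
        · rintro ⟨ht, hh⟩
          rw [hz j (by omega)] at hh
          exact ht ((hz (j + 1) (by omega)).2 (by omega))
    rw [Finset.sum_congr rfl hpt, Finset.sum_ite_eq', if_pos (Finset.mem_range.2 hik)]
  have h3 : Multiset.filter p {(x k, u), (y k, u), (u, z k), (u, w)} = 0 := by
    apply filter_quad_zero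
    · rintro ⟨ht, -⟩; exact ht ((hx k le_rfl).2 (by omega))
    · rintro ⟨ht, -⟩; exact ht ((hy k le_rfl).2 (by omega))
    · rintro ⟨ht, -⟩; exact ht hu
    · rintro ⟨-, hh⟩; exact hw hh
  rw [h1, h2, h3, zero_add, add_zero]

/-- If `D₁` contains an out-rocket `R` (all in/out-degrees of interior vertices of `R`
in `D₁` equal those in `R`), and a 2-strong digraph `D₂` is obtained from `D₁` by
reversing the arcs of a set `F` containing the tip arc of `R`, then at least `k + 1`
arcs are reversed, i.e. `|F| ≥ k + 1`. -/
theorem stmt_19 {V : Type*} [Fintype V] (k : ℕ) (x y z : ℕ → V) (u w : V)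
    (hdistinct :
      (((List.range (k + 1)).flatMap fun i => [x i, y i, z i]) ++ [u, w]).Nodup)
    (D₁ D₂ F : Multiset (V × V))
    (hsub : rocketArcs k x y z u w ≤ D₁)
    (hdeg : ∀ v ∈ rocketInterior k x y z u,
      outDeg D₁ v = outDeg (rocketArcs k x y z u w) v ∧
      inDeg D₁ v = inDeg (rocketArcs k x y z u w) v)
    (hF : F ≤ D₁) (hD₂ : D₂ = (D₁ - F) + F.map Prod.swap)
    (h2strong : KStrongD 2 D₂)
    (htip : (u, w) ∈ F) :
    k + 1 ≤ Multiset.card F := by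
  classical
  -- ### Distinctness facts
  rw [List.nodup_append] at hdistinct
  obtain ⟨hL, hUW, hdisjUW⟩ := hdistinct
  have huw : u ≠ w := by simpa using hUW
  rw [List.nodup_flatMap] at hL
  obtain ⟨hL1, hL2⟩ := hL
  have hL1' : ∀ i, i ≤ k → (x i ≠ y i ∧ x i ≠ z i ∧ y i ≠ z i) := by
    intro i hi
    have := hL1 i (List.mem_range.2 (by omega))
    simp [List.nodup_cons] at this
    tauto
  have hdisj' : ∀ i j, i ≤ k → j ≤ k → i ≠ j →
      ∀ a ∈ [x i, y i, z i], a ∉ [x j, y j, z j] := by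
    intro i j hi hj hij a ha
    have hsym : Symmetric (Function.onFun List.Disjoint fun i => [x i, y i, z i]) :=
      fun a b h => List.disjoint_comm.1 h
    haveI : Std.Symm (Function.onFun List.Disjoint fun i => [x i, y i, z i]) := ⟨fun a b h => hsym h⟩
    exact hL2.forall (List.mem_range.2 (by omega)) (List.mem_range.2 (by omega)) hij ha
  have hmemL : ∀ i, i ≤ k → ∀ a ∈ [x i, y i, z i],
      a ∈ (List.range (k + 1)).flatMap fun i => [x i, y i, z i] := by
    intro i hi a ha
    exact List.mem_flatMap.2 ⟨i, List.mem_range.2 (by omega), ha⟩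
  have hnotuw : ∀ i, i ≤ k → ∀ a ∈ [x i, y i, z i], a ≠ u ∧ a ≠ w := by
    intro i hi a ha
    have := hdisjUW a (hmemL i hi a ha)
    simp at this
    exact this
  have hxu : ∀ i, i ≤ k → x i ≠ u := fun i hi => (hnotuw i hi _ (by simp)).1
  have hyu : ∀ i, i ≤ k → y i ≠ u := fun i hi => (hnotuw i hi _ (by simp)).1
  have hzu : ∀ i, i ≤ k → z i ≠ u := fun i hi => (hnotuw i hi _ (by simp)).1
  have hxw : ∀ i, i ≤ k → x i ≠ w := fun i hi => (hnotuw i hi _ (by simp)).2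
  have hyw : ∀ i, i ≤ k → y i ≠ w := fun i hi => (hnotuw i hi _ (by simp)).2
  have hzw : ∀ i, i ≤ k → z i ≠ w := fun i hi => (hnotuw i hi _ (by simp)).2
  have hxx : ∀ i j, i ≤ k → j ≤ k → x i = x j → i = j := by
    intro i j hi hj he
    by_contra hij
    exact hdisj' i j hi hj hij (x i) (by simp) (by simp [he])
  have hyy : ∀ i j, i ≤ k → j ≤ k → y i = y j → i = j := by
    intro i j hi hj he
    by_contra hij
    exact hdisj' i j hi hj hij (y i) (by simp) (by simp [he])
  have hzz : ∀ i j, i ≤ k → j ≤ k → z i = z j → i = j := by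
    intro i j hi hj he
    by_contra hij
    exact hdisj' i j hi hj hij (z i) (by simp) (by simp [he])
  have hxy : ∀ i j, i ≤ k → j ≤ k → x i ≠ y j := by
    intro i j hi hj he
    by_cases hij : i = j
    · subst hij; exact (hL1' i hi).1 he
    · exact hdisj' i j hi hj hij (x i) (by simp) (by simp [he])
  have hxz : ∀ i j, i ≤ k → j ≤ k → x i ≠ z j := by
    intro i j hi hj he
    by_cases hij : i = j
    · subst hij; exact (hL1' i hi).2.1 he
    · exact hdisj' i j hi hj hij (x i) (by simp) (by simp [he])
  have hyz : ∀ i j, i ≤ k → j ≤ k → y i ≠ z j := by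
    intro i j hi hj he
    by_cases hij : i = j
    · subst hij; exact (hL1' i hi).2.2 he
    · exact hdisj' i j hi hj hij (y i) (by simp) (by simp [he])
  -- ### The key step
  have hstep : ∀ i, i < k → ((x i, x (i + 1)) ∈ F ∨ (y i, y (i + 1)) ∈ F) := by
    intro i hik
    set Zi : Finset V := insert u
      (((Finset.Icc (i + 1) k).image x ∪ (Finset.Icc (i + 1) k).image y)
        ∪ (Finset.Icc (i + 1) k).image z) with hZi
    have hxZ : ∀ j, j ≤ k → (x j ∈ Zi ↔ i + 1 ≤ j) := by
      intro j hj
      simp only [hZi, Finset.mem_insert, Finset.mem_union, Finset.mem_image,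
        Finset.mem_Icc]
      constructor
      · rintro (he | (⟨a, ⟨ha1, ha2⟩, he⟩ | ⟨a, ⟨ha1, ha2⟩, he⟩) | ⟨a, ⟨ha1, ha2⟩, he⟩)
        · exact absurd he (hxu j hj)
        · rw [hxx a j ha2 hj he] at ha1; exact ha1
        · exact absurd he.symm (hxy j a hj ha2)
        · exact absurd he.symm (hxz j a hj ha2)
      · intro h
        exact Or.inr (Or.inl (Or.inl ⟨j, ⟨h, hj⟩, rfl⟩))
    have hyZ : ∀ j, j ≤ k → (y j ∈ Zi ↔ i + 1 ≤ j) := by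
      intro j hj
      simp only [hZi, Finset.mem_insert, Finset.mem_union, Finset.mem_image,
        Finset.mem_Icc]
      constructor
      · rintro (he | (⟨a, ⟨ha1, ha2⟩, he⟩ | ⟨a, ⟨ha1, ha2⟩, he⟩) | ⟨a, ⟨ha1, ha2⟩, he⟩)
        · exact absurd he (hyu j hj)
        · exact absurd he (hxy a j ha2 hj)
        · rw [hyy a j ha2 hj he] at ha1; exact ha1
        · exact absurd he.symm (hyz j a hj ha2)
      · intro h
        exact Or.inr (Or.inl (Or.inr ⟨j, ⟨h, hj⟩, rfl⟩))
    have hzZ : ∀ j, j ≤ k → (z j ∈ Zi ↔ i + 1 ≤ j) := by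
      intro j hj
      simp only [hZi, Finset.mem_insert, Finset.mem_union, Finset.mem_image,
        Finset.mem_Icc]
      constructor
      · rintro (he | (⟨a, ⟨ha1, ha2⟩, he⟩ | ⟨a, ⟨ha1, ha2⟩, he⟩) | ⟨a, ⟨ha1, ha2⟩, he⟩)
        · exact absurd he (hzu j hj)
        · exact absurd he (hxz a j ha2 hj)
        · exact absurd he (hyz a j ha2 hj)
        · rw [hzz a j ha2 hj he] at ha1; exact ha1
      · intro h
        exact Or.inr (Or.inr ⟨j, ⟨h, hj⟩, rfl⟩)
    have huZ : u ∈ Zi := Finset.mem_insert_self _ _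
    have hwZ : w ∉ Zi := by
      simp only [hZi, Finset.mem_insert, Finset.mem_union, Finset.mem_image,
        Finset.mem_Icc]
      rintro (he | (⟨a, ⟨ha1, ha2⟩, he⟩ | ⟨a, ⟨ha1, ha2⟩, he⟩) | ⟨a, ⟨ha1, ha2⟩, he⟩)
      · exact huw he.symm
      · exact hxw a ha2 he
      · exact hyw a ha2 he
      · exact hzw a ha2 he
    have hdegZ : ∀ v ∈ Zi, outDeg D₁ v = outDeg (rocketArcs k x y z u w) v ∧
        inDeg D₁ v = inDeg (rocketArcs k x y z u w) v := by
      intro v hv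
      apply hdeg
      unfold rocketInterior
      rw [List.mem_cons]
      simp only [hZi, Finset.mem_insert, Finset.mem_union, Finset.mem_image,
        Finset.mem_Icc] at hv
      rcases hv with he | (⟨a, ⟨ha1, ha2⟩, he⟩ | ⟨a, ⟨ha1, ha2⟩, he⟩) | ⟨a, ⟨ha1, ha2⟩, he⟩ <;>
        [exact Or.inl he;
         (right; exact List.mem_flatMap.2 ⟨a - 1, List.mem_range.2 (by omega),
            by rw [show a - 1 + 1 = a by omega]; simp [he]⟩);
         (right; exact List.mem_flatMap.2 ⟨a - 1, List.mem_range.2 (by omega),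
            by rw [show a - 1 + 1 = a by omega]; simp [he]⟩);
         (right; exact List.mem_flatMap.2 ⟨a - 1, List.mem_range.2 (by omega),
            by rw [show a - 1 + 1 = a by omega]; simp [he]⟩)]
    -- D₁ cut arcs
    have hDout : D₁.filter (fun a => a.2 ∉ Zi ∧ a.1 ∈ Zi)
        = {(z (i + 1), z i), (u, w)} := by
      have base := filter_fst_mem_eq (rocketArcs k x y z u w) D₁ Zi hsub
        (fun v hv => (hdegZ v hv).1)
      have e1 := Multiset.filter_filter (fun a : V × V => a.2 ∉ Zi)
        (fun a => a.1 ∈ Zi) D₁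
      have e2 := Multiset.filter_filter (fun a : V × V => a.2 ∉ Zi)
        (fun a => a.1 ∈ Zi) (rocketArcs k x y z u w)
      have := e1.symm.trans ((congrArg _ base).trans e2)
      exact this.trans (rocket_filter_out k i hik x y z u w Zi hxZ hyZ hzZ huZ hwZ)
    have hDin : D₁.filter (fun a => a.1 ∉ Zi ∧ a.2 ∈ Zi)
        = {(x i, x (i + 1)), (y i, y (i + 1))} := by
      have base := filter_snd_mem_eq (rocketArcs k x y z u w) D₁ Zi hsub
        (fun v hv => (hdegZ v hv).2)
      have e1 := Multiset.filter_filter (fun a : V × V => a.1 ∉ Zi)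
        (fun a => a.2 ∈ Zi) D₁
      have e2 := Multiset.filter_filter (fun a : V × V => a.1 ∉ Zi)
        (fun a => a.2 ∈ Zi) (rocketArcs k x y z u w)
      have := e1.symm.trans ((congrArg _ base).trans e2)
      exact this.trans (rocket_filter_in k i hik x y z u w Zi hxZ hyZ hzZ huZ hwZ)
    -- F has at least one outgoing cut arc (the tip)
    have hFle : F.filter (fun a => a.2 ∉ Zi ∧ a.1 ∈ Zi)
        ≤ D₁.filter (fun a => a.2 ∉ Zi ∧ a.1 ∈ Zi) := Multiset.filter_le_filter _ hF
    have hcFout : 1 ≤ Multiset.card (F.filter (fun a => a.2 ∉ Zi ∧ a.1 ∈ Zi)) := by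
      refine Multiset.card_pos_iff_exists_mem.2 ⟨(u, w), Multiset.mem_filter.2 ⟨htip, hwZ, huZ⟩⟩
    -- D₂ cut decomposition
    have hsplit : Multiset.card (D₂.filter (fun a => a.2 ∉ Zi ∧ a.1 ∈ Zi))
        = Multiset.card ((D₁ - F).filter (fun a => a.2 ∉ Zi ∧ a.1 ∈ Zi))
          + Multiset.card (F.filter (fun a => a.1 ∉ Zi ∧ a.2 ∈ Zi)) := by
      rw [hD₂, Multiset.filter_add, Multiset.card_add, Multiset.filter_map,
        Multiset.card_map]
      congr 1
    have hcard1 : Multiset.card ((D₁ - F).filter (fun a => a.2 ∉ Zi ∧ a.1 ∈ Zi)) ≤ 1 := by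
      rw [Multiset.filter_sub, Multiset.card_sub hFle, hDout]
      have h2 : Multiset.card ({(z (i + 1), z i), (u, w)} : Multiset (V × V)) = 2 := rfl
      omega
    -- 2-strongness: at least two arcs leave Zi in D₂
    have hc2 : 2 ≤ Multiset.card (D₂.filter (fun a => a.2 ∉ Zi ∧ a.1 ∈ Zi)) := by
      by_contra hlt
      push_neg at hlt
      obtain hcc | hcc : Multiset.card (D₂.filter (fun a => a.2 ∉ Zi ∧ a.1 ∈ Zi)) = 0 ∨
          Multiset.card (D₂.filter (fun a => a.2 ∉ Zi ∧ a.1 ∈ Zi)) = 1 := by omega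
      · -- no arc leaves Zi : contradicts strong connectivity (S = ∅)
        have h0 : D₂.filter (fun a => a.2 ∉ Zi ∧ a.1 ∈ Zi) = 0 :=
          Multiset.card_eq_zero.1 hcc
        have hne : Zi ≠ (∅ : Finset V)ᶜ := by
          intro h
          exact hwZ (by rw [h]; simp)
        have h1s := h2strong.2 ∅ (by simp) Zi ⟨u, huZ⟩ (by simp) hne
        have heq : D₂.filter (fun a => a.1 ∉ (∅ : Finset V) ∧ a.2 ∉ (∅ : Finset V)) = D₂ :=
          Multiset.filter_eq_self.2 (by simp)
        rw [arcsOut, heq] at h1s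
        have : D₂.filter (fun a => a.1 ∈ Zi ∧ a.2 ∉ Zi) = 0 := by
          rw [Multiset.filter_congr (q := fun a : V × V => a.2 ∉ Zi ∧ a.1 ∈ Zi)
            (fun a _ => and_comm), h0]
        rw [this] at h1s
        simp at h1s
      · -- exactly one arc leaves Zi : delete its head
        obtain ⟨a, ha⟩ := Multiset.card_eq_one.1 hcc
        have hamem : a ∈ D₂.filter (fun a => a.2 ∉ Zi ∧ a.1 ∈ Zi) := by rw [ha]; simp
        have haP := (Multiset.mem_filter.1 hamem).2
        have hne : Zi ≠ ({a.2} : Finset V)ᶜ := by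
          intro h
          have hxi : x i ∉ Zi := by rw [hxZ i (by omega)]; omega
          have hyi : y i ∉ Zi := by rw [hyZ i (by omega)]; omega
          rw [h] at hxi hyi
          simp only [Finset.mem_compl, Finset.mem_singleton, not_not] at hxi hyi
          exact hxy i i (by omega) (by omega) (hxi.trans hyi.symm)
        have hss : Zi ⊆ ({a.2} : Finset V)ᶜ := by
          intro v hv
          simp only [Finset.mem_compl, Finset.mem_singleton]
          rintro rfl
          exact haP.1 hv
        have h1s := h2strong.2 {a.2} (by simp) Zi ⟨u, huZ⟩ hss hne
        rw [arcsOut] at h1s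
        obtain ⟨b, hb⟩ := Multiset.exists_mem_of_ne_zero
          (Multiset.card_pos.1 (lt_of_lt_of_le zero_lt_one h1s))
        rw [Multiset.mem_filter, Multiset.mem_filter] at hb
        obtain ⟨⟨hbD, hbS⟩, hbZ⟩ := hb
        have : b ∈ D₂.filter (fun a => a.2 ∉ Zi ∧ a.1 ∈ Zi) :=
          Multiset.mem_filter.2 ⟨hbD, hbZ.2, hbZ.1⟩
        rw [ha, Multiset.mem_singleton] at this
        subst this
        simp at hbS
    -- hence F contains an arc entering Zi
    have hcFin : 1 ≤ Multiset.card (F.filter (fun a => a.1 ∉ Zi ∧ a.2 ∈ Zi)) := by omega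
    obtain ⟨b, hb⟩ := Multiset.exists_mem_of_ne_zero
      (Multiset.card_pos.1 (lt_of_lt_of_le zero_lt_one hcFin))
    have hbD : b ∈ D₁.filter (fun a => a.1 ∉ Zi ∧ a.2 ∈ Zi) :=
      Multiset.mem_of_le (Multiset.filter_le_filter _ hF) hb
    rw [hDin] at hbD
    have hbF : b ∈ F := (Multiset.mem_filter.1 hb).1
    rcases Multiset.mem_cons.1 hbD with h | h
    · exact Or.inl (h ▸ hbF)
    · rw [Multiset.mem_singleton] at h
      exact Or.inr (h ▸ hbF)
  -- ### Assemble k+1 distinct arcs of F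
  let f : ℕ → V × V := fun i => if (x i, x (i + 1)) ∈ F then (x i, x (i + 1)) else (y i, y (i + 1))
  have hfF : ∀ i, i < k → f i ∈ F := by
    intro i hi
    show (if (x i, x (i + 1)) ∈ F then (x i, x (i + 1)) else (y i, y (i + 1))) ∈ F
    split_ifs with h
    · exact h
    · exact (hstep i hi).resolve_left h
  have hf1 : ∀ i, (f i).1 = x i ∨ (f i).1 = y i := by
    intro i
    by_cases h : (x i, x (i + 1)) ∈ F
    · left
      show (if (x i, x (i + 1)) ∈ F then (x i, x (i + 1)) else (y i, y (i + 1))).1 = x i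
      rw [if_pos h]
    · right
      show (if (x i, x (i + 1)) ∈ F then (x i, x (i + 1)) else (y i, y (i + 1))).1 = y i
      rw [if_neg h]
  have hinj : Set.InjOn f (Finset.range k) := by
    intro a ha b hb he
    rw [Finset.coe_range, Set.mem_Iio] at ha hb
    have h1 := hf1 a
    have h2 := hf1 b
    rw [he] at h1
    rcases h1 with h1 | h1 <;> rcases h2 with h2 | h2 <;> rw [h1] at h2
    · exact hxx b a (by omega) (by omega) h2.symm |>.symm
    · exact absurd h2 (hxy a b (by omega) (by omega))
    · exact absurd h2.symm (hxy b a (by omega) (by omega))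
    · exact hyy b a (by omega) (by omega) h2.symm |>.symm
  have hnotmem : (u, w) ∉ (Finset.range k).image f := by
    rw [Finset.mem_image]
    rintro ⟨a, ha, he⟩
    rw [Finset.mem_range] at ha
    have := hf1 a
    rw [he] at this
    rcases this with h | h
    · exact hxu a (by omega) h.symm
    · exact hyu a (by omega) h.symm
  have hsubF : insert (u, w) ((Finset.range k).image f) ⊆ F.toFinset := by
    intro a ha
    rw [Finset.mem_insert] at ha
    rcases ha with rfl | ha
    · exact Multiset.mem_toFinset.2 htip
    · rw [Finset.mem_image] at ha
      obtain ⟨b, hb, rfl⟩ := ha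
      exact Multiset.mem_toFinset.2 (hfF b (Finset.mem_range.1 hb))
  have hcardT : (insert (u, w) ((Finset.range k).image f)).card = k + 1 := by
    rw [Finset.card_insert_of_notMem hnotmem, Finset.card_image_of_injOn hinj,
      Finset.card_range]
  calc k + 1 = (insert (u, w) ((Finset.range k).image f)).card := hcardT.symm
    _ ≤ F.toFinset.card := Finset.card_le_card hsubF
    _ ≤ Multiset.card F := Multiset.toFinset_card_le F
end
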